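/- arXiv:1403.3837 — 11 statements merged into one kernel-verified Lean document; each statement's English description precedes it below -/
import Mathlib

section
/- Let G be a graph with no family of k+1 vertex-disjoint triangles, T a family of k vertex-disjoint triangles in G, and M a matching in G − V(T). Then every vertex covered by M has at most |M| neighbours among V(M); consequently the number of edges inside V(M) is at most |M|². -/
open scoped Classical

/-- If `G` has no `k+1` vertex-disjoint triangles, `𝒯` is a family of `k`
vertex-disjoint triangles and `M` a matching in `G − V(𝒯)`, then every vertex covered
by `M` has at most `|M|` neighbours in `V(M)`, hence `e(V(M)) ≤ |M|²`. -/
theorem stmt5 {V : Type*} [Fintype V] (G : SimpleGraph V) (k : ℕ)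
    (𝒯 : Finset (Finset V)) (M : Finset (Sym2 V))
    (hfree : ¬ ∃ 𝒯' : Finset (Finset V), 𝒯'.card = k + 1 ∧ (∀ t ∈ 𝒯', G.IsNClique 3 t) ∧
        (𝒯' : Set (Finset V)).Pairwise (fun s t => Disjoint s t))
    (h𝒯tri : ∀ t ∈ 𝒯, G.IsNClique 3 t)
    (h𝒯disj : (𝒯 : Set (Finset V)).Pairwise (fun s t => Disjoint s t))
    (h𝒯card : 𝒯.card = k)
    (hM : M ⊆ G.edgeFinset)
    (hMdisj : (M : Set (Sym2 V)).Pairwise (fun e f => ∀ v : V, v ∈ e → v ∉ f))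
    (hMT : ∀ e ∈ M, ∀ v : V, v ∈ e → ∀ t ∈ 𝒯, v ∉ t) :
    (∀ u : V, (∃ e ∈ M, u ∈ e) →
      (Finset.univ.filter (fun w : V => (∃ e ∈ M, w ∈ e) ∧ G.Adj u w)).card ≤ M.card) ∧
    (G.edgeFinset.filter (fun ed => ∀ v : V, v ∈ ed → ∃ e ∈ M, v ∈ e)).card ≤
      M.card * M.card := by
  -- key degree bound
  have key : ∀ u : V, (∃ e ∈ M, u ∈ e) →
      (Finset.univ.filter (fun w : V => (∃ e ∈ M, w ∈ e) ∧ G.Adj u w)).card ≤ M.card := by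
    intro u hu
    by_contra hlt
    push_neg at hlt
    set N := Finset.univ.filter (fun w : V => (∃ e ∈ M, w ∈ e) ∧ G.Adj u w) with hN
    have hmaps : ∀ w ∈ N, (fun w : V =>
        if h : ∃ e ∈ M, w ∈ e then h.choose else s(w, w)) w ∈ M := by
      intro w hw
      simp only [hN, Finset.mem_filter] at hw
      dsimp only
      rw [dif_pos hw.2.1]
      exact hw.2.1.choose_spec.1
    obtain ⟨w₁, hw₁, w₂, hw₂, hne, heq⟩ :=
      Finset.exists_ne_map_eq_of_card_lt_of_maps_to hlt hmaps
    simp only [hN, Finset.mem_filter] at hw₁ hw₂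
    set e := (if h : ∃ e ∈ M, w₁ ∈ e then h.choose else s(w₁, w₁)) with he
    have heM : e ∈ M := by rw [he, dif_pos hw₁.2.1]; exact hw₁.2.1.choose_spec.1
    have hw₁e : w₁ ∈ e := by rw [he, dif_pos hw₁.2.1]; exact hw₁.2.1.choose_spec.2
    have hw₂e : w₂ ∈ e := by
      rw [heq, dif_pos hw₂.2.1]; exact hw₂.2.1.choose_spec.2
    have heqs : e = s(w₁, w₂) := (Sym2.mem_and_mem_iff hne).mp ⟨hw₁e, hw₂e⟩
    have hadj12 : G.Adj w₁ w₂ := by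
      have := hM heM
      rw [heqs] at this
      simpa [SimpleGraph.mem_edgeFinset] using this
    have hadj1 : G.Adj u w₁ := hw₁.2.2
    have hadj2 : G.Adj u w₂ := hw₂.2.2
    -- the new triangle
    set t0 : Finset V := {u, w₁, w₂} with ht0
    have ht0clique : G.IsNClique 3 t0 := by
      rw [ht0, SimpleGraph.is3Clique_triple_iff]
      exact ⟨hadj1, hadj2, hadj12⟩
    have ht0mem : ∀ v ∈ t0, ∃ f ∈ M, v ∈ f := by
      intro v hv
      rw [ht0] at hv
      simp only [Finset.mem_insert, Finset.mem_singleton] at hv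
      rcases hv with rfl | rfl | rfl
      · exact hu
      · exact ⟨e, heM, hw₁e⟩
      · exact ⟨e, heM, hw₂e⟩
    have ht0disj : ∀ t ∈ 𝒯, Disjoint t0 t := by
      intro t ht
      rw [Finset.disjoint_left]
      intro v hv
      obtain ⟨f, hfM, hvf⟩ := ht0mem v hv
      exact hMT f hfM v hvf t ht
    have ht0not : t0 ∉ 𝒯 := by
      intro h
      have := ht0disj t0 h
      have hu0 : u ∈ t0 := by rw [ht0]; simp
      exact Finset.disjoint_left.mp this hu0 hu0
    apply hfree
    refine ⟨insert t0 𝒯, ?_, ?_, ?_⟩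
    · rw [Finset.card_insert_of_notMem ht0not, h𝒯card]
    · intro t ht
      rcases Finset.mem_insert.mp ht with rfl | ht
      · exact ht0clique
      · exact h𝒯tri t ht
    · rw [Finset.coe_insert]
      haveI : Std.Symm (fun s t : Finset V => Disjoint s t) := ⟨fun s t h => h.symm⟩
      exact (Set.pairwise_insert_of_symm_of_notMem
        (r := fun s t : Finset V => Disjoint s t) (by exact_mod_cast ht0not)).mpr
        ⟨h𝒯disj, fun t ht => ht0disj t ht⟩
  refine ⟨key, ?_⟩
  -- the induced graph on V(M)
  set G' : SimpleGraph V :=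
    { Adj := fun a b => G.Adj a b ∧ (∃ e ∈ M, a ∈ e) ∧ (∃ e ∈ M, b ∈ e)
      symm := by constructor; intro a b h; exact ⟨h.1.symm, h.2.2, h.2.1⟩
      loopless := by constructor; intro a h; exact G.loopless.irrefl a h.1 } with hG'
  have hG'adj : ∀ a b, G'.Adj a b ↔ G.Adj a b ∧ (∃ e ∈ M, a ∈ e) ∧ (∃ e ∈ M, b ∈ e) := by
    intro a b; rw [hG']
  have hedge : G.edgeFinset.filter (fun ed => ∀ v : V, v ∈ ed → ∃ e ∈ M, v ∈ e)
      = G'.edgeFinset := by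
    ext ed
    induction ed using Sym2.ind with
    | _ a b =>
      simp only [Finset.mem_filter, SimpleGraph.mem_edgeFinset, SimpleGraph.mem_edgeSet,
        Sym2.mem_iff, hG'adj]
      constructor
      · rintro ⟨hab, h⟩
        exact ⟨hab, h a (Or.inl rfl), h b (Or.inr rfl)⟩
      · rintro ⟨hab, ha, hb⟩
        refine ⟨hab, ?_⟩
        rintro v (rfl | rfl) <;> assumption
  rw [hedge]
  -- degree bound for G'
  have hdeg : ∀ u : V, G'.degree u ≤ if (∃ e ∈ M, u ∈ e) then M.card else 0 := by
    intro u
    by_cases hu : ∃ e ∈ M, u ∈ e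
    · rw [if_pos hu]
      have : G'.neighborFinset u ⊆
          Finset.univ.filter (fun w : V => (∃ e ∈ M, w ∈ e) ∧ G.Adj u w) := by
        intro w hw
        rw [SimpleGraph.mem_neighborFinset, hG'adj] at hw
        simp only [Finset.mem_filter, Finset.mem_univ, true_and]
        exact ⟨hw.2.2, hw.1⟩
      calc G'.degree u = (G'.neighborFinset u).card := rfl
        _ ≤ _ := Finset.card_le_card this
        _ ≤ M.card := key u hu
    · rw [if_neg hu]
      have hnb : G'.neighborFinset u = ∅ := by
        ext w
        simp only [SimpleGraph.mem_neighborFinset, hG'adj, Finset.notMem_empty, iff_false]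
        intro h
        exact hu h.2.1
      simp [SimpleGraph.degree, hnb]
  have hsum := G'.sum_degrees_eq_twice_card_edges
  have hVM : (Finset.univ.filter (fun w : V => ∃ e ∈ M, w ∈ e)).card ≤ 2 * M.card := by
    have hsub : Finset.univ.filter (fun w : V => ∃ e ∈ M, w ∈ e) ⊆
        M.biUnion (fun e => Finset.univ.filter (fun v : V => v ∈ e)) := by
      intro w hw
      simp only [Finset.mem_filter, Finset.mem_univ, true_and] at hw
      obtain ⟨e, heM, hwe⟩ := hw
      exact Finset.mem_biUnion.mpr ⟨e, heM, by simp [hwe]⟩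
    calc _ ≤ (M.biUnion (fun e => Finset.univ.filter (fun v : V => v ∈ e))).card :=
          Finset.card_le_card hsub
      _ ≤ ∑ e ∈ M, (Finset.univ.filter (fun v : V => v ∈ e)).card :=
          Finset.card_biUnion_le
      _ ≤ ∑ _e ∈ M, 2 := by
          apply Finset.sum_le_sum
          intro e _
          induction e using Sym2.ind with
          | _ a b =>
            have : Finset.univ.filter (fun v : V => v ∈ s(a, b)) ⊆ {a, b} := by
              intro v hv
              simp only [Finset.mem_filter, Sym2.mem_iff] at hv
              simpa using hv.2
            calc _ ≤ ({a, b} : Finset V).card := Finset.card_le_card this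
              _ ≤ 2 := Finset.card_insert_le _ _ |>.trans (by simp)
      _ = 2 * M.card := by rw [Finset.sum_const, smul_eq_mul, mul_comm]
  have hbound : ∑ v : V, G'.degree v ≤ 2 * (M.card * M.card) := by
    calc ∑ v : V, G'.degree v
        ≤ ∑ v : V, (if (∃ e ∈ M, v ∈ e) then M.card else 0) := Finset.sum_le_sum (fun v _ => hdeg v)
      _ = ∑ v ∈ Finset.univ.filter (fun w : V => ∃ e ∈ M, w ∈ e), M.card := by
          rw [Finset.sum_filter]
      _ = (Finset.univ.filter (fun w : V => ∃ e ∈ M, w ∈ e)).card * M.card := by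
          rw [Finset.sum_const, smul_eq_mul]
      _ ≤ (2 * M.card) * M.card := Nat.mul_le_mul_right _ hVM
      _ = 2 * (M.card * M.card) := by ring
  omega
end

section
/- Let D be a set of t triangles, viewed as an edge-weighted complete graph H on D, where each triangle sends more than 8(t−1) edges to the other triangles of D. For triangles T, T' of D, say that a triangle T'' of D connects T to T' if T'' sends at least 8 edges to both T and T', or 9 edges to T and at least 7 edges to T'. Then for any distinct T, T' in D there are at least (t−2)/12 triangles T'' in D connecting T to T'. -/
open scoped Classical

/-- Abstract version of Lemma 9 (ConnWidg): if every element of `D` sends more than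
`8(t−1)` edge-weight to the others, then any two distinct elements of `D` are connected
via at least `(t−2)/12` elements of `D`. -/
theorem stmt6 {α : Type*} [DecidableEq α] (D : Finset α) (t : ℕ) (ht : D.card = t)
    (w : α → α → ℕ) (hsymm : ∀ a b, w a b = w b a) (hle : ∀ a b, w a b ≤ 9)
    (hdeg : ∀ T ∈ D, 8 * (t - 1) < ∑ S ∈ D.erase T, w T S) :
    ∀ T ∈ D, ∀ T' ∈ D, T ≠ T' →
      t - 2 ≤ 12 * (((D.erase T).erase T').filter (fun T'' =>
        (8 ≤ w T'' T ∧ 8 ≤ w T'' T') ∨ (w T'' T = 9 ∧ 7 ≤ w T'' T'))).card := by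
  intro T hT T' hT' hne
  set p : α → Prop := fun T'' =>
    (8 ≤ w T'' T ∧ 8 ≤ w T'' T') ∨ (w T'' T = 9 ∧ 7 ≤ w T'' T') with hp
  set E : Finset α := (D.erase T).erase T' with hE
  have hT'mem : T' ∈ D.erase T := Finset.mem_erase.2 ⟨hne.symm, hT'⟩
  have hTmem : T ∈ D.erase T' := Finset.mem_erase.2 ⟨hne, hT⟩
  have ht2 : 2 ≤ t := by
    have h : ({T, T'} : Finset α) ⊆ D := by
      intro x hx
      rcases Finset.mem_insert.1 hx with h | h
      · exact h ▸ hT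
      · exact (Finset.mem_singleton.1 h) ▸ hT'
    have := Finset.card_le_card h
    rw [Finset.card_insert_of_notMem (by simpa using hne), Finset.card_singleton] at this
    omega
  have hcardE : E.card = t - 2 := by
    rw [hE, Finset.card_erase_of_mem hT'mem, Finset.card_erase_of_mem hT, ht]
    omega
  -- sum of w T S over E
  have hA : 8 * (t - 2) ≤ ∑ S ∈ E, w T S := by
    have h1 := hdeg T hT
    have h2 : ∑ S ∈ D.erase T, w T S = w T T' + ∑ S ∈ E, w T S := by
      rw [hE, ← Finset.add_sum_erase _ _ hT'mem]
    have h3 := hle T T'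
    omega
  have hB : 8 * (t - 2) ≤ ∑ S ∈ E, w T' S := by
    have h1 := hdeg T' hT'
    have h2 : ∑ S ∈ D.erase T', w T' S = w T' T + ∑ S ∈ (D.erase T').erase T, w T' S := by
      rw [← Finset.add_sum_erase _ _ hTmem]
    have h4 : (D.erase T').erase T = E := by rw [hE, Finset.erase_right_comm]
    rw [h4] at h2
    have h3 := hle T' T
    omega
  -- total weighted sum
  have htot : 40 * (t - 2) ≤ ∑ S ∈ E, (3 * w S T + 2 * w S T') := by
    have : ∑ S ∈ E, (3 * w S T + 2 * w S T')
        = 3 * ∑ S ∈ E, w T S + 2 * ∑ S ∈ E, w T' S := by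
      rw [Finset.sum_add_distrib, ← Finset.mul_sum, ← Finset.mul_sum]
      congr 1
      · congr 1; exact Finset.sum_congr rfl fun S _ => by rw [hsymm]
      · congr 1; exact Finset.sum_congr rfl fun S _ => by rw [hsymm]
    rw [this]
    omega
  -- upper bound via split
  have hsplit : ∑ S ∈ E, (3 * w S T + 2 * w S T')
      = ∑ S ∈ E.filter p, (3 * w S T + 2 * w S T')
        + ∑ S ∈ E.filter (fun S => ¬ p S), (3 * w S T + 2 * w S T') :=
    (Finset.sum_filter_add_sum_filter_not E p _).symm
  have hgood : ∑ S ∈ E.filter p, (3 * w S T + 2 * w S T') ≤ 45 * (E.filter p).card := by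
    calc ∑ S ∈ E.filter p, (3 * w S T + 2 * w S T')
        ≤ ∑ _S ∈ E.filter p, 45 := by
          refine Finset.sum_le_sum fun S _ => ?_
          have := hle S T; have := hle S T'; omega
      _ = 45 * (E.filter p).card := by rw [Finset.sum_const, smul_eq_mul, mul_comm]
  have hbad : ∑ S ∈ E.filter (fun S => ¬ p S), (3 * w S T + 2 * w S T')
      ≤ 39 * (E.filter (fun S => ¬ p S)).card := by
    calc ∑ S ∈ E.filter (fun S => ¬ p S), (3 * w S T + 2 * w S T')
        ≤ ∑ _S ∈ E.filter (fun S => ¬ p S), 39 := by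
          refine Finset.sum_le_sum fun S hS => ?_
          have hnp : ¬ p S := (Finset.mem_filter.1 hS).2
          have h1 := hle S T; have h2 := hle S T'
          rw [hp] at hnp
          push_neg at hnp
          omega
      _ = 39 * (E.filter (fun S => ¬ p S)).card := by
          rw [Finset.sum_const, smul_eq_mul, mul_comm]
  have hcards : (E.filter p).card + (E.filter (fun S => ¬ p S)).card = t - 2 := by
    rw [Finset.card_filter_add_card_filter_not, hcardE]
  show t - 2 ≤ 12 * (E.filter p).card
  omega
end

section
/- (Erdős–Gallai) For any n-vertex graph G with no k+1 pairwise disjoint edges (i.e., matching number at most k), e(G) ≤ max{ k(n−k) + C(k,2), C(2k+1,2) }. -/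
open scoped Classical

namespace EGaux

open Finset

variable {V : Type*} [Fintype V]

def Dis (e f : Sym2 V) : Prop := ∀ v : V, v ∈ e → v ∉ f

def IsM (G : SimpleGraph V) (M : Finset (Sym2 V)) : Prop :=
  M ⊆ G.edgeFinset ∧ (M : Set (Sym2 V)).Pairwise Dis

noncomputable def nu (G : SimpleGraph V) : ℕ :=
  (G.edgeFinset.powerset.filter (fun M => IsM G M)).sup Finset.card

variable {G H : SimpleGraph V} {M : Finset (Sym2 V)} {e f : Sym2 V} {u v w : V}

lemma isM_empty (G : SimpleGraph V) : IsM G (∅ : Finset (Sym2 V)) :=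
  ⟨empty_subset _, by simp [Set.Pairwise]⟩

lemma card_le_nu (h : IsM G M) : M.card ≤ nu G :=
  le_sup (by simp [mem_filter, mem_powerset, h, h.1])

lemma exists_max_matching (G : SimpleGraph V) : ∃ M, IsM G M ∧ M.card = nu G := by
  obtain ⟨M, hM, hc⟩ := Finset.exists_mem_eq_sup
    (G.edgeFinset.powerset.filter (fun M => IsM G M))
    ⟨∅, by simp [isM_empty]⟩ Finset.card
  exact ⟨M, (mem_filter.1 hM).2, hc.symm⟩

lemma IsM.mono (hHG : H.edgeFinset ⊆ G.edgeFinset) (h : IsM H M) : IsM G M :=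
  ⟨h.1.trans hHG, h.2⟩

lemma nu_mono (hHG : H.edgeFinset ⊆ G.edgeFinset) : nu H ≤ nu G := by
  apply Finset.sup_le
  intro M hM
  exact card_le_nu ((mem_filter.1 hM).2.mono hHG)

lemma edge_unique (hM : IsM G M) (he : e ∈ M) (hf : f ∈ M) (hv : v ∈ e) (hv' : v ∈ f) :
    e = f := by
  by_contra hne
  exact hM.2 he hf hne v hv hv'

lemma not_isDiag (he : e ∈ G.edgeFinset) : ¬ e.IsDiag := by
  rw [SimpleGraph.mem_edgeFinset] at he
  exact G.not_isDiag_of_mem_edgeSet he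

def Fre (M : Finset (Sym2 V)) (v : V) : Prop := ∀ e ∈ M, v ∉ e

lemma augment (hM : IsM G M) (hu : Fre M u) (hv : Fre M v) (h : G.Adj u v) :
    IsM G (insert s(u,v) M) ∧ (insert s(u,v) M).card = M.card + 1 := by
  have hnm : s(u,v) ∉ M := fun hmem => hu _ hmem (by simp)
  constructor
  · constructor
    · intro e he
      rcases mem_insert.1 he with rfl | he
      · simpa [SimpleGraph.mem_edgeFinset] using h
      · exact hM.1 he
    · intro e he f hf hne
      simp only [coe_insert, Set.mem_insert_iff, mem_coe] at he hf
      rcases he with rfl | he <;> rcases hf with rfl | hf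
      · exact absurd rfl hne
      · intro q hq hq'
        rcases Sym2.mem_iff.1 hq with rfl | rfl
        · exact hu _ hf hq'
        · exact hv _ hf hq'
      · intro q hq hq'
        rcases Sym2.mem_iff.1 hq' with rfl | rfl
        · exact hu _ he hq
        · exact hv _ he hq
      · exact hM.2 he hf hne
  · rw [card_insert_of_notMem hnm]

noncomputable def S (G : SimpleGraph V) : Finset V := univ.filter (fun v => ∃ w, G.Adj v w)

noncomputable def vset (e : Sym2 V) : Finset V :=
  Sym2.lift ⟨fun a b => {a, b}, fun _ _ => Finset.pair_comm _ _⟩ e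

lemma mem_vset {q : V} {e : Sym2 V} : q ∈ vset e ↔ q ∈ e := by
  induction e using Sym2.ind with
  | _ a b => simp [vset, Sym2.mem_iff]

lemma card_vset_le (e : Sym2 V) : (vset e).card ≤ 2 := by
  induction e using Sym2.ind with
  | _ a b => exact (Finset.card_insert_le _ _).trans (by simp)

lemma edge_in_S (he : e ∈ G.edgeFinset) (hv : v ∈ e) : v ∈ S G := by
  induction e using Sym2.ind with
  | _ a b =>
    rw [SimpleGraph.mem_edgeFinset, SimpleGraph.mem_edgeSet] at he
    rcases Sym2.mem_iff.1 hv with rfl | rfl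
    · exact mem_filter.2 ⟨mem_univ _, ⟨b, he⟩⟩
    · exact mem_filter.2 ⟨mem_univ _, ⟨a, he.symm⟩⟩

omit [Fintype V] in
lemma sym2_eq_of_mem_iff {e f : Sym2 V} (hd : ¬ e.IsDiag) (h : ∀ q, q ∈ e ↔ q ∈ f) :
    e = f := by
  induction e using Sym2.ind with
  | _ a b =>
    induction f using Sym2.ind with
    | _ c d =>
      have hab : a ≠ b := by simpa [Sym2.isDiag_iff_proj_eq] using hd
      have ha := Sym2.mem_iff.1 ((h a).1 (by simp))
      have hb := Sym2.mem_iff.1 ((h b).1 (by simp))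
      rcases ha with rfl | rfl <;> rcases hb with rfl | rfl
      · exact absurd rfl hab
      · rfl
      · exact Sym2.eq_swap
      · exact absurd rfl hab

lemma card_edgeFinset_le_choose (G : SimpleGraph V) :
    G.edgeFinset.card ≤ ((S G).card).choose 2 := by
  rw [← Finset.card_powersetCard]
  apply Finset.card_le_card_of_injOn vset
  · intro e he
    rw [Finset.mem_coe, Finset.mem_powersetCard]
    constructor
    · intro q hq
      exact edge_in_S he (mem_vset.1 hq)
    · induction e using Sym2.ind with
      | _ a b =>
        have : a ≠ b := fun h => not_isDiag he (by simp [h])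
        simp [vset, Finset.card_insert_of_notMem, this]
  · intro e he f hf hef
    apply sym2_eq_of_mem_iff (not_isDiag he)
    intro q
    rw [← mem_vset, ← mem_vset, hef]


/-! ### vertex deletion -/

def del (G : SimpleGraph V) (v : V) : SimpleGraph V where
  Adj a b := G.Adj a b ∧ a ≠ v ∧ b ≠ v
  symm := by constructor; intro a b ⟨h1, h2, h3⟩; exact ⟨h1.symm, h3, h2⟩
  loopless := by constructor; intro a ⟨h1, _, _⟩; exact G.irrefl h1

lemma del_edgeFinset (G : SimpleGraph V) (v : V) :
    (del G v).edgeFinset = G.edgeFinset.filter (fun e => v ∉ e) := by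
  ext e
  induction e using Sym2.ind with
  | _ a b =>
    simp only [SimpleGraph.mem_edgeFinset, SimpleGraph.mem_edgeSet, mem_filter, Sym2.mem_iff]
    simp only [del]
    constructor
    · rintro ⟨h1, h2, h3⟩
      exact ⟨h1, by tauto⟩
    · rintro ⟨h1, h2⟩
      refine ⟨h1, ?_, ?_⟩ <;> tauto

lemma card_del (G : SimpleGraph V) (v : V) :
    G.edgeFinset.card =
      (del G v).edgeFinset.card + (G.edgeFinset.filter (fun e => v ∈ e)).card := by
  rw [del_edgeFinset]
  have h := Finset.card_filter_add_card_filter_not (s := G.edgeFinset)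
    (p := fun e => v ∉ e)
  have h2 : G.edgeFinset.filter (fun e => ¬ v ∉ e) = G.edgeFinset.filter (fun e => v ∈ e) := by
    apply Finset.filter_congr; intro e _; simp
  rw [h2] at h
  omega

lemma card_incident_le (G : SimpleGraph V) (v : V) :
    (G.edgeFinset.filter (fun e => v ∈ e)).card ≤ (S G).card - 1 := by
  rcases em (v ∈ S G) with hv | hv
  · have h : (G.edgeFinset.filter (fun e => v ∈ e)).card ≤ ((S G).erase v).card := by
      apply Finset.card_le_card_of_injOn (fun e => if h : v ∈ e then Sym2.Mem.other h else v)
      · intro e he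
        rw [mem_coe, mem_filter] at he
        simp only [Finset.mem_coe]
        rw [dif_pos he.2]
        apply Finset.mem_erase.2
        refine ⟨Sym2.other_ne (not_isDiag he.1) he.2, ?_⟩
        exact edge_in_S he.1 (Sym2.other_mem he.2)
      · intro e he f hf hef
        simp only [Finset.mem_coe, mem_filter] at he hf
        dsimp only at hef
        rw [dif_pos he.2, dif_pos hf.2] at hef
        have h1 := Sym2.other_spec he.2
        have h2 := Sym2.other_spec hf.2
        rw [← h1, ← h2, hef]
    rwa [Finset.card_erase_of_mem hv] at h
  · have h : G.edgeFinset.filter (fun e => v ∈ e) = ∅ := by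
      rw [Finset.eq_empty_iff_forall_notMem]
      intro e he
      rw [mem_filter] at he
      exact hv (edge_in_S he.1 he.2)
    rw [h]
    simp

lemma S_del_subset (G : SimpleGraph V) (v : V) : S (del G v) ⊆ (S G).erase v := by
  intro w hw
  rw [S, mem_filter] at hw
  obtain ⟨_, q, hq⟩ := hw
  exact Finset.mem_erase.2 ⟨hq.2.1, mem_filter.2 ⟨mem_univ _, ⟨q, hq.1⟩⟩⟩

lemma del_le (G : SimpleGraph V) (v : V) : (del G v).edgeFinset ⊆ G.edgeFinset := by
  rw [del_edgeFinset]; exact filter_subset _ _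

lemma nu_del_le (G : SimpleGraph V) (v : V) : nu (del G v) ≤ nu G :=
  nu_mono (del_le G v)

lemma isM_del (hM : IsM (del G v) M) : IsM G M ∧ Fre M v := by
  refine ⟨hM.mono (del_le G v), ?_⟩
  intro e he hv
  have := hM.1 he
  rw [del_edgeFinset, mem_filter] at this
  exact this.2 hv

/-! ### restriction -/

def restr (G : SimpleGraph V) (A : Finset V) : SimpleGraph V where
  Adj a b := G.Adj a b ∧ a ∈ A ∧ b ∈ A
  symm := by constructor; intro a b ⟨h1, h2, h3⟩; exact ⟨h1.symm, h3, h2⟩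
  loopless := by constructor; intro a ⟨h1, _, _⟩; exact G.irrefl h1

def Closed (G : SimpleGraph V) (A : Finset V) : Prop :=
  ∀ a b, G.Adj a b → (a ∈ A ↔ b ∈ A)

variable {A : Finset V}

lemma restr_edge_iff {e : Sym2 V} :
    e ∈ (restr G A).edgeFinset ↔ e ∈ G.edgeFinset ∧ ∀ q ∈ e, q ∈ A := by
  induction e using Sym2.ind with
  | _ a b =>
    simp only [SimpleGraph.mem_edgeFinset, SimpleGraph.mem_edgeSet, Sym2.mem_iff]
    simp only [restr]
    constructor
    · rintro ⟨h1, h2, h3⟩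
      refine ⟨h1, ?_⟩
      rintro q (rfl | rfl) <;> assumption
    · rintro ⟨h1, h2⟩
      exact ⟨h1, h2 a (Or.inl rfl), h2 b (Or.inr rfl)⟩

lemma restr_le (G : SimpleGraph V) (A : Finset V) :
    (restr G A).edgeFinset ⊆ G.edgeFinset := fun e he => (restr_edge_iff.1 he).1

lemma card_split (hA : Closed G A) :
    G.edgeFinset.card =
      (restr G A).edgeFinset.card + (restr G (univ \ A)).edgeFinset.card := by
  have h1 : (restr G A).edgeFinset = G.edgeFinset.filter (fun e => ∀ q ∈ e, q ∈ A) := by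
    ext e; rw [restr_edge_iff, mem_filter]
  have h2 : (restr G (univ \ A)).edgeFinset
      = G.edgeFinset.filter (fun e => ¬ ∀ q ∈ e, q ∈ A) := by
    ext e
    rw [restr_edge_iff, mem_filter]
    constructor
    · rintro ⟨he, hq⟩
      refine ⟨he, fun hall => ?_⟩
      induction e using Sym2.ind with
      | _ a b =>
        have := hq a (by simp)
        rw [Finset.mem_sdiff] at this
        exact this.2 (hall a (by simp))
    · rintro ⟨he, hq⟩
      refine ⟨he, fun q hqe => ?_⟩
      rw [Finset.mem_sdiff]
      refine ⟨mem_univ _, fun hqA => ?_⟩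
      apply hq
      induction e using Sym2.ind with
      | _ a b =>
        rw [SimpleGraph.mem_edgeFinset, SimpleGraph.mem_edgeSet] at he
        have hiff := hA a b he
        rcases Sym2.mem_iff.1 hqe with rfl | rfl
        · rintro r hr
          rcases Sym2.mem_iff.1 hr with rfl | rfl
          · exact hqA
          · exact hiff.1 hqA
        · rintro r hr
          rcases Sym2.mem_iff.1 hr with rfl | rfl
          · exact hiff.2 hqA
          · exact hqA
  rw [h1, h2]
  exact (Finset.card_filter_add_card_filter_not _).symm

lemma S_restr (hA : Closed G A) : S (restr G A) = S G ∩ A := by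
  ext v
  simp only [S, mem_filter, mem_univ, true_and, Finset.mem_inter]
  simp only [restr]
  constructor
  · rintro ⟨w, h1, h2, h3⟩
    exact ⟨⟨w, h1⟩, h2⟩
  · rintro ⟨⟨w, h1⟩, h2⟩
    exact ⟨w, h1, h2, (hA _ _ h1).1 h2⟩

lemma nu_split (hA : Closed G A) :
    nu G = nu (restr G A) + nu (restr G (univ \ A)) := by
  apply le_antisymm
  · obtain ⟨M, hM, hc⟩ := exists_max_matching G
    rw [← hc]
    have hsplit : M.card = (M.filter (fun e => ∀ q ∈ e, q ∈ A)).card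
        + (M.filter (fun e => ¬ ∀ q ∈ e, q ∈ A)).card :=
      (Finset.card_filter_add_card_filter_not _).symm
    rw [hsplit]
    gcongr
    · apply card_le_nu
      constructor
      · intro e he
        rw [mem_filter] at he
        exact restr_edge_iff.2 ⟨hM.1 he.1, he.2⟩
      · exact Set.Pairwise.mono (by intro x hx; rw [Finset.coe_filter] at hx; exact hx.1) hM.2
    · apply card_le_nu
      constructor
      · intro e he
        rw [mem_filter] at he
        rw [restr_edge_iff]
        refine ⟨hM.1 he.1, fun q hq => Finset.mem_sdiff.2 ⟨mem_univ _, fun hqA => he.2 ?_⟩⟩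
        have hall : ∀ r ∈ e, r ∈ A := by
          induction e using Sym2.ind with
          | _ a b =>
            have hGe := hM.1 he.1
            rw [SimpleGraph.mem_edgeFinset, SimpleGraph.mem_edgeSet] at hGe
            have hiff := hA a b hGe
            rcases Sym2.mem_iff.1 hq with rfl | rfl
            · rintro r hr
              rcases Sym2.mem_iff.1 hr with rfl | rfl
              · exact hqA
              · exact hiff.1 hqA
            · rintro r hr
              rcases Sym2.mem_iff.1 hr with rfl | rfl
              · exact hiff.2 hqA
              · exact hqA
        exact hall
      · exact Set.Pairwise.mono (by intro x hx; rw [Finset.coe_filter] at hx; exact hx.1) hM.2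
  · obtain ⟨MA, hMA, hcA⟩ := exists_max_matching (restr G A)
    obtain ⟨MB, hMB, hcB⟩ := exists_max_matching (restr G (univ \ A))
    have hdisj : Disjoint MA MB := by
      rw [Finset.disjoint_left]
      intro e heA heB
      have h1 := restr_edge_iff.1 (hMA.1 heA)
      have h2 := restr_edge_iff.1 (hMB.1 heB)
      induction e using Sym2.ind with
      | _ a b =>
        have := h1.2 a (by simp)
        have h3 := h2.2 a (by simp)
        rw [Finset.mem_sdiff] at h3
        exact h3.2 this
    have hM : IsM G (MA ∪ MB) := by
      constructor
      · intro e he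
        rcases Finset.mem_union.1 he with he | he
        · exact restr_le G A (hMA.1 he)
        · exact restr_le G _ (hMB.1 he)
      · intro e he f hf hne
        simp only [coe_union, Set.mem_union, mem_coe] at he hf
        rcases he with he | he <;> rcases hf with hf | hf
        · exact hMA.2 he hf hne
        · intro q hqe hqf
          have h1 := (restr_edge_iff.1 (hMA.1 he)).2 q hqe
          have h2 := (restr_edge_iff.1 (hMB.1 hf)).2 q hqf
          rw [Finset.mem_sdiff] at h2
          exact h2.2 h1
        · intro q hqe hqf
          have h1 := (restr_edge_iff.1 (hMB.1 he)).2 q hqe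
          have h2 := (restr_edge_iff.1 (hMA.1 hf)).2 q hqf
          rw [Finset.mem_sdiff] at h1
          exact h1.2 h2
        · exact hMB.2 he hf hne
    calc nu (restr G A) + nu (restr G (univ \ A)) = MA.card + MB.card := by rw [hcA, hcB]
      _ = (MA ∪ MB).card := (Finset.card_union_of_disjoint hdisj).symm
      _ ≤ nu G := card_le_nu hM

lemma del_restr (G : SimpleGraph V) (A : Finset V) (a : V) :
    del (restr G A) a = restr (del G a) A := by
  ext x y
  simp only [del, restr]
  tauto

lemma restr_del_of_not_mem {B : Finset V} {a : V} (ha : a ∉ B) :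
    restr (del G a) B = restr G B := by
  ext xx yy
  simp only [del, restr]
  constructor
  · rintro ⟨⟨h1, _, _⟩, h4, h5⟩
    exact ⟨h1, h4, h5⟩
  · rintro ⟨h1, h4, h5⟩
    exact ⟨⟨h1, fun h => ha (h ▸ h4), fun h => ha (h ▸ h5)⟩, h4, h5⟩

/-! ### numeric lemmas -/

lemma choose2_succ (m : ℕ) : (m+1).choose 2 = m.choose 2 + m := by
  rw [Nat.choose_succ_succ]
  simp [Nat.choose_one_right, Nat.add_comm]

lemma two_mul_choose2 (m : ℕ) : 2 * m.choose 2 = m * (m-1) := by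
  induction m with
  | zero => simp
  | succ n ih =>
    rw [choose2_succ, Nat.mul_add, ih]
    rcases Nat.eq_zero_or_pos n with rfl | hn
    · simp
    · have : n - 1 + 2 = n + 1 := by omega
      cases n with
      | zero => omega
      | succ p => simp [Nat.succ_sub_one]; ring

lemma superadd (a b : ℕ) :
    (2*a+1).choose 2 + (2*b+1).choose 2 ≤ (2*(a+b)+1).choose 2 := by
  have h1 := two_mul_choose2 (2*a+1)
  have h2 := two_mul_choose2 (2*b+1)
  have h3 := two_mul_choose2 (2*(a+b)+1)
  have e1 : 2*a+1-1 = 2*a := by omega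
  have e2 : 2*b+1-1 = 2*b := by omega
  have e3 : 2*(a+b)+1-1 = 2*(a+b) := by omega
  rw [e1] at h1; rw [e2] at h2; rw [e3] at h3
  nlinarith [Nat.zero_le (a*b), h1, h2, h3]


/-! ### alternating paths -/

section path

variable {M M' : Finset (Sym2 V)} {w : V} {x : ℕ → V} {L : ℕ}

def PathP (M M' : Finset (Sym2 V)) (w : V) (x : ℕ → V) (L : ℕ) : Prop :=
  x 0 = w ∧ ∀ i < L, s(x i, x (i+1)) ∈ (if Even i then M \ M' else M' \ M)

lemma PathP.evenE (h : PathP M M' w x L) {i : ℕ} (hi : i < L) (he : Even i) :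
    s(x i, x (i+1)) ∈ M \ M' := by
  have := h.2 i hi
  rwa [if_pos he] at this

lemma PathP.oddE (h : PathP M M' w x L) {i : ℕ} (hi : i < L) (he : ¬ Even i) :
    s(x i, x (i+1)) ∈ M' \ M := by
  have := h.2 i hi
  rwa [if_neg he] at this

lemma PathP.step_ne (hM : IsM G M) (hM' : IsM G M') (h : PathP M M' w x L)
    {i : ℕ} (hi : i < L) : x i ≠ x (i+1) := by
  intro heq
  by_cases he : Even i
  · have hmem := h.evenE hi he
    have := not_isDiag (hM.1 ((Finset.mem_sdiff.1 hmem).1))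
    exact this (by rw [Sym2.isDiag_iff_proj_eq]; exact heq)
  · have hmem := h.oddE hi he
    have := not_isDiag (hM'.1 ((Finset.mem_sdiff.1 hmem).1))
    exact this (by rw [Sym2.isDiag_iff_proj_eq]; exact heq)

lemma path_inj (hM : IsM G M) (hM' : IsM G M') (hw : Fre M' w)
    (hx : PathP M M' w x L) : ∀ j ≤ L, ∀ i < j, x i ≠ x j := by
  intro j
  induction j using Nat.strong_induction_on with
  | _ j IHj =>
  intro hjL i hij heq
  -- j ≥ 1
  obtain ⟨j', rfl⟩ : ∃ j'', j = j'' + 1 := ⟨j - 1, by omega⟩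
  have hj'L : j' < L := by omega
  -- the edge entering x (j'+1)
  have hxj : x (j'+1) ∈ s(x j', x (j'+1)) := by simp
  rcases Nat.eq_zero_or_pos i with rfl | hipos
  · -- x (j'+1) = x 0 = w
    have hweq : x (j'+1) = w := heq ▸ hx.1
    by_cases hpar : Even j'
    · -- E j' ∈ M, contains w; also E 0 ∈ M contains w
      have hEj := hx.evenE hj'L hpar
      rcases Nat.eq_zero_or_pos j' with rfl | hj'pos
      · exact (hx.step_ne hM hM' hj'L) heq
      · have h0L : 0 < L := by omega
        have hE0 := hx.evenE h0L (by simp)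
        have h0w : x 0 ∈ s(x 0, x 1) := by simp
        have hequ : s(x j', x (j'+1)) = s(x 0, x 1) := by
          have hx0 : x (j'+1) = x 0 := by rw [hweq, hx.1]
          exact edge_unique hM (Finset.mem_sdiff.1 hEj).1 (Finset.mem_sdiff.1 hE0).1
            hxj (by rw [← hx0]; simp)
        rw [Sym2.eq_iff] at hequ
        rcases hequ with ⟨h1, h2⟩ | ⟨h1, h2⟩
        · exact IHj j' (by omega) (by omega) 0 hj'pos h1.symm
        · -- x j' = x 1 : if j' = 1 parity contra; else IH
          rcases eq_or_lt_of_le (Nat.one_le_iff_ne_zero.2 (by omega) : 1 ≤ j') with he1 | hlt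
          · rw [← he1] at hpar
            simp at hpar
          · exact IHj j' (by omega) (by omega) 1 hlt h1.symm
    · -- E j' ∈ M' contains w : contradicts Fre M' w
      have hEj := hx.oddE hj'L hpar
      exact hw _ (Finset.mem_sdiff.1 hEj).1 (hweq ▸ hxj)
  · obtain ⟨i', rfl⟩ : ∃ i'', i = i'' + 1 := ⟨i - 1, by omega⟩
    have hi'L : i' < L := by omega
    have hiL : i' + 1 < L := by omega
    have hxi : x (i'+1) ∈ s(x i', x (i'+1)) := by simp
    have hxi2 : x (i'+1) ∈ s(x (i'+1), x (i'+2)) := by simp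
    by_cases hpar : (Even j' ↔ Even i')
    · -- E j' and E i' on the same side
      have hequ : s(x j', x (j'+1)) = s(x i', x (i'+1)) := by
        by_cases hej : Even j'
        · exact edge_unique hM (Finset.mem_sdiff.1 (hx.evenE hj'L hej)).1
            (Finset.mem_sdiff.1 (hx.evenE hi'L (hpar.1 hej))).1 (heq ▸ hxj) hxi
        · exact edge_unique hM' (Finset.mem_sdiff.1 (hx.oddE hj'L hej)).1
            (Finset.mem_sdiff.1 (hx.oddE hi'L (fun h => hej (hpar.2 h)))).1 (heq ▸ hxj) hxi
      rw [Sym2.eq_iff] at hequ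
      rcases hequ with ⟨h1, h2⟩ | ⟨h1, h2⟩
      · -- x j' = x i', with i' < j'
        have hij' : i' < j' := by
          rcases lt_trichotomy i' j' with h | h | h
          · exact h
          · omega
          · -- i' > j' : then j' < i' impossible since i < j... i'+1 < j'+1 → i' < j'
            omega
        exact IHj j' (by omega) (by omega) i' hij' h1.symm
      · -- x (j'+1) = x i' : combined with heq gives x i' = x (i'+1)
        have : x i' = x (i'+1) := by rw [← h2, heq]
        exact (hx.step_ne hM hM' hi'L) this
    · -- different parity: E j' same side as E (i'+1)
      have hpar2 : Even j' ↔ Even (i'+1) := by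
        rw [Nat.even_add_one]
        tauto
      have hequ : s(x j', x (j'+1)) = s(x (i'+1), x (i'+2)) := by
        by_cases hej : Even j'
        · exact edge_unique hM (Finset.mem_sdiff.1 (hx.evenE hj'L hej)).1
            (Finset.mem_sdiff.1 (hx.evenE hiL (hpar2.1 hej))).1 (heq ▸ hxj) hxi2
        · exact edge_unique hM' (Finset.mem_sdiff.1 (hx.oddE hj'L hej)).1
            (Finset.mem_sdiff.1 (hx.oddE hiL (fun h => hej (hpar2.2 h)))).1 (heq ▸ hxj) hxi2
      rw [Sym2.eq_iff] at hequ
      rcases hequ with ⟨h1, h2⟩ | ⟨h1, h2⟩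
      · -- x (j'+1) = x (i'+2), x j' = x (i'+1): gives x i = x(i+1) via heq? no:
        -- h1 : x j' = x (i'+1), h2 : x (j'+1) = x (i'+2)
        -- heq : x (i'+1) = x (j'+1) so x (i'+1) = x (i'+2)
        have : x (i'+1) = x (i'+2) := by rw [heq, h2]
        exact (hx.step_ne hM hM' hiL) this
      · -- h1 : x j' = x (i'+2), h2 : x (j'+1) = x (i'+1)
        rcases lt_trichotomy (i'+2) j' with hlt | heqq | hgt
        · exact IHj j' (by omega) (by omega) (i'+2) hlt h1.symm
        · -- j' = i'+2: parity contradiction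
          rw [← heqq] at hpar
          simp [parity_simps] at hpar
        · -- j' < i'+2, j' > i' (since i'+1 < j'+1) so j' = i'+1
          have : j' = i'+1 := by omega
          subst this
          -- h1 : x (i'+1) = x (i'+2) : step_ne contra
          exact (hx.step_ne hM hM' hiL) h1
  termination_by j => j

end path


section path2

variable {M M' : Finset (Sym2 V)} {w : V} {x : ℕ → V} {L : ℕ} {G : SimpleGraph V}

noncomputable def EAx (x : ℕ → V) (L : ℕ) : Finset (Sym2 V) :=
  ((range L).filter (fun t => Even t)).image (fun t => s(x t, x (t+1)))

noncomputable def EBx (x : ℕ → V) (L : ℕ) : Finset (Sym2 V) :=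
  ((range L).filter (fun t => ¬ Even t)).image (fun t => s(x t, x (t+1)))

lemma mem_EAx {e : Sym2 V} : e ∈ EAx x L ↔ ∃ t, t < L ∧ Even t ∧ s(x t, x (t+1)) = e := by
  simp [EAx, Finset.mem_image, Finset.mem_filter, Finset.mem_range, and_assoc]

lemma mem_EBx {e : Sym2 V} : e ∈ EBx x L ↔ ∃ t, t < L ∧ ¬ Even t ∧ s(x t, x (t+1)) = e := by
  simp [EBx, Finset.mem_image, Finset.mem_filter, Finset.mem_range, and_assoc]

lemma EAx_subset (hx : PathP M M' w x L) : EAx x L ⊆ M \ M' := by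
  intro e he
  obtain ⟨t, ht, hev, rfl⟩ := mem_EAx.1 he
  exact hx.evenE ht hev

lemma EBx_subset (hx : PathP M M' w x L) : EBx x L ⊆ M' \ M := by
  intro e he
  obtain ⟨t, ht, hev, rfl⟩ := mem_EBx.1 he
  exact hx.oddE ht hev

lemma card_evens (n : ℕ) : ((range n).filter (fun t => Even t)).card = (n+1)/2 := by
  induction n with
  | zero => simp
  | succ n ih =>
    rw [Finset.range_add_one, Finset.filter_insert]
    by_cases h : Even n
    · rw [if_pos h, Finset.card_insert_of_notMem (by simp)]
      obtain ⟨m, rfl⟩ := h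
      omega
    · rw [if_neg h]
      rw [Nat.not_even_iff_odd] at h
      obtain ⟨m, rfl⟩ := h
      omega

lemma card_odds (n : ℕ) : ((range n).filter (fun t => ¬ Even t)).card = n/2 := by
  induction n with
  | zero => simp
  | succ n ih =>
    rw [Finset.range_add_one, Finset.filter_insert]
    by_cases h : Even n
    · rw [if_neg (by simpa using h)]
      obtain ⟨m, rfl⟩ := h
      omega
    · rw [if_pos (by simpa using h), Finset.card_insert_of_notMem (by simp)]
      rw [Nat.not_even_iff_odd] at h
      obtain ⟨m, rfl⟩ := h
      omega

lemma path_inj' (hM : IsM G M) (hM' : IsM G M') (hw : Fre M' w)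
    (hx : PathP M M' w x L) : ∀ i ≤ L, ∀ j ≤ L, x i = x j → i = j := by
  intro i hi j hj heq
  rcases lt_trichotomy i j with h | h | h
  · exact absurd heq (path_inj hM hM' hw hx j hj i h)
  · exact h
  · exact absurd heq.symm (path_inj hM hM' hw hx i hi j h)

lemma card_EAx (hM : IsM G M) (hM' : IsM G M') (hw : Fre M' w)
    (hx : PathP M M' w x L) : (EAx x L).card = (L+1)/2 := by
  rw [EAx, Finset.card_image_of_injOn, card_evens]
  intro t ht t' ht' heq
  simp only [Finset.mem_coe, Finset.mem_filter, Finset.mem_range] at ht ht'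
  have hinj := path_inj' hM hM' hw hx
  rw [Sym2.eq_iff] at heq
  rcases heq with ⟨h1, h2⟩ | ⟨h1, h2⟩
  · exact hinj t (by omega) t' (by omega) h1
  · have e1 := hinj t (by omega) (t'+1) (by omega) h1
    have e2 := hinj (t+1) (by omega) t' (by omega) h2
    omega

lemma card_EBx (hM : IsM G M) (hM' : IsM G M') (hw : Fre M' w)
    (hx : PathP M M' w x L) : (EBx x L).card = L/2 := by
  rw [EBx, Finset.card_image_of_injOn, card_odds]
  intro t ht t' ht' heq
  simp only [Finset.mem_coe, Finset.mem_filter, Finset.mem_range] at ht ht'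
  have hinj := path_inj' hM hM' hw hx
  rw [Sym2.eq_iff] at heq
  rcases heq with ⟨h1, h2⟩ | ⟨h1, h2⟩
  · exact hinj t (by omega) t' (by omega) h1
  · have e1 := hinj t (by omega) (t'+1) (by omega) h1
    have e2 := hinj (t+1) (by omega) t' (by omega) h2
    omega

lemma vertex_of_mem_EAx {q : V} {e : Sym2 V} (he : e ∈ EAx x L) (hq : q ∈ e) :
    ∃ t ≤ L, q = x t := by
  obtain ⟨t, ht, _, rfl⟩ := mem_EAx.1 he
  rcases Sym2.mem_iff.1 hq with rfl | rfl
  · exact ⟨t, by omega, rfl⟩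
  · exact ⟨t+1, by omega, rfl⟩

lemma vertex_of_mem_EBx {q : V} {e : Sym2 V} (he : e ∈ EBx x L) (hq : q ∈ e) :
    ∃ t ≤ L, q = x t := by
  obtain ⟨t, ht, _, rfl⟩ := mem_EBx.1 he
  rcases Sym2.mem_iff.1 hq with rfl | rfl
  · exact ⟨t, by omega, rfl⟩
  · exact ⟨t+1, by omega, rfl⟩

lemma EAx_pairwise (hM : IsM G M) (hM' : IsM G M') (hw : Fre M' w)
    (hx : PathP M M' w x L) : ((EAx x L : Set (Sym2 V))).Pairwise Dis := by
  have hinj := path_inj' hM hM' hw hx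
  intro e he f hf hne q hqe hqf
  simp only [Finset.mem_coe] at he hf
  obtain ⟨t, ht, hev, rfl⟩ := mem_EAx.1 he
  obtain ⟨t', ht', hev', rfl⟩ := mem_EAx.1 hf
  have h1 : ∃ a ≤ L, q = x a ∧ (a = t ∨ a = t+1) := by
    rcases Sym2.mem_iff.1 hqe with rfl | rfl
    · exact ⟨t, by omega, rfl, Or.inl rfl⟩
    · exact ⟨t+1, by omega, rfl, Or.inr rfl⟩
  have h2 : ∃ b ≤ L, q = x b ∧ (b = t' ∨ b = t'+1) := by
    rcases Sym2.mem_iff.1 hqf with rfl | rfl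
    · exact ⟨t', by omega, rfl, Or.inl rfl⟩
    · exact ⟨t'+1, by omega, rfl, Or.inr rfl⟩
  obtain ⟨a, ha, rfl, hao⟩ := h1
  obtain ⟨b, hb, hqb, hbo⟩ := h2
  have hab : a = b := hinj a ha b hb hqb
  have htt : t ≠ t' := by
    rintro rfl
    exact hne rfl
  obtain ⟨m, rfl⟩ := hev
  obtain ⟨m', rfl⟩ := hev'
  omega

lemma EBx_pairwise (hM : IsM G M) (hM' : IsM G M') (hw : Fre M' w)
    (hx : PathP M M' w x L) : ((EBx x L : Set (Sym2 V))).Pairwise Dis := by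
  have hinj := path_inj' hM hM' hw hx
  intro e he f hf hne q hqe hqf
  simp only [Finset.mem_coe] at he hf
  obtain ⟨t, ht, hev, rfl⟩ := mem_EBx.1 he
  obtain ⟨t', ht', hev', rfl⟩ := mem_EBx.1 hf
  have h1 : ∃ a ≤ L, q = x a ∧ (a = t ∨ a = t+1) := by
    rcases Sym2.mem_iff.1 hqe with rfl | rfl
    · exact ⟨t, by omega, rfl, Or.inl rfl⟩
    · exact ⟨t+1, by omega, rfl, Or.inr rfl⟩
  have h2 : ∃ b ≤ L, q = x b ∧ (b = t' ∨ b = t'+1) := by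
    rcases Sym2.mem_iff.1 hqf with rfl | rfl
    · exact ⟨t', by omega, rfl, Or.inl rfl⟩
    · exact ⟨t'+1, by omega, rfl, Or.inr rfl⟩
  obtain ⟨a, ha, rfl, hao⟩ := h1
  obtain ⟨b, hb, hqb, hbo⟩ := h2
  have hab : a = b := hinj a ha b hb hqb
  have htt : t ≠ t' := by
    rintro rfl
    exact hne rfl
  rw [Nat.not_even_iff_odd] at hev hev'
  obtain ⟨m, rfl⟩ := hev
  obtain ⟨m', rfl⟩ := hev'
  omega

lemma flip_isM {K R E' : Finset (Sym2 V)} (hK : IsM G K) (hE' : E' ⊆ G.edgeFinset)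
    (hE'p : ((E' : Set (Sym2 V))).Pairwise Dis)
    (hcross : ∀ f ∈ K \ R, ∀ e ∈ E', ∀ q, q ∈ f → q ∈ e → False) :
    IsM G ((K \ R) ∪ E') := by
  constructor
  · intro e he
    rcases Finset.mem_union.1 he with he | he
    · exact hK.1 (Finset.mem_sdiff.1 he).1
    · exact hE' he
  · intro e he f hf hne
    simp only [Finset.coe_union, Set.mem_union, Finset.mem_coe] at he hf
    rcases he with he | he <;> rcases hf with hf | hf
    · exact hK.2 (Finset.mem_sdiff.1 he).1 (Finset.mem_sdiff.1 hf).1 hne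
    · intro q hqe hqf
      exact hcross e he f hf q hqe hqf
    · intro q hqe hqf
      exact hcross f hf e he q hqf hqe
    · exact hE'p he hf hne

end path2


/-! ### core: two reachable exposed vertices contradict all-inessential -/

lemma core (G : SimpleGraph V) (hins : ∀ v ∈ S G, nu (del G v) = nu G) :
    ∀ d : ℕ, ∀ (M : Finset (Sym2 V)) (u v : V), IsM G M → M.card = nu G → Fre M u →
      Fre M v → u ≠ v → G.Reachable u v → G.dist u v = d → False := by
  intro d
  induction d using Nat.strong_induction_on with
  | _ d IH =>
  intro M u v hM hMc hu hv huv hr hd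
  have hdpos : 0 < d := hd ▸ hr.pos_dist_of_ne huv
  by_cases hd1 : d = 1
  · have hadj : G.Adj u v := SimpleGraph.dist_eq_one_iff_adj.1 (by rw [hd, hd1])
    obtain ⟨h1, h2⟩ := augment hM hu hv hadj
    have := card_le_nu h1
    omega
  · have hd2 : 2 ≤ d := by omega
    obtain ⟨p, hp⟩ := hr.exists_walk_length_eq_dist
    rw [hd] at hp
    cases p with
    | nil => simp at hp; omega
    | @cons _ w _ hadj q =>
    rw [SimpleGraph.Walk.length_cons] at hp
    have hqd : G.dist w v ≤ d - 1 := by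
      have := SimpleGraph.dist_le q
      omega
    have hwu : u ≠ w := hadj.ne
    have hduw : G.dist u w = 1 := SimpleGraph.dist_eq_one_iff_adj.2 hadj
    have hruw : G.Reachable u w := ⟨hadj.toWalk⟩
    have hwv : w ≠ v := by
      rintro rfl
      have := SimpleGraph.dist_le hadj.toWalk
      rw [hd] at this
      simp at this
      omega
    have hwS : w ∈ S G := Finset.mem_filter.2 ⟨mem_univ _, ⟨u, hadj.symm⟩⟩
    -- w is covered by M
    have hwM : ∃ e ∈ M, w ∈ e := by
      by_contra hcon
      push_neg at hcon
      exact IH 1 (by omega) M u w hM hMc hu hcon hwu hruw hduw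
    obtain ⟨e0, he0M, hwe0⟩ := hwM
    -- choose M' a maximum matching missing w, maximizing overlap with M
    have hFne : (G.edgeFinset.powerset.filter
        (fun N => IsM G N ∧ N.card = nu G ∧ Fre N w)).Nonempty := by
      obtain ⟨N₀, hN₀, hc₀⟩ := exists_max_matching (del G w)
      obtain ⟨hN₀G, hN₀w⟩ := isM_del hN₀
      exact ⟨N₀, Finset.mem_filter.2 ⟨Finset.mem_powerset.2 hN₀G.1,
        hN₀G, by rw [hc₀, hins w hwS], hN₀w⟩⟩
    obtain ⟨M', hM'mem, hopt⟩ := Finset.exists_max_image _ (fun N => (N ∩ M).card) hFne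
    rw [Finset.mem_filter] at hM'mem
    obtain ⟨-, hM', hM'c, hM'w⟩ := hM'mem
    -- u and v are covered by M'
    have huM' : ¬ Fre M' u := fun hfu =>
      IH 1 (by omega) M' u w hM' hM'c hfu hM'w hwu hruw hduw
    have hvM' : ¬ Fre M' v := fun hfv =>
      IH (G.dist w v) (by omega) M' w v hM' hM'c hM'w hfv hwv ⟨q⟩ rfl
    -- the alternating path
    have he0A : e0 ∈ M \ M' := Finset.mem_sdiff.2 ⟨he0M, fun h => hM'w _ h hwe0⟩
    have hcard1 : 1 ≤ Fintype.card V := Fintype.card_pos_iff.2 ⟨w⟩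
    set Q : ℕ → Prop := fun L => ∃ x : ℕ → V, PathP M M' w x L with hQdef
    have hQ1 : Q 1 := by
      refine ⟨fun n => if n = 0 then w else Sym2.Mem.other hwe0, by simp [PathP], ?_⟩
      intro i hi
      have : i = 0 := by omega
      subst this
      norm_num
      first
      | exact Finset.mem_sdiff.1 he0A
      | (rw [Sym2.other_spec hwe0]; exact he0A)
      | exact he0A
    have hbound : ∀ L, Q L → L < Fintype.card V := by
      rintro L ⟨x, hx⟩
      have hinj := path_inj' hM hM' hM'w hx
      have h2 : (Finset.Iic L).card ≤ (univ : Finset V).card := by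
        apply Finset.card_le_card_of_injOn x (fun i _ => mem_univ _)
        intro a ha b hb heq
        exact hinj a (by simpa using ha) b (by simpa using hb) heq
      rw [Nat.card_Iic] at h2
      have : (univ : Finset V).card = Fintype.card V := rfl
      omega
    set L := Nat.findGreatest Q (Fintype.card V) with hLdef
    have hQL : Q L := Nat.findGreatest_spec hcard1 hQ1
    have hL1 : 1 ≤ L := Nat.le_findGreatest hcard1 hQ1
    obtain ⟨x, hx⟩ := hQL
    have hLlt : L < Fintype.card V := hbound L ⟨x, hx⟩
    have hinj := path_inj' hM hM' hM'w hx
    have hnoext : ∀ y : V, s(x L, y) ∉ (if Even L then M \ M' else M' \ M) := by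
      intro y hy
      have hQ' : Q (L+1) := by
        refine ⟨Function.update x (L+1) y, ?_, ?_⟩
        · rw [Function.update_of_ne (by omega)]
          exact hx.1
        · intro i hi
          rcases Nat.lt_or_ge i L with h | h
          · rw [Function.update_of_ne (by omega), Function.update_of_ne (by omega)]
            exact hx.2 i h
          · have : i = L := by omega
            subst this
            rw [Function.update_of_ne (by omega), Function.update_self]
            exact hy
      have hgt : Nat.findGreatest Q (Fintype.card V) < L + 1 := by
        rw [← hLdef]; omega
      exact Nat.findGreatest_is_greatest hgt (by omega) hQ'
    have hEBsubM' : EBx x L ⊆ M' := fun e he => (Finset.mem_sdiff.1 (EBx_subset hx he)).1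
    have hEAsubM : EAx x L ⊆ M := fun e he => (Finset.mem_sdiff.1 (EAx_subset hx he)).1
    by_cases hLpar : Even L
    · -- even case: flip M, contradict optimality of M'
      -- z := x L is M-free
      have hzM : ∀ f ∈ M, x L ∉ f := by
        intro f hf hzf
        by_cases hfM' : f ∈ M'
        · have h1 : L - 1 < L := by omega
          have hodd : ¬ Even (L-1) := by
            obtain ⟨m, hm⟩ := hLpar
            rintro ⟨r, hr⟩
            omega
          have hE := hx.oddE h1 hodd
          have hmem : x L ∈ s(x (L-1), x (L-1+1)) := by
            rw [show L-1+1 = L by omega]; simp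
          have heqf := edge_unique hM' hfM' (Finset.mem_sdiff.1 hE).1 hzf hmem
          rw [heqf] at hf
          exact (Finset.mem_sdiff.1 hE).2 hf
        · have hform := Sym2.other_spec hzf
          have := hnoext (Sym2.Mem.other hzf)
          rw [if_pos hLpar, hform] at this
          exact this (Finset.mem_sdiff.2 ⟨hf, hfM'⟩)
      -- every M-edge touching the path is a path A-edge
      have hMp : ∀ f ∈ M, ∀ t, t ≤ L → x t ∈ f → f ∈ EAx x L := by
        intro f hf t htL hxt
        by_cases htev : Even t
        · rcases Nat.lt_or_ge t L with h | h
          · have hE := hx.evenE h htev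
            have hmem : x t ∈ s(x t, x (t+1)) := by simp
            have heqf := edge_unique hM hf (Finset.mem_sdiff.1 hE).1 hxt hmem
            rw [heqf]
            exact mem_EAx.2 ⟨t, h, htev, rfl⟩
          · have : t = L := by omega
            subst this
            exact absurd hxt (hzM f hf)
        · have htpos : 1 ≤ t := by
            by_contra h
            exact htev (by simp [show t = 0 by omega])
          have h1 : t - 1 < L := by omega
          have hev : Even (t-1) := by
            rw [Nat.not_even_iff_odd] at htev
            obtain ⟨m, rfl⟩ := htev
            simpa using (even_two_mul m)
          have hE := hx.evenE h1 hev
          have hmem : x t ∈ s(x (t-1), x (t-1+1)) := by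
            rw [show t-1+1 = t by omega]; simp
          have heqf := edge_unique hM hf (Finset.mem_sdiff.1 hE).1 hxt hmem
          rw [heqf]
          exact mem_EAx.2 ⟨t-1, h1, hev, rfl⟩
      -- N := (M \ EA) ∪ EB is a maximum matching missing w
      set N : Finset (Sym2 V) := (M \ EAx x L) ∪ EBx x L with hNdef
      have hN : IsM G N := by
        apply flip_isM hM (fun e he => hM'.1 (hEBsubM' he)) (EBx_pairwise hM hM' hM'w hx)
        intro f hf e he qq hqf hqe
        obtain ⟨t, htL, rfl⟩ := vertex_of_mem_EBx he hqe
        have := hMp f (Finset.mem_sdiff.1 hf).1 t htL hqf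
        exact (Finset.mem_sdiff.1 hf).2 this
      have hdisjN : Disjoint (M \ EAx x L) (EBx x L) := by
        rw [Finset.disjoint_right]
        intro e he hmem
        exact (Finset.mem_sdiff.1 (EBx_subset hx he)).2 (Finset.mem_sdiff.1 hmem).1
      have hcEA := card_EAx hM hM' hM'w hx
      have hcEB := card_EBx hM hM' hM'w hx
      have hEAle : (EAx x L).card ≤ M.card := Finset.card_le_card hEAsubM
      have hNcard : N.card = nu G := by
        rw [hNdef, Finset.card_union_of_disjoint hdisjN, Finset.card_sdiff_of_subset hEAsubM,
          hcEA, hcEB, hMc]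
        obtain ⟨r, hr⟩ := hLpar
        rw [hcEA, hMc] at hEAle
        omega
      have hNw : Fre N w := by
        intro e he hwmem
        rcases Finset.mem_union.1 he with he | he
        · obtain ⟨heM, heEA⟩ := Finset.mem_sdiff.1 he
          have h0 : (0:ℕ) < L := by omega
          have hE0 := hx.evenE h0 ⟨0, rfl⟩
          have hw0 : w ∈ s(x 0, x 1) := by rw [hx.1]; simp
          have heq0 : e = s(x 0, x (0+1)) :=
            edge_unique hM heM (Finset.mem_sdiff.1 hE0).1 hwmem hw0
          exact heEA (heq0 ▸ mem_EAx.2 ⟨0, h0, ⟨0, rfl⟩, rfl⟩)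
        · obtain ⟨t, hth⟩ := vertex_of_mem_EBx he hwmem
          obtain ⟨t', htL', hto', hfe⟩ := mem_EBx.1 he
          have hww : x 0 = w := hx.1
          have h0t := hinj 0 (by omega) t hth.1 (by rw [hww, hth.2])
          -- t = 0 : but EB edges touch only indices ≥ 1
          subst hfe
          rcases Sym2.mem_iff.1 hwmem with h | h
          · have := hinj 0 (by omega) t' (by omega) (by rw [hww, h])
            exact hto' (by simp [← this])
          · have := hinj 0 (by omega) (t'+1) (by omega) (by rw [hww, h])
            omega
      have hNmem : N ∈ G.edgeFinset.powerset.filter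
          (fun N => IsM G N ∧ N.card = nu G ∧ Fre N w) :=
        Finset.mem_filter.2 ⟨Finset.mem_powerset.2 hN.1, hN, hNcard, hNw⟩
      have hopt' := hopt N hNmem
      -- N ∩ M = M \ EA
      have hNM : N ∩ M = M \ EAx x L := by
        ext e
        constructor
        · intro he
          obtain ⟨heN, heM⟩ := Finset.mem_inter.1 he
          rcases Finset.mem_union.1 heN with h | h
          · exact h
          · exact absurd heM (Finset.mem_sdiff.1 (EBx_subset hx h)).2
        · intro he
          exact Finset.mem_inter.2 ⟨Finset.mem_union_left _ he, (Finset.mem_sdiff.1 he).1⟩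
      have hMcap : M' ∩ M ⊆ M \ EAx x L := by
        intro e he
        obtain ⟨heM', heM⟩ := Finset.mem_inter.1 he
        exact Finset.mem_sdiff.2 ⟨heM, fun hEA => (Finset.mem_sdiff.1 (EAx_subset hx hEA)).2 heM'⟩
      rw [hNM] at hopt'
      have hEq : M' ∩ M = M \ EAx x L :=
        Finset.eq_of_subset_of_card_le hMcap hopt'
      -- M' = (M \ EA) ∪ EB = N
      have hM'eq : M' = N := by
        symm
        apply Finset.eq_of_subset_of_card_le
        · intro e he
          rcases Finset.mem_union.1 he with h | h
          · rw [← hEq] at h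
            exact (Finset.mem_inter.1 h).1
          · exact hEBsubM' h
        · rw [hNcard, hM'c]
      -- identify u and v with x L
      have hcov : ∀ t, t ≤ L → t ≠ L → ∃ f ∈ M, x t ∈ f := by
        intro t htL htne
        by_cases hte : Even t
        · have h : t < L := by omega
          exact ⟨_, (Finset.mem_sdiff.1 (hx.evenE h hte)).1, by simp⟩
        · have htpos : 1 ≤ t := by
            by_contra h
            exact hte (by simp [show t = 0 by omega])
          have h1 : t - 1 < L := by omega
          have hev : Even (t-1) := by
            rw [Nat.not_even_iff_odd] at hte
            obtain ⟨m, rfl⟩ := hte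
            simpa using (even_two_mul m)
          refine ⟨_, (Finset.mem_sdiff.1 (hx.evenE h1 hev)).1, ?_⟩
          rw [show t-1+1 = t by omega]
          simp
      have hident : ∀ a : V, ¬ Fre M' a → Fre M a → a = x L := by
        intro a haM' haM
        simp only [Fre, not_forall] at haM'
        obtain ⟨g, hgM', hag⟩ := haM'
        push_neg at hag
        rw [hM'eq, hNdef] at hgM'
        rcases Finset.mem_union.1 hgM' with h | h
        · exact absurd hag (haM g (Finset.mem_sdiff.1 h).1)
        · obtain ⟨t, htL, rfl⟩ := vertex_of_mem_EBx h hag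
          rcases eq_or_ne t L with rfl | hne
          · rfl
          · obtain ⟨f, hfM, hxf⟩ := hcov t htL hne
            exact absurd hxf (haM f hfM)
      have hu' := hident u huM' hu
      have hv' := hident v hvM' hv
      exact huv (hu'.trans hv'.symm)
    · -- odd case: flip M' and get a bigger matching
      have hzM' : ∀ f ∈ M', x L ∉ f := by
        intro f hf hzf
        by_cases hfM : f ∈ M
        · have h1 : L - 1 < L := by omega
          have hev : Even (L-1) := by
            rw [Nat.not_even_iff_odd] at hLpar
            obtain ⟨m, hm⟩ := hLpar
            exact ⟨m, by omega⟩
          have hE := hx.evenE h1 hev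
          have hmem : x L ∈ s(x (L-1), x (L-1+1)) := by
            rw [show L-1+1 = L by omega]; simp
          have heqf := edge_unique hM hfM (Finset.mem_sdiff.1 hE).1 hzf hmem
          rw [heqf] at hf
          exact (Finset.mem_sdiff.1 hE).2 hf
        · have hform := Sym2.other_spec hzf
          have := hnoext (Sym2.Mem.other hzf)
          rw [if_neg hLpar, hform] at this
          exact this (Finset.mem_sdiff.2 ⟨hf, hfM⟩)
      have hMp' : ∀ f ∈ M', ∀ t, t ≤ L → x t ∈ f → f ∈ EBx x L := by
        intro f hf t htL hxt
        rcases Nat.eq_zero_or_pos t with rfl | htpos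
        · rw [hx.1] at hxt
          exact absurd hxt (hM'w f hf)
        · by_cases htev : Even t
          · have h1 : t - 1 < L := by omega
            have hodd : ¬ Even (t-1) := by
              obtain ⟨m, hm⟩ := htev
              rintro ⟨r, hr⟩
              omega
            have hE := hx.oddE h1 hodd
            have hmem : x t ∈ s(x (t-1), x (t-1+1)) := by
              rw [show t-1+1 = t by omega]; simp
            have heqf := edge_unique hM' hf (Finset.mem_sdiff.1 hE).1 hxt hmem
            rw [heqf]
            exact mem_EBx.2 ⟨t-1, h1, hodd, rfl⟩
          · rcases Nat.lt_or_ge t L with h | h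
            · have hE := hx.oddE h htev
              have hmem : x t ∈ s(x t, x (t+1)) := by simp
              have heqf := edge_unique hM' hf (Finset.mem_sdiff.1 hE).1 hxt hmem
              rw [heqf]
              exact mem_EBx.2 ⟨t, h, htev, rfl⟩
            · have : t = L := by omega
              subst this
              exact absurd hxt (hzM' f hf)
      have hM'' : IsM G ((M' \ EBx x L) ∪ EAx x L) := by
        apply flip_isM hM' (fun e he => hM.1 (hEAsubM he)) (EAx_pairwise hM hM' hM'w hx)
        intro f hf e he qq hqf hqe
        obtain ⟨t, htL, rfl⟩ := vertex_of_mem_EAx he hqe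
        have := hMp' f (Finset.mem_sdiff.1 hf).1 t htL hqf
        exact (Finset.mem_sdiff.1 hf).2 this
      have hdisj : Disjoint (M' \ EBx x L) (EAx x L) := by
        rw [Finset.disjoint_right]
        intro e he hmem
        exact (Finset.mem_sdiff.1 (EAx_subset hx he)).2 (Finset.mem_sdiff.1 hmem).1
      have hcEA := card_EAx hM hM' hM'w hx
      have hcEB := card_EBx hM hM' hM'w hx
      have hEBle : (EBx x L).card ≤ M'.card := Finset.card_le_card hEBsubM'
      have hcard : ((M' \ EBx x L) ∪ EAx x L).card = nu G + 1 := by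
        rw [Finset.card_union_of_disjoint hdisj, Finset.card_sdiff_of_subset hEBsubM',
          hcEA, hcEB, hM'c]
        rw [Nat.not_even_iff_odd] at hLpar
        obtain ⟨r, hr⟩ := hLpar
        rw [hcEB, hM'c] at hEBle
        omega
      have := card_le_nu hM''
      omega



lemma gallai (G : SimpleGraph V) (hins : ∀ v ∈ S G, nu (del G v) = nu G)
    (hconn : ∀ u ∈ S G, ∀ v ∈ S G, G.Reachable u v) : (S G).card ≤ 2 * nu G + 1 := by
  by_contra hcon
  push_neg at hcon
  obtain ⟨M, hM, hMc⟩ := exists_max_matching G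
  have hcov : (S G).filter (fun q => ¬ Fre M q) ⊆ M.biUnion (fun e => vset e) := by
    intro qq hq
    rw [mem_filter] at hq
    have h2 := hq.2
    simp only [Fre, not_forall] at h2
    obtain ⟨e, he, hqe⟩ := h2
    push_neg at hqe
    exact Finset.mem_biUnion.2 ⟨e, he, mem_vset.2 hqe⟩
  have hcovcard : ((S G).filter (fun q => ¬ Fre M q)).card ≤ 2 * nu G := by
    calc ((S G).filter (fun q => ¬ Fre M q)).card
        ≤ (M.biUnion (fun e => vset e)).card := Finset.card_le_card hcov
      _ ≤ M.card * 2 := Finset.card_biUnion_le_card_mul _ _ _ (fun e _ => card_vset_le e)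
      _ = 2 * nu G := by rw [hMc]; ring
  have hsplit := Finset.card_filter_add_card_filter_not
    (s := S G) (p := fun q => Fre M q)
  have hFcard : 1 < ((S G).filter (fun q => Fre M q)).card := by omega
  obtain ⟨u, hu, v, hv, huv⟩ := Finset.one_lt_card.1 hFcard
  rw [mem_filter] at hu hv
  exact core G hins (G.dist u v) M u v hM hMc hu.2 hv.2 huv (hconn u hu.1 v hv.1) rfl

lemma lemmaX : ∀ n : ℕ, ∀ G : SimpleGraph V, (S G).card = n →
    (∀ v ∈ S G, nu (del G v) = nu G) → G.edgeFinset.card ≤ (2 * nu G + 1).choose 2 := by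
  intro n
  induction n using Nat.strong_induction_on with
  | _ n IH =>
  intro G hn hins
  by_cases hconn : ∀ u ∈ S G, ∀ v ∈ S G, G.Reachable u v
  · have hG := gallai G hins hconn
    calc G.edgeFinset.card ≤ ((S G).card).choose 2 := card_edgeFinset_le_choose G
      _ ≤ (2 * nu G + 1).choose 2 := Nat.choose_le_choose _ hG
  · push_neg at hconn
    obtain ⟨u, huS, v, hvS, hreach⟩ := hconn
    set A := univ.filter (fun qq => G.Reachable u qq) with hA
    have hclosed : Closed G A := by
      intro a b hab
      simp only [hA, mem_filter, mem_univ, true_and]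
      exact ⟨fun h => h.trans ⟨hab.toWalk⟩, fun h => h.trans ⟨hab.symm.toWalk⟩⟩
    have hclosedc : Closed G (univ \ A) := by
      intro a b hab
      have := hclosed a b hab
      simp only [Finset.mem_sdiff, mem_univ, true_and]
      tauto
    have hSA := S_restr hclosed
    have hSB := S_restr hclosedc
    have huA : u ∈ A := by simp only [hA, mem_filter, mem_univ, true_and]; exact SimpleGraph.Reachable.refl u
    have hvA : v ∉ A := by simp [hA, hreach]
    have hSsum : (S G ∩ A).card + (S G ∩ (univ \ A)).card = (S G).card := by
      have h1 : S G ∩ A = (S G).filter (fun q => q ∈ A) := by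
        ext q; simp [Finset.mem_inter, Finset.mem_filter]
      have h2 : S G ∩ (univ \ A) = (S G).filter (fun q => ¬ q ∈ A) := by
        ext q; simp [Finset.mem_inter, Finset.mem_filter, Finset.mem_sdiff]
      rw [h1, h2]
      exact Finset.card_filter_add_card_filter_not _
    have huSA : u ∈ S G ∩ A := Finset.mem_inter.2 ⟨huS, huA⟩
    have hvSB : v ∈ S G ∩ (univ \ A) :=
      Finset.mem_inter.2 ⟨hvS, Finset.mem_sdiff.2 ⟨mem_univ _, hvA⟩⟩
    have hApos : 1 ≤ (S G ∩ A).card := Finset.card_pos.2 ⟨u, huSA⟩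
    have hBpos : 1 ≤ (S G ∩ (univ \ A)).card := Finset.card_pos.2 ⟨v, hvSB⟩
    have hinsA : ∀ a ∈ S (restr G A), nu (del (restr G A) a) = nu (restr G A) := by
      intro a ha
      rw [hSA] at ha
      obtain ⟨haS, haA⟩ := Finset.mem_inter.1 ha
      have h1 : Closed (del G a) A := fun b c hbc => hclosed b c hbc.1
      have h2 := nu_split hclosed
      have h3 := nu_split (G := del G a) h1
      rw [restr_del_of_not_mem (by simp [haA] : a ∉ univ \ A)] at h3
      rw [hins a haS] at h3
      rw [del_restr]
      have h4 : nu (restr (del G a) A) ≤ nu (restr G A) := by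
        apply nu_mono
        intro e he
        rw [restr_edge_iff] at he ⊢
        exact ⟨del_le G a he.1, he.2⟩
      omega
    have hinsB : ∀ a ∈ S (restr G (univ \ A)),
        nu (del (restr G (univ \ A)) a) = nu (restr G (univ \ A)) := by
      intro a ha
      rw [hSB] at ha
      obtain ⟨haS, haB⟩ := Finset.mem_inter.1 ha
      have haA : a ∉ A := (Finset.mem_sdiff.1 haB).2
      have h1 : Closed (del G a) A := fun b c hbc => hclosed b c hbc.1
      have h2 := nu_split hclosed
      have h3 := nu_split (G := del G a) h1
      rw [restr_del_of_not_mem haA] at h3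
      rw [hins a haS] at h3
      rw [del_restr]
      have h4 : nu (restr (del G a) (univ \ A)) ≤ nu (restr G (univ \ A)) := by
        apply nu_mono
        intro e he
        rw [restr_edge_iff] at he ⊢
        exact ⟨del_le G a he.1, he.2⟩
      omega
    have hcardA : (S (restr G A)).card < n := by rw [hSA]; omega
    have hcardB : (S (restr G (univ \ A))).card < n := by rw [hSB]; omega
    have hXA := IH _ hcardA (restr G A) rfl hinsA
    have hXB := IH _ hcardB (restr G (univ \ A)) rfl hinsB
    have hsum := card_split hclosed
    have hnu := nu_split hclosed
    calc G.edgeFinset.card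
        = (restr G A).edgeFinset.card + (restr G (univ \ A)).edgeFinset.card := hsum
      _ ≤ (2 * nu (restr G A) + 1).choose 2 + (2 * nu (restr G (univ \ A)) + 1).choose 2 :=
          Nat.add_le_add hXA hXB
      _ ≤ (2 * (nu (restr G A) + nu (restr G (univ \ A))) + 1).choose 2 := superadd _ _
      _ = (2 * nu G + 1).choose 2 := by rw [← hnu]


lemma NL1 (k s s' : ℕ) (h1 : s' ≤ s - 1) (h2 : 1 ≤ s) :
    k * (s' - k) + k.choose 2 + (s - 1) ≤ (k+1) * (s - (k+1)) + (k+1).choose 2 := by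
  rw [choose2_succ k]
  by_cases hc : s ≤ k + 1
  · have e1 : s' - k = 0 := by omega
    have e2 : s - (k+1) = 0 := by omega
    rw [e1, e2]
    omega
  · obtain ⟨t, rfl⟩ : ∃ t, s = k + 1 + t := ⟨s - (k+1), by omega⟩
    have e2 : k + 1 + t - (k+1) = t := by omega
    have e3 : k + 1 + t - 1 = k + t := by omega
    rw [e2, e3]
    have h3 : s' - k ≤ t := by omega
    have h4 : k * (s' - k) ≤ k * t := Nat.mul_le_mul_left k h3
    have h5 : (k+1) * t = k * t + t := by ring
    linarith

lemma NL2 (k s : ℕ) (h2 : 1 ≤ s) :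
    (2*k+1).choose 2 + (s - 1) ≤
      max ((k+1) * (s - (k+1)) + (k+1).choose 2) ((2*(k+1)+1).choose 2) := by
  by_cases hc : s ≤ 4*(k+1)
  · apply le_max_of_le_right
    have i2 : (2*k+2).choose 2 = (2*k+1).choose 2 + (2*k+1) := by
      have := choose2_succ (2*k+1)
      rwa [show 2*k+1+1 = 2*k+2 from by ring] at this
    have i1 := choose2_succ (2*k+2)
    rw [show 2*(k+1)+1 = 2*k+2+1 from by ring]
    omega
  · apply le_max_of_le_left
    obtain ⟨r, rfl⟩ : ∃ r, s = 4*k+5+r := ⟨s - (4*k+5), by omega⟩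
    have e1 : 4*k+5+r - 1 = 4*k+4+r := by omega
    have e2 : 4*k+5+r - (k+1) = 3*k+4+r := by omega
    rw [e1, e2]
    have c1 := two_mul_choose2 (2*k+1)
    have c2 := two_mul_choose2 (k+1)
    have e3 : 2*k+1-1 = 2*k := by omega
    have e4 : k+1-1 = k := by omega
    rw [e3] at c1; rw [e4] at c2
    nlinarith [c1, c2, Nat.zero_le (k*r), Nat.zero_le (k*k)]

lemma main : ∀ k : ℕ, ∀ G : SimpleGraph V, nu G ≤ k →
    G.edgeFinset.card ≤ max (k * ((S G).card - k) + k.choose 2) ((2*k+1).choose 2) := by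
  intro k
  induction k with
  | zero =>
    intro G hk
    have hE : G.edgeFinset = ∅ := by
      rw [Finset.eq_empty_iff_forall_notMem]
      intro e he
      have hMe : IsM G {e} := ⟨by simpa using he, by
        rw [Finset.coe_singleton]; exact Set.pairwise_singleton _ _⟩
      have := card_le_nu hMe
      simp at this
      omega
    simp [hE]
  | succ k' IHk =>
    intro G hk
    by_cases hcase : ∃ v ∈ S G, nu (del G v) ≤ k'
    · obtain ⟨v, hvS, hvk⟩ := hcase
      have hIH := IHk (del G v) hvk
      have hedel := card_del G v
      have hdeg := card_incident_le G v
      have hSdel : (S (del G v)).card ≤ (S G).card - 1 := by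
        calc (S (del G v)).card ≤ ((S G).erase v).card :=
              Finset.card_le_card (S_del_subset G v)
          _ = (S G).card - 1 := Finset.card_erase_of_mem hvS
      have hs1 : 1 ≤ (S G).card := Finset.card_pos.2 ⟨v, hvS⟩
      have hstep : G.edgeFinset.card ≤
          max (k' * ((S (del G v)).card - k') + k'.choose 2) ((2*k'+1).choose 2)
            + ((S G).card - 1) := by
        omega
      rcases max_cases (k' * ((S (del G v)).card - k') + k'.choose 2) ((2*k'+1).choose 2)
        with ⟨hmx, _⟩ | ⟨hmx, _⟩
      · rw [hmx] at hstep
        apply le_max_of_le_left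
        calc G.edgeFinset.card
            ≤ k' * ((S (del G v)).card - k') + k'.choose 2 + ((S G).card - 1) := hstep
          _ ≤ (k'+1) * ((S G).card - (k'+1)) + (k'+1).choose 2 := NL1 k' _ _ hSdel hs1
      · rw [hmx] at hstep
        calc G.edgeFinset.card ≤ (2*k'+1).choose 2 + ((S G).card - 1) := hstep
          _ ≤ _ := NL2 k' _ hs1
    · push_neg at hcase
      rcases Finset.eq_empty_or_nonempty (S G) with hS | ⟨v0, hv0⟩
      · have hE : G.edgeFinset = ∅ := by
          rw [Finset.eq_empty_iff_forall_notMem]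
          intro e he
          have := edge_in_S he (Sym2.out_fst_mem e)
          rw [hS] at this
          simp at this
        simp [hE]
      · have hnuk : nu G = k'+1 := by
          have h1 := hcase v0 hv0
          have h2 := nu_del_le G v0
          omega
        have hins : ∀ v ∈ S G, nu (del G v) = nu G := by
          intro v hvS
          have h1 := hcase v hvS
          have h2 := nu_del_le G v
          omega
        have hX := lemmaX (S G).card G rfl hins
        rw [hnuk] at hX
        exact le_max_of_le_right hX

end EGaux

/-- Erdős–Gallai: an `n`-vertex graph with no `k+1` pairwise disjoint edges has at most
`max{k(n−k) + C(k,2), C(2k+1,2)}` edges. -/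
theorem stmt8 {V : Type*} [Fintype V] (G : SimpleGraph V) (n k : ℕ)
    (hn : Fintype.card V = n)
    (hmatch : ∀ M : Finset (Sym2 V), M ⊆ G.edgeFinset →
      (M : Set (Sym2 V)).Pairwise (fun e f => ∀ v : V, v ∈ e → v ∉ f) → M.card ≤ k) :
    G.edgeFinset.card ≤ max (k * (n - k) + k.choose 2) ((2 * k + 1).choose 2) := by
  have hnu : EGaux.nu G ≤ k := by
    apply Finset.sup_le
    intro M hM
    rw [Finset.mem_filter] at hM
    exact hmatch M hM.2.1 hM.2.2
  have hmain := EGaux.main k G hnu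
  have hS : (EGaux.S G).card ≤ n := by
    rw [← hn]
    exact Finset.card_le_univ _
  refine hmain.trans (max_le_max ?_ le_rfl)
  have : (EGaux.S G).card - k ≤ n - k := by omega
  exact Nat.add_le_add_right (Nat.mul_le_mul_left k this) _
end

section
/- Define p(h,a) = a(h−a) + C(h−2a,2) + 6h if 2a ≤ h < 9a, and p(h,a) = (a−2)(h−a+2) + C(h−2a+4,2) if h ≥ 9a. There exists κ₀ such that for all h ≥ κ₀: if H is a graph of order h and A ⊆ V(H) with 3 ≤ |A| ≤ h/2 such that no family of vertex-disjoint triangles in H covers three or more vertices of A, then e(H) ≤ p(h,|A|). -/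
open scoped Classical

/-- The function `p(h,a)` from the paper. -/
def pFun (h a : ℕ) : ℕ :=
  if h < 9 * a then a * (h - a) + (h - 2 * a).choose 2 + 6 * h
  else (a - 2) * (h - a + 2) + (h - 2 * a + 4).choose 2

namespace Stmt10

open Finset

variable {V : Type} [Fintype V] {H : SimpleGraph V}

/-- number of non-neighbours of `v` inside `U` (excluding `v`) -/
noncomputable def nuU (H : SimpleGraph V) (U : Finset V) (v : V) : ℕ :=
  ((U.erase v).filter fun w => ¬ H.Adj v w).card

/-- degree of `v` inside `U` -/
noncomputable def dU (H : SimpleGraph V) (U : Finset V) (v : V) : ℕ :=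
  ((U.erase v).filter fun w => H.Adj v w).card

/-- doubled count of non-edges inside `U` -/
noncomputable def ne2 (H : SimpleGraph V) (U : Finset V) : ℕ :=
  ∑ v ∈ U, nuU H U v

lemma dU_add_nuU (U : Finset V) (v : V) : dU H U v + nuU H U v = (U.erase v).card := by
  classical
  exact Finset.card_filter_add_card_filter_not _

lemma nuU_erase (U : Finset V) (u v : V) (hu : u ∈ U) (hne : v ≠ u) :
    nuU H U v = nuU H (U.erase u) v + (if ¬ H.Adj v u then 1 else 0) := by
  classical
  unfold nuU
  have h1 : U.erase v = insert u ((U.erase u).erase v) := by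
    rw [Finset.erase_right_comm]
    rw [Finset.insert_erase (Finset.mem_erase.2 ⟨fun h => hne h.symm, hu⟩)]
  rw [h1, Finset.filter_insert]
  by_cases hadj : ¬ H.Adj v u
  · rw [if_pos hadj, if_pos hadj]
    rw [Finset.card_insert_of_notMem (by simp)]
  · rw [if_neg hadj, if_neg hadj]
    omega

lemma ne2_erase (U : Finset V) (u : V) (hu : u ∈ U) :
    ne2 H U = ne2 H (U.erase u) + 2 * nuU H U u := by
  classical
  unfold ne2
  rw [← Finset.sum_erase_add _ _ hu]
  have hsum : ∑ v ∈ U.erase u, nuU H U v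
      = ∑ v ∈ U.erase u, (nuU H (U.erase u) v + if ¬ H.Adj v u then 1 else 0) := by
    apply Finset.sum_congr rfl
    intro v hv
    exact nuU_erase U u v hu (Finset.ne_of_mem_erase hv)
  rw [hsum, Finset.sum_add_distrib]
  have hcard : (∑ v ∈ U.erase u, if ¬ H.Adj v u then 1 else 0) = nuU H U u := by
    rw [Finset.sum_boole]
    unfold nuU
    norm_cast
    congr 1
    apply Finset.filter_congr
    intro w _
    simp [H.adj_comm]
  rw [hcard]
  ring

/-- Core counting lemma: if every `v ∈ A` has independent neighbourhood within `U`
outside its defect set `Z v`, then the number of (doubled) nonedges within `U` is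
at least `2*(|A| * (|U| - |A| - 1)) - 2*Σ |Z v|`. -/
lemma CZ : ∀ (n : ℕ) (U A : Finset V) (Z : V → Finset V),
    U.card = n → A ⊆ U →
    (∀ v ∈ A, v ∉ Z v) →
    (∀ v ∈ A, ∀ p ∈ U, ∀ q ∈ U, H.Adj v p → H.Adj v q → p ∉ Z v → q ∉ Z v → p ≠ q →
      ¬ H.Adj p q) →
    2 * (A.card * (U.card - A.card - 1)) ≤ ne2 H U + 2 * ∑ v ∈ A, (Z v).card := by
  intro n
  induction n using Nat.strong_induction_on with
  | _ n IH =>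
    intro U A Z hUn hAU hvZ hlink
    rcases Finset.eq_empty_or_nonempty A with rfl | hAne
    · simp
    have hA1 : 1 ≤ A.card := Finset.card_pos.2 hAne
    by_cases hsmall : U.card ≤ A.card + 1
    · have : U.card - A.card - 1 = 0 := by omega
      rw [this]
      simp
    push_neg at hsmall
    obtain ⟨m, hm⟩ : ∃ m, U.card = A.card + m + 2 := ⟨U.card - A.card - 2, by omega⟩
    by_cases hcase : ∃ v ∈ A, dU H U v ≤ A.card + (Z v).card
    · -- case (i): delete v from U and A
      obtain ⟨v, hvA, hdv⟩ := hcase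
      have hvU : v ∈ U := hAU hvA
      have hcard' : (U.erase v).card = n - 1 := by
        rw [Finset.card_erase_of_mem hvU, hUn]
      have hn1 : n - 1 < n := by
        have : 0 < n := by omega
        omega
      have hIH := IH (n-1) hn1 (U.erase v) (A.erase v) Z hcard'
        (fun x hx => Finset.mem_erase.2 ⟨Finset.ne_of_mem_erase hx,
          hAU (Finset.mem_of_mem_erase hx)⟩)
        (fun x hx => hvZ x (Finset.mem_of_mem_erase hx))
        (fun x hx p hp q hq => hlink x (Finset.mem_of_mem_erase hx) p
          (Finset.mem_of_mem_erase hp) q (Finset.mem_of_mem_erase hq))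
      have hne2 := ne2_erase (H := H) U v hvU
      have hnuv : nuU H U v + (A.card + (Z v).card) ≥ U.card - 1 := by
        have h1 := dU_add_nuU (H := H) U v
        have h2 : (U.erase v).card = U.card - 1 := Finset.card_erase_of_mem hvU
        omega
      have hsub1 : (U.erase v).card - (A.erase v).card - 1 = U.card - A.card - 1 := by
        rw [Finset.card_erase_of_mem hvU, Finset.card_erase_of_mem hvA]
        omega
      have hsumZ : ∑ x ∈ A, (Z x).card = (∑ x ∈ A.erase v, (Z x).card) + (Z v).card := by
        rw [Finset.sum_erase_add _ _ hvA]
      have hcardA : (A.erase v).card = A.card - 1 := Finset.card_erase_of_mem hvA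
      rw [hsub1, hcardA] at hIH
      have hU1 : U.card - A.card - 1 = m + 1 := by omega
      rw [hU1] at hIH ⊢
      have hAcard : A.card - 1 + 1 = A.card := by omega
      have expand : A.card * (m+1) = (A.card - 1) * (m+1) + (m+1) := by
        nth_rewrite 1 [← hAcard]; ring
      have hnu' : m + 1 ≤ nuU H U v + (Z v).card := by omega
      omega
    · -- case (ii): all degrees large; delete a non-neighbour u ∉ A
      push_neg at hcase
      obtain ⟨v₀, hv₀A⟩ := hAne
      have hd₀ := hcase v₀ hv₀A
      set I : Finset V := ((U.erase v₀).filter fun w => H.Adj v₀ w) \ Z v₀ with hI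
      have hIcard : A.card + 1 ≤ I.card := by
        have h1 : (((U.erase v₀).filter fun w => H.Adj v₀ w)).card ≤ I.card + (Z v₀).card :=
          Finset.card_le_card_sdiff_add_card
        have hdeq : dU H U v₀ = (((U.erase v₀).filter fun w => H.Adj v₀ w)).card := rfl
        omega
      have hIU : I ⊆ U := fun w hw => by
        have := (Finset.mem_sdiff.1 hw).1
        exact Finset.mem_of_mem_erase (Finset.mem_filter.1 this).1
      have hIA : (I \ A).Nonempty := by
        rw [← Finset.card_pos]
        have h2 : (I ∩ A).card ≤ A.card := Finset.card_le_card (Finset.inter_subset_right)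
        have h3 := Finset.card_sdiff_add_card_inter I A
        omega
      obtain ⟨u, hu⟩ := hIA
      have huI : u ∈ I := (Finset.mem_sdiff.1 hu).1
      have huA : u ∉ A := (Finset.mem_sdiff.1 hu).2
      have huU : u ∈ U := hIU huI
      have hnuu : I.card - 1 ≤ nuU H U u := by
        have hsub : I.erase u ⊆ (U.erase u).filter fun w => ¬ H.Adj u w := by
          intro w hw
          have hwI : w ∈ I := Finset.mem_of_mem_erase hw
          have hwu : w ≠ u := Finset.ne_of_mem_erase hw
          refine Finset.mem_filter.2 ⟨Finset.mem_erase.2 ⟨hwu, hIU hwI⟩, ?_⟩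
          have h1 := Finset.mem_sdiff.1 huI
          have h2 := Finset.mem_sdiff.1 hwI
          exact hlink v₀ hv₀A u huU w (hIU hwI)
            (Finset.mem_filter.1 h1.1).2 (Finset.mem_filter.1 h2.1).2
            h1.2 h2.2 (fun h => hwu h.symm)
        calc I.card - 1 = (I.erase u).card := (Finset.card_erase_of_mem huI).symm
          _ ≤ _ := Finset.card_le_card hsub
      have hcard' : (U.erase u).card = n - 1 := by
        rw [Finset.card_erase_of_mem huU, hUn]
      have hn1 : n - 1 < n := by
        have : 0 < n := by omega
        omega
      have hIH := IH (n-1) hn1 (U.erase u) A Z hcard'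
        (fun x hx => Finset.mem_erase.2 ⟨fun hxy => huA (hxy ▸ hx), hAU hx⟩)
        hvZ
        (fun x hx p hp q hq => hlink x hx p (Finset.mem_of_mem_erase hp) q
          (Finset.mem_of_mem_erase hq))
      have hne2 := ne2_erase (H := H) U u huU
      have hsub2 : (U.erase u).card - A.card - 1 = m := by
        have h9 : (U.erase u).card = U.card - 1 := Finset.card_erase_of_mem huU
        omega
      rw [hsub2] at hIH
      have hU2 : U.card - A.card - 1 = m + 1 := by omega
      rw [hU2]
      have expand : A.card * (m+1) = A.card * m + A.card := by ring
      have hnuu2 : A.card ≤ nuU H U u := by omega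
      omega

lemma dU_univ (v : V) : dU H (univ : Finset V) v = H.degree v := by
  classical
  unfold dU
  rw [← SimpleGraph.card_neighborFinset_eq_degree]
  congr 1
  ext w
  simp only [Finset.mem_filter, Finset.mem_erase, Finset.mem_univ, and_true,
    SimpleGraph.mem_neighborFinset, true_and]
  constructor
  · rintro ⟨-, h⟩; exact h
  · intro h; exact ⟨h.ne', h⟩

lemma edge_ne2 : 2 * H.edgeFinset.card + ne2 H (univ : Finset V)
    = Fintype.card V * Fintype.card V - Fintype.card V := by
  classical
  have h1 : ∑ v : V, (dU H univ v + nuU H univ v) = ∑ v : V, (Fintype.card V - 1) := by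
    apply Finset.sum_congr rfl
    intro v _
    rw [dU_add_nuU]
    rw [Finset.card_erase_of_mem (Finset.mem_univ v), Finset.card_univ]
  rw [Finset.sum_add_distrib] at h1
  have h2 : ∑ v : V, dU H (univ : Finset V) v = 2 * H.edgeFinset.card := by
    rw [← SimpleGraph.sum_degrees_eq_twice_card_edges]
    exact Finset.sum_congr rfl fun v _ => dU_univ v
  have h3 : ∑ _v : V, (Fintype.card V - 1) = Fintype.card V * (Fintype.card V - 1) := by
    rw [Finset.sum_const, Finset.card_univ, smul_eq_mul]
  have h4 : Fintype.card V * (Fintype.card V - 1)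
      = Fintype.card V * Fintype.card V - Fintype.card V := by
    cases Fintype.card V with
    | zero => simp
    | succ k => simp [Nat.mul_sub_one]; ring_nf; omega
  unfold ne2
  omega

lemma two_choose (k : ℕ) : 2 * k.choose 2 + k = k * k := by
  induction k with
  | zero => simp
  | succ m ih =>
    rw [Nat.choose] 
    have : m.choose 1 = m := Nat.choose_one_right m
    ring_nf
    ring_nf at ih
    omega



variable {V : Type} [Fintype V] {H : SimpleGraph V}

/-- a flower at `v`: a set of triangles through `v`, pairwise meeting exactly at `v`. -/
def IsFlower (H : SimpleGraph V) (v : V) (F : Finset (Finset V)) : Prop :=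
  (∀ t ∈ F, H.IsNClique 3 t ∧ v ∈ t) ∧
    (F : Set (Finset V)).Pairwise (fun s t => s ∩ t = {v})

noncomputable def flowers (H : SimpleGraph V) (v : V) : Finset (Finset (Finset V)) :=
  ((univ : Finset V).powerset.powerset).filter (fun F => IsFlower H v F)

lemma flowers_nonempty (v : V) : (flowers H v).Nonempty := by
  refine ⟨∅, ?_⟩
  unfold flowers IsFlower
  simp

/-- a maximum-cardinality flower at `v` -/
noncomputable def maxFlower (H : SimpleGraph V) (v : V) : Finset (Finset V) :=
  Classical.choose ((flowers H v).exists_max_image Finset.card (flowers_nonempty v))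

lemma maxFlower_spec (v : V) : maxFlower H v ∈ flowers H v ∧
    ∀ F ∈ flowers H v, F.card ≤ (maxFlower H v).card := by
  have h := Classical.choose_spec
    ((flowers H v).exists_max_image Finset.card (flowers_nonempty v))
  exact ⟨h.1, h.2⟩

lemma maxFlower_isFlower (v : V) : IsFlower H v (maxFlower H v) := by
  have h := (maxFlower_spec (H := H) v).1
  unfold flowers at h
  exact (Finset.mem_filter.1 h).2

/-- `v` is "routable": it has a flower with ≥ 7 petals. -/
def Rout (H : SimpleGraph V) (v : V) : Prop :=
  ∃ F, IsFlower H v F ∧ 7 ≤ F.card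

/-- defect set of a non-routable vertex -/
noncomputable def Zfl (H : SimpleGraph V) (v : V) : Finset V :=
  (maxFlower H v).biUnion (fun t => t.erase v)

lemma Zfl_not_mem (v : V) : v ∉ Zfl H v := by
  unfold Zfl
  simp

lemma Zfl_card (v : V) (hv : ¬ Rout H v) : (Zfl H v).card ≤ 12 := by
  have hmax : (maxFlower H v).card ≤ 6 := by
    by_contra hc
    exact hv ⟨maxFlower H v, maxFlower_isFlower v, by omega⟩
  calc (Zfl H v).card ≤ ∑ t ∈ maxFlower H v, (t.erase v).card := Finset.card_biUnion_le
    _ ≤ ∑ _t ∈ maxFlower H v, 2 := by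
        apply Finset.sum_le_sum
        intro t ht
        have h3 := ((maxFlower_isFlower (H := H) v).1 t ht)
        have : t.card = 3 := h3.1.2
        have := Finset.card_erase_of_mem h3.2
        omega
    _ ≤ 12 := by rw [Finset.sum_const, smul_eq_mul]; omega

/-- the defect set of a non-routable vertex covers all triangles through it -/
lemma Zfl_cover (v : V) (t : Finset V) (ht : H.IsNClique 3 t) (hvt : v ∈ t) :
    ∃ w ∈ Zfl H v, w ∈ t ∧ w ≠ v := by
  by_contra hc
  push_neg at hc
  -- then t meets every petal exactly in v, so we can insert it
  have hF := maxFlower_isFlower (H := H) v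
  have hmeet : ∀ s ∈ maxFlower H v, t ∩ s = {v} := by
    intro s hs
    apply Finset.Subset.antisymm
    · intro w hw
      have hwt := (Finset.mem_inter.1 hw).1
      have hws := (Finset.mem_inter.1 hw).2
      by_contra hwv
      simp only [Finset.mem_singleton] at hwv
      have : w ∈ Zfl H v := Finset.mem_biUnion.2 ⟨s, hs, Finset.mem_erase.2 ⟨hwv, hws⟩⟩
      exact hwv ((hc w this hwt))
    · intro w hw
      simp only [Finset.mem_singleton] at hw
      subst hw
      exact Finset.mem_inter.2 ⟨hvt, (hF.1 s hs).2⟩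
  have htnotin : t ∉ maxFlower H v := by
    intro htin
    have := hmeet t htin
    rw [Finset.inter_self] at this
    have : t.card = 1 := by rw [this]; simp
    have := ht.2
    omega
  have hbig : insert t (maxFlower H v) ∈ flowers H v := by
    unfold flowers
    rw [Finset.mem_filter]
    constructor
    · simp
    constructor
    · intro s hs
      rcases Finset.mem_insert.1 hs with rfl | hs
      · exact ⟨ht, hvt⟩
      · exact hF.1 s hs
    · have hsymm : Symmetric (fun s t : Finset V => s ∩ t = {v}) := by
        intro s t h
        have h' : s ∩ t = {v} := h
        show t ∩ s = {v}
        rwa [Finset.inter_comm] at h'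
      haveI : Std.Symm (fun s t : Finset V => s ∩ t = {v}) := ⟨fun _ _ h => hsymm h⟩
      rw [Finset.coe_insert, Set.pairwise_insert_of_symm]
      exact ⟨hF.2, fun s hs _ => hmeet s hs⟩
  have := (maxFlower_spec (H := H) v).2 _ hbig
  rw [Finset.card_insert_of_notMem htnotin] at this
  omega

/-- a routable vertex has a triangle avoiding any ≤ 6 given vertices (other than itself) -/
lemma rout_avoid (v : V) (hv : Rout H v) (B : Finset V) (hB : B.card ≤ 6) :
    ∃ t, H.IsNClique 3 t ∧ v ∈ t ∧ ∀ b ∈ B, b ∈ t → b = v := by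
  obtain ⟨F, hF, hF7⟩ := hv
  by_contra hc
  push_neg at hc
  -- each petal hits B \ {v}; distinct petals hit distinct elements
  have hwit : ∀ t ∈ F, ∃ b, b ∈ B.erase v ∧ b ∈ t := by
    intro t htF
    obtain ⟨b, hbB, hbt, hbv⟩ := hc t (hF.1 t htF).1 (hF.1 t htF).2
    exact ⟨b, Finset.mem_erase.2 ⟨hbv, hbB⟩, hbt⟩
  classical
  set f : Finset V → V :=
    fun t => if h : ∃ b, b ∈ B.erase v ∧ b ∈ t then h.choose else v with hfdef
  have hfval : ∀ t (ht : t ∈ F), f t = (hwit t ht).choose := by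
    intro t ht
    simp only [hfdef]
    rw [dif_pos (hwit t ht)]
  have hcard : F.card ≤ (B.erase v).card := by
    apply Finset.card_le_card_of_injOn f
    · intro t htF
      rw [hfval t htF]
      exact (hwit t htF).choose_spec.1
    · intro t₁ h1' t₂ h2' heq
      by_contra hne
      have h1 : t₁ ∈ F := h1'
      have h2 : t₂ ∈ F := h2'
      rw [hfval t₁ h1, hfval t₂ h2] at heq
      have hb1 := (hwit t₁ h1).choose_spec
      have hb2 := (hwit t₂ h2).choose_spec
      have hmem : (hwit t₁ h1).choose ∈ t₁ ∩ t₂ :=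
        Finset.mem_inter.2 ⟨hb1.2, heq ▸ hb2.2⟩
      have hint := hF.2 (Finset.mem_coe.2 h1) (Finset.mem_coe.2 h2) hne
      rw [hint] at hmem
      simp only [Finset.mem_singleton] at hmem
      exact (Finset.mem_erase.1 hb1.1).1 hmem
  have hle := Finset.card_erase_le (s := B) (a := v)
  omega


lemma link_of_cover {v : V} {Zv : Finset V} (hvZ : v ∉ Zv)
    (hcov : ∀ t, H.IsNClique 3 t → v ∈ t → ∃ w ∈ Zv, w ∈ t) :
    ∀ p q, H.Adj v p → H.Adj v q → p ∉ Zv → q ∉ Zv → p ≠ q → ¬ H.Adj p q := by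
  intro p q hvp hvq hp hq _hpq hadj
  obtain ⟨w, hwZ, hwt⟩ := hcov {v, p, q}
    (SimpleGraph.is3Clique_triple_iff.2 ⟨hvp, hvq, hadj⟩)
    (Finset.mem_insert_self _ _)
  rcases Finset.mem_insert.1 hwt with rfl | hwt
  · exact hvZ hwZ
  rcases Finset.mem_insert.1 hwt with rfl | hwt
  · exact hp hwZ
  · rw [Finset.mem_singleton] at hwt; subst hwt; exact hq hwZ

lemma violate {A : Finset V}
    (hP : ∀ 𝒯 : Finset (Finset V), (∀ t ∈ 𝒯, H.IsNClique 3 t) →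
      (𝒯 : Set (Finset V)).Pairwise (fun s t => Disjoint s t) →
      (A.filter (fun a => ∃ t ∈ 𝒯, a ∈ t)).card ≤ 2)
    (T : Finset (Finset V)) (hT : ∀ t ∈ T, H.IsNClique 3 t)
    (hdisj : (T : Set (Finset V)).Pairwise (fun s t => Disjoint s t))
    {x y z : V} (hxy : x ≠ y) (hxz : x ≠ z) (hyz : y ≠ z)
    (hxA : x ∈ A) (hyA : y ∈ A) (hzA : z ∈ A)
    (hx : ∃ t ∈ T, x ∈ t) (hy : ∃ t ∈ T, y ∈ t) (hz : ∃ t ∈ T, z ∈ t) : False := by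
  have h := hP T hT hdisj
  have hsub : ({x, y, z} : Finset V) ⊆ A.filter (fun a => ∃ t ∈ T, a ∈ t) := by
    intro w hw
    simp only [Finset.mem_insert, Finset.mem_singleton] at hw
    rcases hw with rfl | rfl | rfl
    · exact Finset.mem_filter.2 ⟨hxA, hx⟩
    · exact Finset.mem_filter.2 ⟨hyA, hy⟩
    · exact Finset.mem_filter.2 ⟨hzA, hz⟩
  have hcard : ({x, y, z} : Finset V).card = 3 := by
    rw [Finset.card_insert_of_notMem (by simp [hxy, hxz]),
      Finset.card_insert_of_notMem (by simp [hyz]), Finset.card_singleton]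
  have := Finset.card_le_card hsub
  omega

lemma pairwise1 (t : Finset V) :
    (({t} : Finset (Finset V)) : Set (Finset V)).Pairwise (fun s t => Disjoint s t) := by
  simp

lemma pairwise2 {t₁ t₂ : Finset V} (h12 : Disjoint t₁ t₂) :
    (({t₁, t₂} : Finset (Finset V)) : Set (Finset V)).Pairwise (fun s t => Disjoint s t) := by
  intro s hs t ht hst
  simp only [Finset.coe_insert, Set.mem_insert_iff, Finset.coe_singleton,
    Set.mem_singleton_iff] at hs ht
  rcases hs with rfl | rfl <;> rcases ht with rfl | rfl
  · exact absurd rfl hst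
  · exact h12
  · exact h12.symm
  · exact absurd rfl hst

lemma pairwise3 {t₁ t₂ t₃ : Finset V} (h12 : Disjoint t₁ t₂) (h13 : Disjoint t₁ t₃)
    (h23 : Disjoint t₂ t₃) :
    (({t₁, t₂, t₃} : Finset (Finset V)) : Set (Finset V)).Pairwise
      (fun s t => Disjoint s t) := by
  intro s hs t ht hst
  simp only [Finset.coe_insert, Set.mem_insert_iff, Finset.coe_singleton,
    Set.mem_singleton_iff] at hs ht
  rcases hs with rfl | rfl | rfl <;> rcases ht with rfl | rfl | rfl <;>
    first
      | exact absurd rfl hst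
      | exact h12 | exact h12.symm | exact h13 | exact h13.symm
      | exact h23 | exact h23.symm

lemma disj_avoid {v : V} {t s : Finset V} (havoid : ∀ b ∈ s, b ∈ t → b = v) (hvs : v ∉ s) :
    Disjoint t s := by
  rw [Finset.disjoint_right]
  intro b hbs hbt
  exact hvs (havoid b hbs hbt ▸ hbs)

/-- arithmetic for case `h < 9a` -/
lemma ARcase1 (n a d : ℕ) (h3 : 3 ≤ a) (h2a : 2 * a ≤ n) (hd1 : d ≤ a) (hd2 : a ≤ d + 2) :
    n * n - n + 2 * (6 * d) ≤
      2 * (a * (n - a) + (n - 2 * a).choose 2 + 6 * n) + 2 * (d * (n - d - 1)) := by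
  obtain ⟨b, hb⟩ : ∃ b, n = 2 * a + b := ⟨n - 2 * a, by omega⟩
  obtain ⟨e, he⟩ : ∃ e, n = d + 1 + e := ⟨n - d - 1, by omega⟩
  have e1 : n - a = a + b := by omega
  have e2 : n - 2 * a = b := by omega
  have e3 : n - d - 1 = e := by omega
  rw [e1, e2, e3]
  have tc := two_choose b
  have hnn : n * n - n + n = n * n := by
    have : n * 1 ≤ n * n := Nat.mul_le_mul_left n (by omega)
    omega
  nlinarith [tc, hnn, sq_nonneg (a - d : ℤ)]

/-- arithmetic for case `h ≥ 9a`, two exempt vertices, no defects -/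
lemma AR4 (n a : ℕ) (h3 : 3 ≤ a) (h2a : 2 * a ≤ n) :
    n * n - n ≤ 2 * ((a - 2) * (n - a + 2) + (n - 2 * a + 4).choose 2)
      + 2 * ((a - 2) * (n - (a - 2) - 1)) := by
  obtain ⟨b, hb⟩ : ∃ b, n = 2 * a + b := ⟨n - 2 * a, by omega⟩
  obtain ⟨c, hc⟩ : ∃ c, a = c + 3 := ⟨a - 3, by omega⟩
  have e1 : n - a + 2 = c + b + 5 := by omega
  have e2 : n - 2 * a + 4 = b + 4 := by omega
  have e3 : n - (a - 2) - 1 = c + b + 4 := by omega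
  have e4 : a - 2 = c + 1 := by omega
  rw [e1, e2, e3, e4]
  have tc := two_choose (b + 4)
  have hnn : n * n - n + n = n * n := by
    have : n * 1 ≤ n * n := Nat.mul_le_mul_left n (by omega)
    omega
  nlinarith [tc, hnn]

/-- arithmetic for case `h ≥ 9a`, one exempt vertex, total defect ≤ 6a -/
lemma AR5 (n a S : ℕ) (h3 : 3 ≤ a) (h9 : 9 * a ≤ n) (hS : S ≤ 6 * a) :
    n * n - n + 2 * S ≤ 2 * ((a - 2) * (n - a + 2) + (n - 2 * a + 4).choose 2)
      + 2 * ((a - 1) * (n - (a - 1) - 1)) := by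
  obtain ⟨b, hb⟩ : ∃ b, n = 2 * a + b := ⟨n - 2 * a, by omega⟩
  obtain ⟨c, hc⟩ : ∃ c, a = c + 3 := ⟨a - 3, by omega⟩
  have e1 : n - a + 2 = c + b + 5 := by omega
  have e2 : n - 2 * a + 4 = b + 4 := by omega
  have e3 : n - (a - 1) - 1 = c + b + 3 := by omega
  have e4 : a - 2 = c + 1 := by omega
  have e5 : a - 1 = c + 2 := by omega
  rw [e1, e2, e3, e4, e5]
  have tc := two_choose (b + 4)
  have hnn : n * n - n + n = n * n := by
    have : n * 1 ≤ n * n := Nat.mul_le_mul_left n (by omega)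
    omega
  nlinarith [tc, hnn]

/-- arithmetic for case `h ≥ 9a`, no exempt vertices, no defects -/
lemma AR6 (n a : ℕ) (h3 : 3 ≤ a) (h2a : 2 * a ≤ n) :
    n * n - n ≤ 2 * ((a - 2) * (n - a + 2) + (n - 2 * a + 4).choose 2)
      + 2 * (a * (n - a - 1)) := by
  obtain ⟨b, hb⟩ : ∃ b, n = 2 * a + b := ⟨n - 2 * a, by omega⟩
  obtain ⟨c, hc⟩ : ∃ c, a = c + 3 := ⟨a - 3, by omega⟩
  have e1 : n - a + 2 = c + b + 5 := by omega
  have e2 : n - 2 * a + 4 = b + 4 := by omega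
  have e3 : n - a - 1 = c + b + 2 := by omega
  have e4 : a - 2 = c + 1 := by omega
  rw [e1, e2, e3, e4]
  have tc := two_choose (b + 4)
  have hnn : n * n - n + n = n * n := by
    have : n * 1 ≤ n * n := Nat.mul_le_mul_left n (by omega)
    omega
  nlinarith [tc, hnn]



/-- final deduction: from a defect-cover to the nonedge bound -/
lemma finish_bound (A' : Finset V) (Z : V → Finset V)
    (hvZ : ∀ v ∈ A', v ∉ Z v)
    (hcov : ∀ v ∈ A', ∀ t, H.IsNClique 3 t → v ∈ t → ∃ w ∈ Z v, w ∈ t) :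
    2 * (A'.card * (Fintype.card V - A'.card - 1))
      ≤ ne2 H (univ : Finset V) + 2 * ∑ v ∈ A', (Z v).card := by
  classical
  have hCZ := CZ (H := H) (Fintype.card V) univ A' Z (by simp) (Finset.subset_univ _) hvZ
    (fun v hv p _ q _ => link_of_cover (hvZ v hv) (hcov v hv) p q)
  rwa [Finset.card_univ] at hCZ

end Stmt10

open Finset Stmt10 in
/-- Lemma 11 -/
theorem stmt10 :
    ∃ κ₀ : ℕ, ∀ (V : Type) [Fintype V] (H : SimpleGraph V) (A : Finset V) (h : ℕ),
      Fintype.card V = h → κ₀ ≤ h → 3 ≤ A.card → 2 * A.card ≤ h →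
      (∀ 𝒯 : Finset (Finset V), (∀ t ∈ 𝒯, H.IsNClique 3 t) →
        (𝒯 : Set (Finset V)).Pairwise (fun s t => Disjoint s t) →
        (A.filter (fun a => ∃ t ∈ 𝒯, a ∈ t)).card ≤ 2) →
      H.edgeFinset.card ≤ pFun h A.card := by
  classical
  use 100
  intro V _ H A h hh hκ ha3 h2a hP
  subst hh
  by_cases hc9 : Fintype.card V < 9 * A.card
  · -- CASE 1 : h < 9a
    rw [pFun, if_pos hc9]
    have case1_finish : ∀ W : Finset V, W.card ≤ 6 → A.card ≤ (A \ W).card + 2 →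
        (∀ v ∈ A \ W, ∀ t, H.IsNClique 3 t → v ∈ t → ∃ w ∈ W, w ∈ t) →
        H.edgeFinset.card ≤ A.card * (Fintype.card V - A.card)
          + (Fintype.card V - 2 * A.card).choose 2 + 6 * Fintype.card V := by
      intro W hW6 hacard hcov
      have hFB := finish_bound (H := H) (A \ W) (fun _ => W)
        (fun v hv => (Finset.mem_sdiff.1 hv).2) hcov
      have hedge := edge_ne2 (H := H)
      simp only [Finset.sum_const, smul_eq_mul] at hFB
      have hd1 : (A \ W).card ≤ A.card := Finset.card_le_card Finset.sdiff_subset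
      have hAR := ARcase1 (Fintype.card V) A.card (A \ W).card ha3 h2a hd1 hacard
      have hSig6 : (A \ W).card * W.card ≤ 6 * (A \ W).card := by
        calc (A \ W).card * W.card ≤ (A \ W).card * 6 := Nat.mul_le_mul_left ((A \ W).card) hW6
          _ = 6 * (A \ W).card := Nat.mul_comm _ _
      omega
    by_cases hB1 : ∃ t₁ t₂ : Finset V, (H.IsNClique 3 t₁ ∧ (t₁ ∩ A).Nonempty) ∧
        (H.IsNClique 3 t₂ ∧ (t₂ ∩ A).Nonempty) ∧ Disjoint t₁ t₂
    · obtain ⟨t₁, t₂, ⟨ht₁, hne₁⟩, ⟨ht₂, hne₂⟩, h12⟩ := hB1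
      obtain ⟨x, hx⟩ := hne₁
      obtain ⟨y, hy⟩ := hne₂
      have hxt₁ : x ∈ t₁ := (Finset.mem_inter.1 hx).1
      have hxA : x ∈ A := (Finset.mem_inter.1 hx).2
      have hyt₂ : y ∈ t₂ := (Finset.mem_inter.1 hy).1
      have hyA : y ∈ A := (Finset.mem_inter.1 hy).2
      have hxy : x ≠ y := fun h => Finset.disjoint_left.1 h12 hxt₁ (h ▸ hyt₂)
      apply case1_finish (t₁ ∪ t₂)
      · calc (t₁ ∪ t₂).card ≤ t₁.card + t₂.card := Finset.card_union_le _ _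
          _ ≤ 6 := by rw [ht₁.card_eq, ht₂.card_eq]
      · -- |A ∩ (t₁ ∪ t₂)| ≤ 2
        have hint : (A ∩ (t₁ ∪ t₂)).card ≤ 2 := by
          by_contra hc
          push_neg at hc
          obtain ⟨z₁, z₂, z₃, hz₁, hz₂, hz₃, h12', h13', h23'⟩ :=
            Finset.two_lt_card_iff.1 hc
          have hmem : ∀ z ∈ A ∩ (t₁ ∪ t₂), ∃ t ∈ ({t₁, t₂} : Finset (Finset V)), z ∈ t := by
            intro z hz
            rcases Finset.mem_union.1 (Finset.mem_inter.1 hz).2 with h | h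
            · exact ⟨t₁, by simp, h⟩
            · exact ⟨t₂, by simp, h⟩
          exact violate hP {t₁, t₂}
            (by intro t ht; rcases Finset.mem_insert.1 ht with rfl | ht
                · exact ht₁
                · rw [Finset.mem_singleton] at ht; exact ht ▸ ht₂)
            (pairwise2 h12) h12' h13' h23'
            (Finset.mem_inter.1 hz₁).1 (Finset.mem_inter.1 hz₂).1 (Finset.mem_inter.1 hz₃).1
            (hmem z₁ hz₁) (hmem z₂ hz₂) (hmem z₃ hz₃)
        have := Finset.card_inter_add_card_sdiff A (t₁ ∪ t₂)
        omega
      · intro v hv t ht hvt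
        by_contra hno
        push_neg at hno
        have hvA : v ∈ A := (Finset.mem_sdiff.1 hv).1
        have hvW : v ∉ t₁ ∪ t₂ := (Finset.mem_sdiff.1 hv).2
        have hd1 : Disjoint t₁ t := Finset.disjoint_right.2
          (fun b hb => fun hb1 => hno b (Finset.mem_union_left _ hb1) hb)
        have hd2 : Disjoint t₂ t := Finset.disjoint_right.2
          (fun b hb => fun hb2 => hno b (Finset.mem_union_right _ hb2) hb)
        have hxv : x ≠ v := fun h => hvW (Finset.mem_union_left _ (h ▸ hxt₁))
        have hyv : y ≠ v := fun h => hvW (Finset.mem_union_right _ (h ▸ hyt₂))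
        exact violate hP {t₁, t₂, t}
          (by intro s hs
              rcases Finset.mem_insert.1 hs with rfl | hs
              · exact ht₁
              rcases Finset.mem_insert.1 hs with rfl | hs
              · exact ht₂
              · rw [Finset.mem_singleton] at hs; exact hs ▸ ht)
          (pairwise3 h12 hd1 hd2) hxy hxv hyv hxA hyA hvA
          ⟨t₁, by simp, hxt₁⟩ ⟨t₂, by simp, hyt₂⟩ ⟨t, by simp, hvt⟩
    · by_cases hB2 : ∃ t₀ : Finset V, H.IsNClique 3 t₀ ∧ (t₀ ∩ A).Nonempty
      · obtain ⟨t₀, ht₀, hne₀⟩ := hB2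
        apply case1_finish t₀
        · rw [ht₀.card_eq]; omega
        · have hint : (A ∩ t₀).card ≤ 2 := by
            by_contra hc
            push_neg at hc
            obtain ⟨z₁, z₂, z₃, hz₁, hz₂, hz₃, h12', h13', h23'⟩ :=
              Finset.two_lt_card_iff.1 hc
            exact violate hP {t₀}
              (by intro t ht; rw [Finset.mem_singleton] at ht; exact ht ▸ ht₀)
              (pairwise1 t₀) h12' h13' h23'
              (Finset.mem_inter.1 hz₁).1 (Finset.mem_inter.1 hz₂).1
              (Finset.mem_inter.1 hz₃).1
              ⟨t₀, by simp, (Finset.mem_inter.1 hz₁).2⟩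
              ⟨t₀, by simp, (Finset.mem_inter.1 hz₂).2⟩
              ⟨t₀, by simp, (Finset.mem_inter.1 hz₃).2⟩
          have := Finset.card_inter_add_card_sdiff A t₀
          omega
        · intro v hv t ht hvt
          by_contra hno
          push_neg at hno
          have hvA : v ∈ A := (Finset.mem_sdiff.1 hv).1
          exact hB1 ⟨t, t₀, ⟨ht, ⟨v, Finset.mem_inter.2 ⟨hvt, hvA⟩⟩⟩, ⟨ht₀, hne₀⟩,
            Finset.disjoint_right.2 (fun b hb hbt => hno b hb hbt)⟩
      · apply case1_finish ∅
        · simp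
        · simp
        · intro v hv t ht hvt
          exact absurd ⟨t, ht, ⟨v, Finset.mem_inter.2 ⟨hvt, (Finset.mem_sdiff.1 hv).1⟩⟩⟩ hB2
  · -- CASE 2 : h ≥ 9a
    rw [pFun, if_neg hc9]

    have h9 : 9 * A.card ≤ Fintype.card V := le_of_not_gt hc9
    -- at most 2 routable vertices of A
    have hR3 : (A.filter fun v => Rout H v).card ≤ 2 := by
      by_contra hc
      push_neg at hc
      obtain ⟨x, y, z, hx, hy, hz, hxy, hxz, hyz⟩ := Finset.two_lt_card_iff.1 hc
      obtain ⟨hxA, hxR⟩ := Finset.mem_filter.1 hx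
      obtain ⟨hyA, hyR⟩ := Finset.mem_filter.1 hy
      obtain ⟨hzA, hzR⟩ := Finset.mem_filter.1 hz
      obtain ⟨t₁, ht₁, hxt₁, hav₁⟩ := rout_avoid x hxR {y, z} (by
        calc ({y, z} : Finset V).card ≤ ({z} : Finset V).card + 1 :=
              Finset.card_insert_le _ _
          _ ≤ 6 := by simp)
      have hyt₁ : y ∉ t₁ := fun h => hxy (hav₁ y (by simp) h).symm
      have hzt₁ : z ∉ t₁ := fun h => hxz (hav₁ z (by simp) h).symm
      obtain ⟨t₂, ht₂, hyt₂, hav₂⟩ := rout_avoid y hyR (t₁ ∪ {z}) (by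
        calc (t₁ ∪ {z}).card ≤ t₁.card + ({z} : Finset V).card := Finset.card_union_le _ _
          _ ≤ 6 := by rw [ht₁.card_eq]; simp)
      have hzt₂ : z ∉ t₂ := fun h => hyz (hav₂ z (Finset.mem_union_right _ (by simp)) h).symm
      have hd21 : Disjoint t₂ t₁ := disj_avoid
        (fun b hb hb2 => hav₂ b (Finset.mem_union_left _ hb) hb2) hyt₁
      obtain ⟨t₃, ht₃, hzt₃, hav₃⟩ := rout_avoid z hzR (t₁ ∪ t₂) (by
        calc (t₁ ∪ t₂).card ≤ t₁.card + t₂.card := Finset.card_union_le _ _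
          _ ≤ 6 := by rw [ht₁.card_eq, ht₂.card_eq])
      have hd31 : Disjoint t₃ t₁ := disj_avoid
        (fun b hb hb3 => hav₃ b (Finset.mem_union_left _ hb) hb3) hzt₁
      have hd32 : Disjoint t₃ t₂ := disj_avoid
        (fun b hb hb3 => hav₃ b (Finset.mem_union_right _ hb) hb3) hzt₂
      exact violate hP {t₁, t₂, t₃}
        (by intro s hs
            rcases Finset.mem_insert.1 hs with rfl | hs
            · exact ht₁
            rcases Finset.mem_insert.1 hs with rfl | hs
            · exact ht₂
            · rw [Finset.mem_singleton] at hs; exact hs ▸ ht₃)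
        (pairwise3 hd21.symm hd31.symm hd32.symm) hxy hxz hyz hxA hyA hzA
        ⟨t₁, by simp, hxt₁⟩ ⟨t₂, by simp, hyt₂⟩ ⟨t₃, by simp, hzt₃⟩
    by_cases hR2 : (A.filter fun v => Rout H v).card = 2
    · -- exactly two routable vertices: nothing else is in a triangle
      obtain ⟨x, y, hxy, hset⟩ := Finset.card_eq_two.1 hR2
      have hxRA : x ∈ A.filter fun v => Rout H v := by rw [hset]; simp
      have hyRA : y ∈ A.filter fun v => Rout H v := by rw [hset]; simp
      obtain ⟨hxA, hxR⟩ := Finset.mem_filter.1 hxRA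
      obtain ⟨hyA, hyR⟩ := Finset.mem_filter.1 hyRA
      have hAtri : ∀ v ∈ A, v ≠ x → v ≠ y → ∀ t, H.IsNClique 3 t → v ∈ t → False := by
        intro v hvA hvx hvy t ht hvt
        by_cases hxt : x ∈ t
        · by_cases hyt : y ∈ t
          · exact violate hP {t}
              (by intro s hs
                  rw [Finset.mem_singleton] at hs
                  exact hs ▸ ht)
              (pairwise1 t) hvx hvy hxy hvA hxA hyA
              ⟨t, by simp, hvt⟩ ⟨t, by simp, hxt⟩ ⟨t, by simp, hyt⟩
          · obtain ⟨ty, hty, hyty, havy⟩ := rout_avoid y hyR t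
              (by rw [ht.card_eq]; omega)
            have hdy : Disjoint ty t := disj_avoid (fun b hb hb2 => havy b hb hb2) hyt
            exact violate hP {t, ty}
              (by intro s hs
                  rcases Finset.mem_insert.1 hs with rfl | hs
                  · exact ht
                  · rw [Finset.mem_singleton] at hs; exact hs ▸ hty)
              (pairwise2 hdy.symm) hvx hvy hxy hvA hxA hyA
              ⟨t, by simp, hvt⟩ ⟨t, by simp, hxt⟩ ⟨ty, by simp, hyty⟩
        · by_cases hyt : y ∈ t
          · obtain ⟨tx, htx, hxtx, havx⟩ := rout_avoid x hxR t
              (by rw [ht.card_eq]; omega)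
            have hdx : Disjoint tx t := disj_avoid (fun b hb hb2 => havx b hb hb2) hxt
            exact violate hP {t, tx}
              (by intro s hs
                  rcases Finset.mem_insert.1 hs with rfl | hs
                  · exact ht
                  · rw [Finset.mem_singleton] at hs; exact hs ▸ htx)
              (pairwise2 hdx.symm) hvx hvy hxy hvA hxA hyA
              ⟨t, by simp, hvt⟩ ⟨tx, by simp, hxtx⟩ ⟨t, by simp, hyt⟩
          · obtain ⟨tx, htx, hxtx, havx⟩ := rout_avoid x hxR (t ∪ {y}) (by
              calc (t ∪ {y}).card ≤ t.card + ({y} : Finset V).card :=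
                    Finset.card_union_le _ _
                _ ≤ 6 := by rw [ht.card_eq]; simp)
            have hytx : y ∉ tx := fun h =>
              hxy (havx y (Finset.mem_union_right _ (by simp)) h).symm
            have hdx : Disjoint tx t := disj_avoid
              (fun b hb hb2 => havx b (Finset.mem_union_left _ hb) hb2) hxt
            obtain ⟨ty, hty, hyty, havy⟩ := rout_avoid y hyR (t ∪ tx) (by
              calc (t ∪ tx).card ≤ t.card + tx.card := Finset.card_union_le _ _
                _ ≤ 6 := by rw [ht.card_eq, htx.card_eq])
            have hdy : Disjoint ty t := disj_avoid
              (fun b hb hb2 => havy b (Finset.mem_union_left _ hb) hb2) hyt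
            have hdxy : Disjoint ty tx := disj_avoid
              (fun b hb hb2 => havy b (Finset.mem_union_right _ hb) hb2) hytx
            exact violate hP {t, tx, ty}
              (by intro s hs
                  rcases Finset.mem_insert.1 hs with rfl | hs
                  · exact ht
                  rcases Finset.mem_insert.1 hs with rfl | hs
                  · exact htx
                  · rw [Finset.mem_singleton] at hs; exact hs ▸ hty)
              (pairwise3 hdx.symm hdy.symm hdxy.symm) hvx hvy hxy hvA hxA hyA
              ⟨t, by simp, hvt⟩ ⟨tx, by simp, hxtx⟩ ⟨ty, by simp, hyty⟩
      have hsub : ({x, y} : Finset V) ⊆ A := by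
        intro w hw
        rcases Finset.mem_insert.1 hw with rfl | hw
        · exact hxA
        · rw [Finset.mem_singleton] at hw; exact hw ▸ hyA
      have hA'card : (A \ {x, y}).card = A.card - 2 := by
        rw [Finset.card_sdiff_of_subset hsub]
        congr 1
        rw [Finset.card_insert_of_notMem (by simp [hxy]), Finset.card_singleton]
      have hFB := finish_bound (H := H) (A \ {x, y}) (fun _ => (∅ : Finset V))
        (fun v _ => Finset.notMem_empty v)
        (fun v hv t ht hvt =>
          (hAtri v (Finset.mem_sdiff.1 hv).1
            (fun h => (Finset.mem_sdiff.1 hv).2 (by rw [h]; simp))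
            (fun h => (Finset.mem_sdiff.1 hv).2 (by rw [h]; simp)) t ht hvt).elim)
      simp only [Finset.sum_const, smul_eq_mul, Finset.card_empty, Nat.mul_zero] at hFB
      rw [hA'card] at hFB
      have hedge := edge_ne2 (H := H)
      have hAR := AR4 (Fintype.card V) A.card ha3 h2a
      omega
    · -- at most one routable vertex
      have hR1 : (A.filter fun v => Rout H v).card ≤ 1 := by omega
      obtain ⟨x, hxA, hother⟩ : ∃ x ∈ A, ∀ v ∈ A, v ≠ x → ¬ Rout H v := by
        rcases Finset.eq_empty_or_nonempty (A.filter fun v => Rout H v) with hRe | ⟨x, hx⟩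
        · obtain ⟨x, hx⟩ := Finset.card_pos.1 (show 0 < A.card by omega)
          refine ⟨x, hx, fun v hv _ hR => ?_⟩
          have hmem : v ∈ A.filter fun v => Rout H v := Finset.mem_filter.2 ⟨hv, hR⟩
          rw [hRe] at hmem
          exact absurd hmem (Finset.notMem_empty v)
        · refine ⟨x, (Finset.mem_filter.1 hx).1, fun v hv hvx hR => hvx ?_⟩
          exact Finset.card_le_one.1 hR1 v (Finset.mem_filter.2 ⟨hv, hR⟩) x hx
      by_cases hB1' : ∃ t₁ t₂ : Finset V, (H.IsNClique 3 t₁ ∧ (t₁ ∩ A).Nonempty) ∧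
          (H.IsNClique 3 t₂ ∧ (t₂ ∩ A).Nonempty) ∧ Disjoint t₁ t₂
      · -- two disjoint A-triangles
        obtain ⟨t₁, t₂, ⟨ht₁, hne₁⟩, ⟨ht₂, hne₂⟩, h12⟩ := hB1'
        obtain ⟨x₁, hx₁⟩ := hne₁
        obtain ⟨y₁, hy₁⟩ := hne₂
        have hx₁t : x₁ ∈ t₁ := (Finset.mem_inter.1 hx₁).1
        have hx₁A : x₁ ∈ A := (Finset.mem_inter.1 hx₁).2
        have hy₁t : y₁ ∈ t₂ := (Finset.mem_inter.1 hy₁).1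
        have hy₁A : y₁ ∈ A := (Finset.mem_inter.1 hy₁).2
        have hx₁y₁ : x₁ ≠ y₁ := fun h => Finset.disjoint_left.1 h12 hx₁t (h ▸ hy₁t)
        have hAW : ∀ z ∈ A, z ∈ t₁ ∪ t₂ → z = x₁ ∨ z = y₁ := by
          intro z hzA hzW
          by_contra hzc
          push_neg at hzc
          have hzmem : ∃ t ∈ ({t₁, t₂} : Finset (Finset V)), z ∈ t := by
            rcases Finset.mem_union.1 hzW with h | h
            · exact ⟨t₁, by simp, h⟩
            · exact ⟨t₂, by simp, h⟩
          exact violate hP {t₁, t₂}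
            (by intro s hs
                rcases Finset.mem_insert.1 hs with rfl | hs
                · exact ht₁
                · rw [Finset.mem_singleton] at hs; exact hs ▸ ht₂)
            (pairwise2 h12) hx₁y₁ (Ne.symm hzc.1) (Ne.symm hzc.2) hx₁A hy₁A hzA
            ⟨t₁, by simp, hx₁t⟩ ⟨t₂, by simp, hy₁t⟩ hzmem
        have main2d : ∀ (s₁ s₂ : Finset V) (e₀ s₀ : V), H.IsNClique 3 s₁ →
            H.IsNClique 3 s₂ → Disjoint s₁ s₂ → e₀ ∈ s₁ → e₀ ∈ A → s₀ ∈ s₂ → s₀ ∈ A →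
            (∀ z ∈ A, z ∈ s₁ ∪ s₂ → z = e₀ ∨ z = s₀) → ¬ Rout H s₀ →
            H.edgeFinset.card ≤ (A.card - 2) * (Fintype.card V - A.card + 2)
              + (Fintype.card V - 2 * A.card + 4).choose 2 := by
          intro s₁ s₂ e₀ s₀ hs₁ hs₂ hd12 he₀s hE₀A hs₀s hs₀A hAW' hs₀R
          have he₀s₀ : e₀ ≠ s₀ := fun h => Finset.disjoint_left.1 hd12 he₀s (h ▸ hs₀s)
          set Zf : V → Finset V :=
            fun v => if v = s₀ then Zfl H s₀ else s₁ ∪ s₂ with hZf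
          have hZfs : Zf s₀ = Zfl H s₀ := by simp [hZf]
          have hZfo : ∀ v, v ≠ s₀ → Zf v = s₁ ∪ s₂ := fun v hv => by simp [hZf, hv]
          have hvZ : ∀ v ∈ A.erase e₀, v ∉ Zf v := by
            intro v hv
            by_cases hvs : v = s₀
            · rw [hvs, hZfs]
              exact Zfl_not_mem _
            · rw [hZfo v hvs]
              intro hvW
              rcases hAW' v (Finset.mem_of_mem_erase hv) hvW with h | h
              · exact (Finset.ne_of_mem_erase hv) h
              · exact hvs h
          have hcov : ∀ v ∈ A.erase e₀, ∀ t, H.IsNClique 3 t → v ∈ t →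
              ∃ w ∈ Zf v, w ∈ t := by
            intro v hv t ht hvt
            by_cases hvs : v = s₀
            · obtain ⟨w, hwZ, hwt, _⟩ := Zfl_cover s₀ t ht (hvs ▸ hvt)
              exact ⟨w, by rw [hvs, hZfs]; exact hwZ, hwt⟩
            · rw [hZfo v hvs]
              by_contra hno
              push_neg at hno
              have hvA : v ∈ A := Finset.mem_of_mem_erase hv
              have hve₀ : v ≠ e₀ := Finset.ne_of_mem_erase hv
              have hd1 : Disjoint s₁ t := Finset.disjoint_right.2
                (fun b hb hb1 => hno b (Finset.mem_union_left _ hb1) hb)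
              have hd2 : Disjoint s₂ t := Finset.disjoint_right.2
                (fun b hb hb2 => hno b (Finset.mem_union_right _ hb2) hb)
              exact (violate hP {s₁, s₂, t}
                (by intro s hs
                    rcases Finset.mem_insert.1 hs with rfl | hs
                    · exact hs₁
                    rcases Finset.mem_insert.1 hs with rfl | hs
                    · exact hs₂
                    · rw [Finset.mem_singleton] at hs; exact hs ▸ ht)
                (pairwise3 hd12 hd1 hd2) he₀s₀ (Ne.symm hve₀) (Ne.symm hvs)
                hE₀A hs₀A hvA
                ⟨s₁, by simp, he₀s⟩ ⟨s₂, by simp, hs₀s⟩ ⟨t, by simp, hvt⟩).elim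
          have hFB := finish_bound (H := H) (A.erase e₀) Zf hvZ hcov
          have hs₀A' : s₀ ∈ A.erase e₀ :=
            Finset.mem_erase.2 ⟨fun h => he₀s₀ h.symm, hs₀A⟩
          have hSig : ∑ v ∈ A.erase e₀, (Zf v).card ≤ 6 * A.card := by
            rw [← Finset.sum_erase_add _ _ hs₀A']
            have h1 : ∑ v ∈ (A.erase e₀).erase s₀, (Zf v).card
                ≤ ((A.erase e₀).erase s₀).card * 6 := by
              rw [← smul_eq_mul]
              apply Finset.sum_le_card_nsmul
              intro v hv
              rw [hZfo v (Finset.ne_of_mem_erase hv)]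
              calc (s₁ ∪ s₂).card ≤ s₁.card + s₂.card := Finset.card_union_le _ _
                _ ≤ 6 := by rw [hs₁.card_eq, hs₂.card_eq]
            have h2 : (Zf s₀).card ≤ 12 := by
              rw [hZfs]
              exact Zfl_card s₀ hs₀R
            have h3 : ((A.erase e₀).erase s₀).card ≤ A.card - 2 := by
              rw [Finset.card_erase_of_mem hs₀A', Finset.card_erase_of_mem hE₀A]
              omega
            omega
          have hcerase : (A.erase e₀).card = A.card - 1 := Finset.card_erase_of_mem hE₀A
          have hedge := edge_ne2 (H := H)
          have hAR := AR5 (Fintype.card V) A.card (∑ v ∈ A.erase e₀, (Zf v).card)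
            ha3 h9 (by omega)
          rw [hcerase] at hFB
          omega
        by_cases hxx : x = y₁
        · exact main2d t₂ t₁ y₁ x₁ ht₂ ht₁ h12.symm hy₁t hy₁A hx₁t hx₁A
            (fun z hz hzw => (hAW z hz (by rwa [Finset.union_comm] at hzw)).symm)
            (hother x₁ hx₁A (fun h => hx₁y₁ (h.trans hxx)))
        · exact main2d t₁ t₂ x₁ y₁ ht₁ ht₂ h12 hx₁t hx₁A hy₁t hy₁A hAW
            (hother y₁ hy₁A (fun h => hxx h.symm))
      · by_cases hB2' : ∃ t₀ : Finset V, H.IsNClique 3 t₀ ∧ (t₀ ∩ A).Nonempty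
        · -- all A-triangles pairwise intersect; fix one
          obtain ⟨t₀, ht₀, hne₀⟩ := hB2'
          obtain ⟨w₀, hw₀⟩ := hne₀
          have hw₀t : w₀ ∈ t₀ := (Finset.mem_inter.1 hw₀).1
          have hw₀A : w₀ ∈ A := (Finset.mem_inter.1 hw₀).2
          set x₂ := if x ∈ t₀ then x else w₀ with hx₂def
          have hx₂t : x₂ ∈ t₀ := by
            rw [hx₂def]; split_ifs with h
            · exact h
            · exact hw₀t
          have hx₂A : x₂ ∈ A := by
            rw [hx₂def]; split_ifs
            · exact hxA
            · exact hw₀A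
          have hnRt₀ : ∀ v ∈ A, v ≠ x₂ → v ∈ t₀ → ¬ Rout H v := by
            intro v hvA hvx₂ hvt hR
            refine hother v hvA ?_ hR
            intro hvx
            rw [hx₂def, if_pos (hvx ▸ hvt)] at hvx₂
            exact hvx₂ hvx
          have hAt₀ : (A ∩ t₀).card ≤ 2 := by
            by_contra hc
            push_neg at hc
            obtain ⟨z₁, z₂, z₃, hz₁, hz₂, hz₃, h12', h13', h23'⟩ :=
              Finset.two_lt_card_iff.1 hc
            exact violate hP {t₀}
              (by intro t ht; rw [Finset.mem_singleton] at ht; exact ht ▸ ht₀)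
              (pairwise1 t₀) h12' h13' h23'
              (Finset.mem_inter.1 hz₁).1 (Finset.mem_inter.1 hz₂).1
              (Finset.mem_inter.1 hz₃).1
              ⟨t₀, by simp, (Finset.mem_inter.1 hz₁).2⟩
              ⟨t₀, by simp, (Finset.mem_inter.1 hz₂).2⟩
              ⟨t₀, by simp, (Finset.mem_inter.1 hz₃).2⟩
          set Zf : V → Finset V := fun v => if v ∈ t₀ then Zfl H v else t₀ with hZf
          have hZfin : ∀ v, v ∈ t₀ → Zf v = Zfl H v := fun v hv => by simp [hZf, hv]
          have hZfout : ∀ v, v ∉ t₀ → Zf v = t₀ := fun v hv => by simp [hZf, hv]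
          have hvZ : ∀ v ∈ A.erase x₂, v ∉ Zf v := by
            intro v _
            by_cases hvt₀ : v ∈ t₀
            · rw [hZfin v hvt₀]; exact Zfl_not_mem _
            · rw [hZfout v hvt₀]; exact hvt₀
          have hcov : ∀ v ∈ A.erase x₂, ∀ t, H.IsNClique 3 t → v ∈ t →
              ∃ w ∈ Zf v, w ∈ t := by
            intro v hv t ht hvt
            by_cases hvt₀ : v ∈ t₀
            · obtain ⟨w, hwZ, hwt, _⟩ := Zfl_cover v t ht hvt
              exact ⟨w, by rw [hZfin v hvt₀]; exact hwZ, hwt⟩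
            · rw [hZfout v hvt₀]
              by_contra hno
              push_neg at hno
              exact hB1' ⟨t, t₀, ⟨ht, ⟨v, Finset.mem_inter.2
                ⟨hvt, Finset.mem_of_mem_erase hv⟩⟩⟩, ⟨ht₀, ⟨w₀, hw₀⟩⟩,
                Finset.disjoint_right.2 (fun b hb hbt => hno b hb hbt)⟩
          have hFB := finish_bound (H := H) (A.erase x₂) Zf hvZ hcov
          have hSig : ∑ v ∈ A.erase x₂, (Zf v).card ≤ 6 * A.card := by
            have hsplit := Finset.sum_filter_add_sum_filter_not (A.erase x₂)
              (fun v => v ∈ t₀) (fun v => (Zf v).card)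
            have h1 : ∑ v ∈ (A.erase x₂).filter (fun v => v ∈ t₀), (Zf v).card
                ≤ ((A.erase x₂).filter (fun v => v ∈ t₀)).card * 12 := by
              rw [← smul_eq_mul]
              apply Finset.sum_le_card_nsmul
              intro v hv
              obtain ⟨hv', hvt₀⟩ := Finset.mem_filter.1 hv
              rw [hZfin v hvt₀]
              exact Zfl_card v (hnRt₀ v (Finset.mem_of_mem_erase hv')
                (Finset.ne_of_mem_erase hv') hvt₀)
            have hc1 : ((A.erase x₂).filter (fun v => v ∈ t₀)).card ≤ 1 := by
              have hsub1 : (A.erase x₂).filter (fun v => v ∈ t₀) ⊆ (A ∩ t₀).erase x₂ := by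
                intro v hv
                obtain ⟨hv', hvt₀⟩ := Finset.mem_filter.1 hv
                exact Finset.mem_erase.2 ⟨Finset.ne_of_mem_erase hv',
                  Finset.mem_inter.2 ⟨Finset.mem_of_mem_erase hv', hvt₀⟩⟩
              have := Finset.card_le_card hsub1
              have hx₂m : x₂ ∈ A ∩ t₀ := Finset.mem_inter.2 ⟨hx₂A, hx₂t⟩
              have := Finset.card_erase_of_mem hx₂m
              omega
            have h2 : ∑ v ∈ (A.erase x₂).filter (fun v => ¬ v ∈ t₀), (Zf v).card
                ≤ ((A.erase x₂).filter (fun v => ¬ v ∈ t₀)).card * 3 := by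
              rw [← smul_eq_mul]
              apply Finset.sum_le_card_nsmul
              intro v hv
              obtain ⟨hv', hvt₀⟩ := Finset.mem_filter.1 hv
              rw [hZfout v hvt₀, ht₀.card_eq]
            have hc2 : ((A.erase x₂).filter (fun v => ¬ v ∈ t₀)).card ≤ A.card - 1 := by
              calc ((A.erase x₂).filter (fun v => ¬ v ∈ t₀)).card
                  ≤ (A.erase x₂).card := Finset.card_filter_le _ _
                _ = A.card - 1 := Finset.card_erase_of_mem hx₂A
            omega
          have hcerase : (A.erase x₂).card = A.card - 1 := Finset.card_erase_of_mem hx₂A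
          have hedge := edge_ne2 (H := H)
          have hAR := AR5 (Fintype.card V) A.card (∑ v ∈ A.erase x₂, (Zf v).card)
            ha3 h9 (by omega)
          rw [hcerase] at hFB
          omega
        · -- no triangle meets A at all
          have hFB := finish_bound (H := H) A (fun _ => (∅ : Finset V))
            (fun v _ => Finset.notMem_empty v)
            (fun v hv t ht hvt =>
              (hB2' ⟨t, ht, ⟨v, Finset.mem_inter.2 ⟨hvt, hv⟩⟩⟩).elim)
          simp only [Finset.sum_const, smul_eq_mul, Finset.card_empty, Nat.mul_zero] at hFB
          have hedge := edge_ne2 (H := H)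
          have hAR := AR6 (Fintype.card V) A.card ha3 h2a
          omega
end

section
/- Let H be a graph on h vertices and A' ⊆ V(H) such that no triangle of H intersects A', with |A'| = a−2 and a ≤ h/9. Then e(H) ≤ max over integers s of [ C(h−a+2−s, 2) + s(h−s) ], and this maximum over integers s equals the value at s = a−1 (equivalently at s = a−2), which is (a−2)(h−a+2) + C(h−2a+4, 2). -/
open scoped Classical
open Finset

private lemma two_choose' (n : ℕ) : 2 * n.choose 2 = n * (n - 1) := by
  rw [Nat.choose_two_right, Nat.two_mul_div_two_of_even (Nat.even_mul_pred_self n)]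

private lemma kk1 (k : ℕ) : k * (k + 1) = 2 * k.choose 2 + 2 * k := by
  rcases k with _ | n
  · simp
  · rw [two_choose', Nat.add_sub_cancel]
    ring

private lemma consec (s x : ℕ) : 0 ≤ ((s : ℤ) - x) * ((s : ℤ) - x - 1) := by
  rcases le_or_gt (s : ℤ) x with hh | hh
  · exact mul_nonneg_iff.mpr (Or.inr ⟨by omega, by omega⟩)
  · exact mul_nonneg (by omega) (by omega)

private lemma arith2 (x y s : ℕ) (hs : s ≤ x + 2) :
    (8*x+18+y - s).choose 2 + s * (9*x+18+y - s) ≤ x * (8*x+18+y) + (7*x+y+18).choose 2 := by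
  refine Nat.le_of_mul_le_mul_left ?_ (show 0 < 2 by norm_num)
  rw [Nat.mul_add 2 ((8*x+18+y - s).choose 2) (s * (9*x+18+y - s)),
    Nat.mul_add 2 (x * (8*x+18+y)) ((7*x+y+18).choose 2), two_choose', two_choose']
  have h1 : s ≤ 8*x+18+y := by omega
  have h2 : s ≤ 9*x+18+y := by omega
  have h3 : 1 ≤ 8*x+18+y - s := by omega
  have h4 : (1:ℕ) ≤ 7*x+y+18 := by omega
  zify [h1, h2, h3, h4]
  nlinarith [consec s x]

private lemma arith3 (x y : ℕ) :
    (7*x+y+17).choose 2 + (x+1) * (8*x+17+y) = x * (8*x+18+y) + (7*x+y+18).choose 2 := by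
  refine Nat.eq_of_mul_eq_mul_left (show 0 < 2 by norm_num) ?_
  rw [Nat.mul_add 2 ((7*x+y+17).choose 2) ((x+1) * (8*x+17+y)),
    Nat.mul_add 2 (x * (8*x+18+y)) ((7*x+y+18).choose 2), two_choose', two_choose']
  rw [show 7*x+y+17 - 1 = 7*x+y+16 from by omega, show 7*x+y+18 - 1 = 7*x+y+17 from by omega]
  ring

private lemma arithMain (x y : ℕ) :
    2 * (9*x+18+y).choose 2
      = 2*(x*(8*x+18+y)) + 2*((7*x+y+18).choose 2) + 2*(x*(8*x+17+y)) := by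
  rw [two_choose' (9*x+18+y), two_choose' (7*x+y+18)]
  rw [show 9*x+18+y - 1 = 9*x+17+y from by omega, show 7*x+y+18 - 1 = 7*x+y+17 from by omega]
  ring

private lemma pairLemma {ι W : Type*} (R : ι → ι → Prop) (hsym : Symmetric R) :
    ∀ (n : ℕ) (K : Finset ι) (N : ι → Finset W),
      K.card + ∑ i ∈ K, (N i).card ≤ n →
      (∀ i ∈ K, ∀ j ∈ K, R i j → Disjoint (N i) (N j)) →
      2 * (∑ i ∈ K, (N i).card) + (∑ i ∈ K, ((K.erase i).filter (R i)).card) ≤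
        2 * (K.biUnion fun i => (N i).powersetCard 2).card + K.card * (K.card + 1) := by
  intro n
  induction n with
  | zero =>
    intro K N hm _
    have hK : K = ∅ := card_eq_zero.mp (by omega)
    subst hK; simp
  | succ n ih =>
    intro K N hm hdis
    rcases K.eq_empty_or_nonempty with hK | hK
    · subst hK; simp
    by_cases hA : ∃ i ∈ K, (N i).card + ((K.erase i).filter (R i)).card ≤
        (((N i).powersetCard 2) \ ((K.erase i).biUnion fun j => (N j).powersetCard 2)).card
        + K.card
    · -- Move A : drop the index i
      obtain ⟨i, hiK, hcond⟩ := hA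
      have hiK' : i ∉ K.erase i := notMem_erase i K
      have hins : K = insert i (K.erase i) := (insert_erase hiK).symm
      have hU : (K.biUnion fun j => (N j).powersetCard 2).card
          = (((N i).powersetCard 2) \ ((K.erase i).biUnion fun j => (N j).powersetCard 2)).card
            + ((K.erase i).biUnion fun j => (N j).powersetCard 2).card := by
        conv_lhs => rw [hins]
        rw [biUnion_insert, ← card_sdiff_add_card]
      have hSum : ∑ j ∈ K, (N j).card = (N i).card + ∑ j ∈ K.erase i, (N j).card :=
        (Finset.add_sum_erase K _ hiK).symm
      -- degree sum splitting
      have hD : ∑ j ∈ K, ((K.erase j).filter (R j)).card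
          = (∑ j ∈ K.erase i, (((K.erase i).erase j).filter (R j)).card)
            + 2 * (((K.erase i).filter (R i)).card) := by
        have step1 : ∑ j ∈ K, ((K.erase j).filter (R j)).card
            = ((K.erase i).filter (R i)).card
              + ∑ j ∈ K.erase i, ((K.erase j).filter (R j)).card :=
          (Finset.add_sum_erase K _ hiK).symm
        have step2 : ∀ j ∈ K.erase i, ((K.erase j).filter (R j)).card
            = (((K.erase i).erase j).filter (R j)).card + (if R j i then 1 else 0) := by
          intro j hj
          have hji : j ≠ i := (mem_erase.mp hj).1
          have hjK : j ∈ K := (mem_erase.mp hj).2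
          have hKj : K.erase j = insert i ((K.erase i).erase j) := by
            ext x
            simp only [mem_erase, mem_insert]
            constructor
            · rintro ⟨hxj, hxK⟩
              by_cases hxi : x = i
              · exact Or.inl hxi
              · exact Or.inr ⟨hxj, hxi, hxK⟩
            · rintro (rfl | ⟨hxj, hxi, hxK⟩)
              · exact ⟨Ne.symm hji, hiK⟩
              · exact ⟨hxj, hxK⟩
          rw [hKj, filter_insert]
          by_cases hRji : R j i
          · rw [if_pos hRji, if_pos hRji, card_insert_of_notMem]
            intro hmem
            exact (notMem_erase i K) (mem_of_mem_erase (mem_of_mem_filter _ hmem))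
          · rw [if_neg hRji, if_neg hRji, Nat.add_zero]
        have step3 : ∑ j ∈ K.erase i, ((K.erase j).filter (R j)).card
            = (∑ j ∈ K.erase i, (((K.erase i).erase j).filter (R j)).card)
              + ∑ j ∈ K.erase i, (if R j i then 1 else 0) := by
          rw [← Finset.sum_add_distrib]
          exact Finset.sum_congr rfl step2
        have step4 : ∑ j ∈ K.erase i, (if R j i then 1 else 0)
            = ((K.erase i).filter (R i)).card := by
          rw [Finset.card_filter]
          apply Finset.sum_congr rfl
          intro j _
          by_cases hRji : R j i
          · rw [if_pos hRji, if_pos (hsym hRji)]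
          · rw [if_neg hRji, if_neg (fun hc => hRji (hsym hc))]
        omega
      have hcard : K.card = (K.erase i).card + 1 := by
        rw [card_erase_of_mem hiK]
        have := card_pos.mpr hK
        omega
      have hm' : (K.erase i).card + ∑ j ∈ K.erase i, (N j).card ≤ n := by omega
      have hdis' : ∀ x ∈ K.erase i, ∀ y ∈ K.erase i, R x y → Disjoint (N x) (N y) :=
        fun x hx y hy => hdis x (mem_of_mem_erase hx) y (mem_of_mem_erase hy)
      have IH := ih (K.erase i) N hm' hdis'
      have hsq : K.card * (K.card + 1) = (K.erase i).card * ((K.erase i).card + 1) + 2 * K.card := by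
        rw [hcard]; ring
      omega
    · -- Move B : delete an element v from all sets
      push_neg at hA
      have hdeg : ∀ i ∈ K, ((K.erase i).filter (R i)).card + 1 ≤ K.card := by
        intro i hi
        have h1 : ((K.erase i).filter (R i)).card ≤ (K.erase i).card := card_filter_le _ _
        have h2 : (K.erase i).card = K.card - 1 := card_erase_of_mem hi
        have := card_pos.mpr ⟨i, hi⟩
        omega
      obtain ⟨i₀, hi₀⟩ := hK
      have hN₀ : (N i₀).Nonempty := by
        rcases (N i₀).eq_empty_or_nonempty with h | h
        · exfalso
          have h1 := hA i₀ hi₀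
          have h2 := hdeg i₀ hi₀
          rw [h] at h1
          simp only [card_empty, Nat.zero_add] at h1
          omega
        · exact h
      obtain ⟨v, hv⟩ := hN₀
      have hi₀X : i₀ ∈ K.filter (fun i => v ∈ N i) := mem_filter.mpr ⟨hi₀, hv⟩
      have hvg : v ∈ (K.filter (fun i => v ∈ N i)).biUnion N := mem_biUnion.mpr ⟨i₀, hi₀X, hv⟩
      have hXpos : 1 ≤ (K.filter (fun i => v ∈ N i)).card :=
        Nat.one_le_iff_ne_zero.mpr (card_ne_zero_of_mem hi₀X)
      -- key claim
      have hg : (K.filter (fun i => v ∈ N i)).card + 1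
          ≤ ((K.filter (fun i => v ∈ N i)).biUnion N).card := by
        by_contra hg'
        push_neg at hg'
        have hm0 : (N i₀).card ≤ ((K.filter (fun i => v ∈ N i)).biUnion N).card :=
          card_le_card (subset_biUnion_of_mem N hi₀X)
        have hdisj : Disjoint ((K.erase i₀).filter (R i₀))
            ((K.filter (fun i => v ∈ N i)).erase i₀) := by
          rw [disjoint_left]
          intro j hj hjX
          have hjR : R i₀ j := (mem_filter.mp hj).2
          have hjK : j ∈ K := mem_of_mem_erase (mem_filter.mp hj).1
          have hd : Disjoint (N i₀) (N j) := hdis i₀ hi₀ j hjK hjR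
          have hvj : v ∈ N j := (mem_filter.mp (mem_of_mem_erase hjX)).2
          exact (disjoint_left.mp hd hv) hvj
        have hsub2 : (K.erase i₀).filter (R i₀) ∪ (K.filter (fun i => v ∈ N i)).erase i₀
            ⊆ K.erase i₀ := by
          apply union_subset (filter_subset _ _)
          intro j hj
          exact mem_erase.mpr ⟨(mem_erase.mp hj).1, filter_subset _ _ (mem_of_mem_erase hj)⟩
        have hcards : ((K.erase i₀).filter (R i₀)).card
            + ((K.filter (fun i => v ∈ N i)).erase i₀).card ≤ (K.erase i₀).card := by
          rw [← card_union_of_disjoint hdisj]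
          exact card_le_card hsub2
        have hXe : ((K.filter (fun i => v ∈ N i)).erase i₀).card
            = (K.filter (fun i => v ∈ N i)).card - 1 := card_erase_of_mem hi₀X
        have hKe : (K.erase i₀).card = K.card - 1 := card_erase_of_mem hi₀
        have h1 := hA i₀ hi₀
        have hKpos : 1 ≤ K.card := card_pos.mpr ⟨i₀, hi₀⟩
        have hXK : (K.filter (fun i => v ∈ N i)).card ≤ K.card := card_filter_le _ _
        omega
      -- remove v from all the sets
      have hdis' : ∀ x ∈ K, ∀ y ∈ K, R x y → Disjoint ((N x).erase v) ((N y).erase v) := by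
        intro x hx y hy hR
        exact Disjoint.mono (erase_subset _ _) (erase_subset _ _) (hdis x hx y hy hR)
      have hSum' : ∑ i ∈ K, (N i).card
          = (∑ i ∈ K, ((N i).erase v).card) + (K.filter (fun i => v ∈ N i)).card := by
        rw [Finset.card_filter, ← Finset.sum_add_distrib]
        apply Finset.sum_congr rfl
        intro i _
        by_cases hvi : v ∈ N i
        · rw [if_pos hvi, card_erase_of_mem hvi]
          have := card_pos.mpr ⟨v, hvi⟩
          omega
        · rw [if_neg hvi, erase_eq_of_notMem hvi]
          omega
      have hm' : K.card + ∑ i ∈ K, ((N i).erase v).card ≤ n := by omega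
      have IH := ih K (fun i => (N i).erase v) hm' hdis'
      beta_reduce at IH
      -- card of union decomposition
      have hfilt : (K.biUnion fun i => ((N i).erase v).powersetCard 2)
          = (K.biUnion fun i => (N i).powersetCard 2).filter (fun p => v ∉ p) := by
        ext p
        simp only [mem_biUnion, mem_filter, mem_powersetCard]
        constructor
        · rintro ⟨i, hi, hsub, hc⟩
          obtain ⟨h1, h2⟩ := (Finset.subset_erase).mp hsub
          exact ⟨⟨i, hi, h1, hc⟩, h2⟩
        · rintro ⟨⟨i, hi, hsub, hc⟩, hvp⟩
          exact ⟨i, hi, (Finset.subset_erase).mpr ⟨hsub, hvp⟩, hc⟩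
      have hcardv : ((K.biUnion fun i => (N i).powersetCard 2).filter (fun p => v ∈ p)).card
          = (((K.filter (fun i => v ∈ N i)).biUnion N).erase v).card := by
        symm
        apply Finset.card_bij (fun u _ => insert u {v})
        · intro u hu
          obtain ⟨huv, hug⟩ := mem_erase.mp hu
          obtain ⟨j, hjX, hujN⟩ := mem_biUnion.mp hug
          obtain ⟨hjK, hvjN⟩ := mem_filter.mp hjX
          apply mem_filter.mpr
          constructor
          · apply mem_biUnion.mpr
            refine ⟨j, hjK, ?_⟩
            apply mem_powersetCard.mpr
            constructor
            · exact insert_subset hujN (singleton_subset_iff.mpr hvjN)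
            · rw [card_insert_of_notMem (by simp [huv]), card_singleton]
          · simp
        · intro u hu u' hu' heq
          have : u ∈ insert u' ({v} : Finset W) := by
            rw [← heq]; exact mem_insert_self u {v}
          rcases mem_insert.mp this with h | h
          · exact h
          · exact absurd (mem_singleton.mp h) (mem_erase.mp hu).1
        · intro p hp
          obtain ⟨hpU, hvp⟩ := mem_filter.mp hp
          obtain ⟨j, hjK, hpj⟩ := mem_biUnion.mp hpU
          obtain ⟨hpsub, hp2⟩ := mem_powersetCard.mp hpj
          obtain ⟨x, y, hxy, hpxy⟩ := Finset.card_eq_two.mp hp2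
          have hvjN : v ∈ N j := hpsub hvp
          have hjX : j ∈ K.filter (fun i => v ∈ N i) := mem_filter.mpr ⟨hjK, hvjN⟩
          rcases mem_insert.mp (by rw [hpxy] at hvp; exact hvp) with hvx | hvy
          · -- v = x, take u = y
            subst hvx
            refine ⟨y, ?_, ?_⟩
            · apply mem_erase.mpr
              refine ⟨hxy.symm, ?_⟩
              exact mem_biUnion.mpr ⟨j, hjX, hpsub (by rw [hpxy]; simp)⟩
            · rw [hpxy]
              exact Finset.pair_comm y v
          · -- v = y
            have hvy' : v = y := mem_singleton.mp hvy
            subst hvy'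
            refine ⟨x, ?_, ?_⟩
            · apply mem_erase.mpr
              refine ⟨hxy, ?_⟩
              exact mem_biUnion.mpr ⟨j, hjX, hpsub (by rw [hpxy]; simp)⟩
            · rw [hpxy]
      have hsplit : ((K.biUnion fun i => (N i).powersetCard 2).filter (fun p => v ∈ p)).card
          + ((K.biUnion fun i => (N i).powersetCard 2).filter (fun p => v ∉ p)).card
          = (K.biUnion fun i => (N i).powersetCard 2).card :=
        Finset.card_filter_add_card_filter_not _
      have hge : (((K.filter (fun i => v ∈ N i)).biUnion N).erase v).card
          = ((K.filter (fun i => v ∈ N i)).biUnion N).card - 1 := card_erase_of_mem hvg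
      rw [hfilt] at IH
      omega

private lemma prodFilterCard {V : Type*} (s t : Finset V) (p : V → V → Prop) :
    ((s ×ˢ t).filter (fun z => p z.1 z.2)).card = ∑ x ∈ s, (t.filter (p x)).card := by
  rw [Finset.card_eq_sum_card_fiberwise
    (f := Prod.fst) (t := s) (fun z hz => (Finset.mem_product.mp (mem_of_mem_filter _ hz)).1)]
  apply Finset.sum_congr rfl
  intro x hx
  apply Finset.card_bij (fun z _ => z.2)
  · intro z hz
    obtain ⟨hz1, hz2⟩ := mem_filter.mp hz
    obtain ⟨hz3, hz4⟩ := mem_filter.mp hz1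
    obtain ⟨_, hzt⟩ := Finset.mem_product.mp hz3
    exact mem_filter.mpr ⟨hzt, by rwa [hz2] at hz4⟩
  · intro z hz z' hz' heq
    have h1 : z.1 = x := (mem_filter.mp hz).2
    have h2 : z'.1 = x := (mem_filter.mp hz').2
    exact Prod.ext (h1.trans h2.symm) heq
  · intro y hy
    obtain ⟨hyt, hpy⟩ := mem_filter.mp hy
    refine ⟨(x, y), ?_, rfl⟩
    exact mem_filter.mpr ⟨mem_filter.mpr ⟨Finset.mem_product.mpr ⟨hx, hyt⟩, hpy⟩, rfl⟩

private lemma count2 {V : Type*} (G : SimpleGraph V) (s : Finset V) :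
    2 * ((s.powersetCard 2).filter (fun p => ∃ u ∈ p, ∃ w ∈ p, G.Adj u w)).card
      = ∑ x ∈ s, ((s.erase x).filter (G.Adj x)).card := by
  have step1 : (s.offDiag.filter (fun z => G.Adj z.1 z.2)).card
      = ∑ x ∈ s, ((s.erase x).filter (G.Adj x)).card := by
    rw [Finset.card_eq_sum_card_fiberwise
      (f := Prod.fst) (t := s)
      (fun z hz => (Finset.mem_offDiag.mp (mem_of_mem_filter _ hz)).1)]
    apply Finset.sum_congr rfl
    intro x hx
    apply Finset.card_bij (fun z _ => z.2)
    · intro z hz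
      obtain ⟨hz1, hz2⟩ := mem_filter.mp hz
      obtain ⟨hz3, hz4⟩ := mem_filter.mp hz1
      obtain ⟨_, hzs, hzne⟩ := Finset.mem_offDiag.mp hz3
      refine mem_filter.mpr ⟨mem_erase.mpr ⟨?_, hzs⟩, by rwa [hz2] at hz4⟩
      rw [← hz2]; exact fun hc => hzne hc.symm
    · intro z hz z' hz' heq
      have h1 : z.1 = x := (mem_filter.mp hz).2
      have h2 : z'.1 = x := (mem_filter.mp hz').2
      exact Prod.ext (h1.trans h2.symm) heq
    · intro y hy
      obtain ⟨hyt, hpy⟩ := mem_filter.mp hy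
      obtain ⟨hyx, hys⟩ := mem_erase.mp hyt
      refine ⟨(x, y), ?_, rfl⟩
      exact mem_filter.mpr ⟨mem_filter.mpr
        ⟨Finset.mem_offDiag.mpr ⟨hx, hys, fun hc => hyx hc.symm⟩, hpy⟩, rfl⟩
  have step2 : (s.offDiag.filter (fun z => G.Adj z.1 z.2)).card
      = 2 * ((s.powersetCard 2).filter (fun p => ∃ u ∈ p, ∃ w ∈ p, G.Adj u w)).card := by
    rw [Finset.card_eq_sum_card_fiberwise
      (f := fun z => ({z.1, z.2} : Finset V))
      (t := (s.powersetCard 2).filter (fun p => ∃ u ∈ p, ∃ w ∈ p, G.Adj u w)) ?_]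
    · rw [Finset.sum_congr rfl (g := fun _ => 2) ?_, Finset.sum_const, smul_eq_mul, mul_comm]
      intro p hp
      obtain ⟨hp1, u, hu, w, hw, huw⟩ := mem_filter.mp hp
      obtain ⟨hpsub, hp2⟩ := Finset.mem_powersetCard.mp hp1
      obtain ⟨x, y, hxy, hpxy⟩ := Finset.card_eq_two.mp hp2
      -- adjacency of x and y
      have hadjxy : G.Adj x y := by
        rw [hpxy] at hu hw
        have hu1 : u = x ∨ u = y := by simpa using hu
        have hw1 : w = x ∨ w = y := by simpa using hw
        obtain hu1 | hu1 := hu1 <;> obtain hw1 | hw1 := hw1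
        · exact absurd (hu1.trans hw1.symm) huw.ne
        · rw [hu1, hw1] at huw; exact huw
        · rw [hu1, hw1] at huw; exact huw.symm
        · exact absurd (hu1.trans hw1.symm) huw.ne
      have hxs : x ∈ s := hpsub (by rw [hpxy]; exact mem_insert_self x {y})
      have hys : y ∈ s := hpsub (by rw [hpxy]; simp)
      have hfib : (s.offDiag.filter (fun z => G.Adj z.1 z.2)).filter
          (fun z => ({z.1, z.2} : Finset V) = p) = {(x, y), (y, x)} := by
        ext z
        simp only [mem_filter, mem_insert, mem_singleton]
        constructor
        · rintro ⟨⟨hoff, hadj⟩, hzp⟩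
          obtain ⟨hz1s, hz2s, hzne⟩ := Finset.mem_offDiag.mp hoff
          have hz1 : z.1 ∈ ({x, y} : Finset V) := by
            rw [← hpxy, ← hzp]; exact mem_insert_self _ _
          have hz2 : z.2 ∈ ({x, y} : Finset V) := by
            rw [← hpxy, ← hzp]; simp
          rcases mem_insert.mp hz1 with h1 | h1'
          · left
            have h2 : z.2 = y := by
              rcases mem_insert.mp hz2 with h2 | h2'
              · exact absurd (h1.trans h2.symm) hzne
              · exact mem_singleton.mp h2'
            exact Prod.ext h1 h2
          · right
            have h1 : z.1 = y := mem_singleton.mp h1'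
            have h2 : z.2 = x := by
              rcases mem_insert.mp hz2 with h2 | h2'
              · exact h2
              · exact absurd ((mem_singleton.mp h2').trans h1.symm) hzne.symm
            exact Prod.ext h1 h2
        · rintro (rfl | rfl)
          · exact ⟨⟨Finset.mem_offDiag.mpr ⟨hxs, hys, hxy⟩, hadjxy⟩, hpxy.symm⟩
          · exact ⟨⟨Finset.mem_offDiag.mpr ⟨hys, hxs, hxy.symm⟩, hadjxy.symm⟩,
              by rw [Finset.pair_comm]; exact hpxy.symm⟩
      rw [hfib]
      rw [card_insert_of_notMem (by
        simp only [mem_singleton, Prod.mk.injEq]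
        rintro ⟨hc1, _⟩
        exact hxy hc1), card_singleton]
    · intro z hz
      obtain ⟨hoff, hadj⟩ := mem_filter.mp hz
      obtain ⟨hz1, hz2, hzne⟩ := Finset.mem_offDiag.mp hoff
      refine mem_filter.mpr ⟨Finset.mem_powersetCard.mpr ⟨?_, ?_⟩, ?_⟩
      · intro u hu
        rcases mem_insert.mp hu with rfl | hu'
        · exact hz1
        · rw [mem_singleton.mp hu']; exact hz2
      · rw [card_insert_of_notMem (fun hc => hzne (mem_singleton.mp hc)), card_singleton]
      · exact ⟨z.1, mem_insert_self _ _, z.2, by simp, hadj⟩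
  omega

private lemma edge2_card {V : Type*} [Fintype V] (G : SimpleGraph V) :
    (((Finset.univ : Finset V).powersetCard 2).filter
      (fun p => ∃ u ∈ p, ∃ w ∈ p, G.Adj u w)).card = G.edgeFinset.card := by
  have h2 := count2 G (Finset.univ : Finset V)
  have h3 : ∀ x : V, ((Finset.univ : Finset V).erase x).filter (G.Adj x)
      = G.neighborFinset x := by
    intro x
    ext y
    constructor
    · intro hy
      exact (SimpleGraph.mem_neighborFinset _ _ _).mpr (mem_filter.mp hy).2
    · intro hy
      have hadj : G.Adj x y := (SimpleGraph.mem_neighborFinset _ _ _).mp hy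
      exact mem_filter.mpr ⟨mem_erase.mpr ⟨(G.ne_of_adj hadj).symm, mem_univ y⟩, hadj⟩
  have h5 : ∑ x : V, (((Finset.univ : Finset V).erase x).filter (G.Adj x)).card
      = ∑ x : V, (G.neighborFinset x).card :=
    Finset.sum_congr rfl (fun x _ => by rw [h3 x])
  have h4 : ∑ x : V, (G.neighborFinset x).card = 2 * G.edgeFinset.card := by
    rw [← SimpleGraph.sum_degrees_eq_twice_card_edges]
    apply Finset.sum_congr rfl
    intro x _
    exact SimpleGraph.card_neighborFinset_eq_degree G x
  omega

set_option maxHeartbeats 2000000 in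
private theorem stmt11' {V : Type*} [Fintype V] (H : SimpleGraph V) (A' : Finset V) (x y : ℕ)
    (hn : Fintype.card V = 9*x+18+y) (hA : A'.card = x)
    (htri : ∀ t : Finset V, H.IsNClique 3 t → ∀ z ∈ A', z ∉ t) :
    H.edgeFinset.card ≤ x * (8*x+18+y) + (7*x+y+18).choose 2 := by
  -- no triangle through A'
  have hnoedge : ∀ z ∈ A', ∀ u w : V, H.Adj z u → H.Adj z w → H.Adj u w → False := by
    intro z hz u w h1 h2 h3
    exact htri {z, u, w} (SimpleGraph.is3Clique_triple_iff.mpr ⟨h1, h2, h3⟩) z hz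
      (mem_insert_self _ _)
  -- the complement part B
  have hBcard : ((Finset.univ : Finset V) \ A').card = 8*x+18+y := by
    rw [card_sdiff_of_subset (subset_univ A'), card_univ, hn, hA]; omega
  -- disjointness of B-neighborhoods of adjacent A'-vertices
  have hdisjN : ∀ p ∈ A', ∀ q ∈ A', H.Adj p q →
      Disjoint (((Finset.univ : Finset V) \ A').filter (H.Adj p))
        (((Finset.univ : Finset V) \ A').filter (H.Adj q)) := by
    intro p hp q hq hpq
    rw [disjoint_left]
    intro w hw1 hw2
    exact hnoedge p hp q w hpq (mem_filter.mp hw1).2 (mem_filter.mp hw2).2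
  -- main pair lemma
  have PL := pairLemma H.Adj (fun _ _ hh => hh.symm)
    (A'.card + ∑ i ∈ A', (((Finset.univ : Finset V) \ A').filter (H.Adj i)).card) A'
    (fun i => ((Finset.univ : Finset V) \ A').filter (H.Adj i)) le_rfl hdisjN
  beta_reduce at PL
  -- counting adjacent pairs inside A'
  have hE2A := count2 H A'
  -- split of the pairs of A'
  have hM1 : ((A'.powersetCard 2).filter (fun p => ∃ u ∈ p, ∃ w ∈ p, H.Adj u w)).card
      + ((A'.powersetCard 2).filter (fun p => ¬ ∃ u ∈ p, ∃ w ∈ p, H.Adj u w)).card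
      = x.choose 2 := by
    rw [Finset.card_filter_add_card_filter_not, Finset.card_powersetCard, hA]
  -- split of the pairs between A' and B
  have hW2a : (((A' ×ˢ ((Finset.univ : Finset V) \ A')).filter
        (fun z => H.Adj z.1 z.2))).card
      = ∑ i ∈ A', (((Finset.univ : Finset V) \ A').filter (H.Adj i)).card :=
    prodFilterCard A' _ _
  have hW2b : ((A' ×ˢ ((Finset.univ : Finset V) \ A')).filter
        (fun z => H.Adj z.1 z.2)).card
      + ((A' ×ˢ ((Finset.univ : Finset V) \ A')).filter
        (fun z => ¬ H.Adj z.1 z.2)).card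
      = x * (8*x+18+y) := by
    rw [Finset.card_filter_add_card_filter_not, card_product, hA, hBcard]
  -- M2 as an image
  have hM2card : (((A' ×ˢ ((Finset.univ : Finset V) \ A')).filter
        (fun z => ¬ H.Adj z.1 z.2)).image (fun z => ({z.1, z.2} : Finset V))).card
      = ((A' ×ˢ ((Finset.univ : Finset V) \ A')).filter (fun z => ¬ H.Adj z.1 z.2)).card := by
    apply Finset.card_image_of_injOn
    intro z hz z' hz' heq
    obtain ⟨hz1, hz2⟩ := Finset.mem_product.mp (mem_of_mem_filter _ (Finset.mem_coe.mp hz))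
    obtain ⟨hz1', hz2'⟩ := Finset.mem_product.mp (mem_of_mem_filter _ (Finset.mem_coe.mp hz'))
    have hB2 : z.2 ∉ A' := (Finset.mem_sdiff.mp hz2).2
    have hB2' : z'.2 ∉ A' := (Finset.mem_sdiff.mp hz2').2
    have heq' : ({z.1, z.2} : Finset V) = {z'.1, z'.2} := heq
    have e1 : z.1 = z'.1 := by
      have hm : z.1 ∈ ({z'.1, z'.2} : Finset V) := by rw [← heq']; exact mem_insert_self _ _
      rcases mem_insert.mp hm with hh | hh
      · exact hh
      · exact absurd ((mem_singleton.mp hh) ▸ hz1) hB2'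
    have e2 : z.2 = z'.2 := by
      have hm : z.2 ∈ ({z'.1, z'.2} : Finset V) := by rw [← heq']; simp
      rcases mem_insert.mp hm with hh | hh
      · exact absurd (by rw [hh]; exact hz1' : z.2 ∈ A') hB2
      · exact mem_singleton.mp hh
    exact Prod.ext e1 e2
  -- the three families of non-edges are inside the non-edge 2-subsets of univ
  have hsub1 : (A'.powersetCard 2).filter (fun p => ¬ ∃ u ∈ p, ∃ w ∈ p, H.Adj u w)
      ⊆ ((Finset.univ : Finset V).powersetCard 2).filter
        (fun p => ¬ ∃ u ∈ p, ∃ w ∈ p, H.Adj u w) := by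
    intro p hp
    obtain ⟨hp1, hp2⟩ := mem_filter.mp hp
    obtain ⟨hsub, hc⟩ := Finset.mem_powersetCard.mp hp1
    exact mem_filter.mpr ⟨Finset.mem_powersetCard.mpr ⟨subset_univ p, hc⟩, hp2⟩
  have hsub2 : ((A' ×ˢ ((Finset.univ : Finset V) \ A')).filter
        (fun z => ¬ H.Adj z.1 z.2)).image (fun z => ({z.1, z.2} : Finset V))
      ⊆ ((Finset.univ : Finset V).powersetCard 2).filter
        (fun p => ¬ ∃ u ∈ p, ∃ w ∈ p, H.Adj u w) := by
    intro p hp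
    obtain ⟨z, hz, rfl⟩ := mem_image.mp hp
    obtain ⟨hzm, hzna⟩ := mem_filter.mp hz
    obtain ⟨hz1, hz2⟩ := Finset.mem_product.mp hzm
    have hne : z.1 ≠ z.2 := fun hc => (Finset.mem_sdiff.mp hz2).2 (hc ▸ hz1)
    refine mem_filter.mpr ⟨Finset.mem_powersetCard.mpr ⟨subset_univ _, ?_⟩, ?_⟩
    · rw [card_insert_of_notMem (fun hc => hne (mem_singleton.mp hc)), card_singleton]
    · rintro ⟨u, hu, w, hw, huw⟩
      have hu' : u = z.1 ∨ u = z.2 := by simpa using hu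
      have hw' : w = z.1 ∨ w = z.2 := by simpa using hw
      obtain hu' | hu' := hu' <;> obtain hw' | hw' := hw' <;> rw [hu', hw'] at huw
      · exact H.loopless.irrefl _ huw
      · exact hzna huw
      · exact hzna huw.symm
      · exact H.loopless.irrefl _ huw
  have hsub3 : (A'.biUnion (fun i => (((Finset.univ : Finset V) \ A').filter
        (H.Adj i)).powersetCard 2))
      ⊆ ((Finset.univ : Finset V).powersetCard 2).filter
        (fun p => ¬ ∃ u ∈ p, ∃ w ∈ p, H.Adj u w) := by
    intro p hp
    obtain ⟨i, hiA, hpi⟩ := mem_biUnion.mp hp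
    obtain ⟨hsub, hc⟩ := Finset.mem_powersetCard.mp hpi
    refine mem_filter.mpr ⟨Finset.mem_powersetCard.mpr ⟨subset_univ _, hc⟩, ?_⟩
    rintro ⟨u, hu, w, hw, huw⟩
    exact hnoedge i hiA u w (mem_filter.mp (hsub hu)).2 (mem_filter.mp (hsub hw)).2 huw
  -- pairwise disjointness
  have hd12 : Disjoint
      ((A'.powersetCard 2).filter (fun p => ¬ ∃ u ∈ p, ∃ w ∈ p, H.Adj u w))
      (((A' ×ˢ ((Finset.univ : Finset V) \ A')).filter
        (fun z => ¬ H.Adj z.1 z.2)).image (fun z => ({z.1, z.2} : Finset V))) := by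
    rw [disjoint_left]
    intro p hp1 hp2
    obtain ⟨z, hz, rfl⟩ := mem_image.mp hp2
    obtain ⟨hzm, _⟩ := mem_filter.mp hz
    obtain ⟨hz1, hz2⟩ := Finset.mem_product.mp hzm
    have hsubA : ({z.1, z.2} : Finset V) ⊆ A' :=
      (Finset.mem_powersetCard.mp (mem_filter.mp hp1).1).1
    exact (Finset.mem_sdiff.mp hz2).2 (hsubA (by simp))
  have hd13 : Disjoint
      ((A'.powersetCard 2).filter (fun p => ¬ ∃ u ∈ p, ∃ w ∈ p, H.Adj u w))
      (A'.biUnion (fun i => (((Finset.univ : Finset V) \ A').filter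
        (H.Adj i)).powersetCard 2)) := by
    rw [disjoint_left]
    intro p hp1 hp3
    obtain ⟨i, hiA, hpi⟩ := mem_biUnion.mp hp3
    obtain ⟨hsubB, hc⟩ := Finset.mem_powersetCard.mp hpi
    obtain ⟨hsubA, hc2⟩ := Finset.mem_powersetCard.mp (mem_filter.mp hp1).1
    obtain ⟨u, hu⟩ := Finset.card_pos.mp (by rw [hc2]; norm_num : 0 < p.card)
    exact (Finset.mem_sdiff.mp (mem_filter.mp (hsubB hu)).1).2 (hsubA hu)
  have hd23 : Disjoint
      (((A' ×ˢ ((Finset.univ : Finset V) \ A')).filter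
        (fun z => ¬ H.Adj z.1 z.2)).image (fun z => ({z.1, z.2} : Finset V)))
      (A'.biUnion (fun i => (((Finset.univ : Finset V) \ A').filter
        (H.Adj i)).powersetCard 2)) := by
    rw [disjoint_left]
    intro p hp2 hp3
    obtain ⟨z, hz, rfl⟩ := mem_image.mp hp2
    obtain ⟨hzm, _⟩ := mem_filter.mp hz
    obtain ⟨hz1, hz2⟩ := Finset.mem_product.mp hzm
    obtain ⟨i, hiA, hpi⟩ := mem_biUnion.mp hp3
    obtain ⟨hsubB, _⟩ := Finset.mem_powersetCard.mp hpi
    exact (Finset.mem_sdiff.mp (mem_filter.mp (hsubB (mem_insert_self _ _))).1).2 hz1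
  -- cardinalities add up
  have hcard3 : (((A'.powersetCard 2).filter (fun p => ¬ ∃ u ∈ p, ∃ w ∈ p, H.Adj u w))
        ∪ (((A' ×ˢ ((Finset.univ : Finset V) \ A')).filter
          (fun z => ¬ H.Adj z.1 z.2)).image (fun z => ({z.1, z.2} : Finset V)))
        ∪ (A'.biUnion (fun i => (((Finset.univ : Finset V) \ A').filter
          (H.Adj i)).powersetCard 2))).card
      = ((A'.powersetCard 2).filter (fun p => ¬ ∃ u ∈ p, ∃ w ∈ p, H.Adj u w)).card
        + (((A' ×ˢ ((Finset.univ : Finset V) \ A')).filter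
          (fun z => ¬ H.Adj z.1 z.2)).image (fun z => ({z.1, z.2} : Finset V))).card
        + (A'.biUnion (fun i => (((Finset.univ : Finset V) \ A').filter
          (H.Adj i)).powersetCard 2)).card := by
    rw [card_union_of_disjoint (disjoint_union_left.mpr ⟨hd13, hd23⟩),
      card_union_of_disjoint hd12]
  have hle : (((A'.powersetCard 2).filter (fun p => ¬ ∃ u ∈ p, ∃ w ∈ p, H.Adj u w))
        ∪ (((A' ×ˢ ((Finset.univ : Finset V) \ A')).filter
          (fun z => ¬ H.Adj z.1 z.2)).image (fun z => ({z.1, z.2} : Finset V)))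
        ∪ (A'.biUnion (fun i => (((Finset.univ : Finset V) \ A').filter
          (H.Adj i)).powersetCard 2))).card
      ≤ (((Finset.univ : Finset V).powersetCard 2).filter
          (fun p => ¬ ∃ u ∈ p, ∃ w ∈ p, H.Adj u w)).card :=
    card_le_card (union_subset (union_subset hsub1 hsub2) hsub3)
  have huniv : (((Finset.univ : Finset V).powersetCard 2).filter
        (fun p => ∃ u ∈ p, ∃ w ∈ p, H.Adj u w)).card
      + (((Finset.univ : Finset V).powersetCard 2).filter
        (fun p => ¬ ∃ u ∈ p, ∃ w ∈ p, H.Adj u w)).card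
      = (9*x+18+y).choose 2 := by
    rw [Finset.card_filter_add_card_filter_not, Finset.card_powersetCard,
      card_univ, hn]
  have hbridge := edge2_card H
  rw [hA] at PL
  have f1 := kk1 x
  have f2 := arithMain x y
  have f3 : x * (8*x+18+y) = x * (8*x+17+y) + x := by ring
  omega


/-- If no triangle of `H` meets `A'`, where `|A'| = a − 2` and `9a ≤ h`, then
`e(H)` is at most the maximum over `s` of `C(h−a+2−s,2) + s(h−s)`, and this maximum
(over `0 ≤ s ≤ a`) is attained at `s = a−1` and `s = a−2`, where it equals
`(a−2)(h−a+2) + C(h−2a+4,2)`. -/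
theorem stmt11 {V : Type*} [Fintype V] (H : SimpleGraph V) (A' : Finset V) (h a : ℕ)
    (hn : Fintype.card V = h) (ha2 : 2 ≤ a) (hA : A'.card = a - 2) (hah : 9 * a ≤ h)
    (htri : ∀ t : Finset V, H.IsNClique 3 t → ∀ x ∈ A', x ∉ t) :
    H.edgeFinset.card ≤ (a - 2) * (h - a + 2) + (h - 2 * a + 4).choose 2 ∧
    (∀ s : ℕ, s ≤ a → (h - a + 2 - s).choose 2 + s * (h - s) ≤
        (a - 2) * (h - a + 2) + (h - 2 * a + 4).choose 2) ∧
    (h - a + 2 - (a - 1)).choose 2 + (a - 1) * (h - (a - 1)) =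
        (a - 2) * (h - a + 2) + (h - 2 * a + 4).choose 2 ∧
    (h - a + 2 - (a - 2)).choose 2 + (a - 2) * (h - (a - 2)) =
        (a - 2) * (h - a + 2) + (h - 2 * a + 4).choose 2 := by
  obtain ⟨x, rfl⟩ : ∃ x, a = x + 2 := ⟨a - 2, by omega⟩
  obtain ⟨y, rfl⟩ : ∃ y, h = 9 * x + 18 + y := ⟨h - (9 * x + 18), by omega⟩
  have hAx : A'.card = x := by omega
  refine ⟨?_, ?_, ?_, ?_⟩
  · rw [show x + 2 - 2 = x from by omega,
      show 9 * x + 18 + y - (x + 2) + 2 = 8 * x + 18 + y from by omega,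
      show 9 * x + 18 + y - 2 * (x + 2) + 4 = 7 * x + y + 18 from by omega]
    exact stmt11' H A' x y hn hAx htri
  · intro s hs
    rw [show 9 * x + 18 + y - (x + 2) + 2 - s = 8 * x + 18 + y - s from by omega,
      show x + 2 - 2 = x from by omega,
      show 9 * x + 18 + y - (x + 2) + 2 = 8 * x + 18 + y from by omega,
      show 9 * x + 18 + y - 2 * (x + 2) + 4 = 7 * x + y + 18 from by omega]
    exact arith2 x y s hs
  · rw [show x + 2 - 1 = x + 1 from by omega,
      show 9 * x + 18 + y - (x + 2) + 2 - (x + 1) = 7 * x + y + 17 from by omega,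
      show 9 * x + 18 + y - (x + 1) = 8 * x + 17 + y from by omega,
      show x + 2 - 2 = x from by omega,
      show 9 * x + 18 + y - (x + 2) + 2 = 8 * x + 18 + y from by omega,
      show 9 * x + 18 + y - 2 * (x + 2) + 4 = 7 * x + y + 18 from by omega]
    exact arith3 x y
  · rw [show x + 2 - 2 = x from by omega,
      show 9 * x + 18 + y - (x + 2) + 2 - x = 7 * x + y + 18 from by omega,
      show 9 * x + 18 + y - x = 8 * x + 18 + y from by omega,
      show 9 * x + 18 + y - (x + 2) + 2 = 8 * x + 18 + y from by omega,
      show 9 * x + 18 + y - 2 * (x + 2) + 4 = 7 * x + y + 18 from by omega]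
    exact Nat.add_comm _ _
end

section
/- Let f'(τ₁,τ₂,τ₃,τ₄,μ,ι) = 4μτ₁+2ιτ₁+7C(τ₁,2)+3τ₁+2ιτ₂+8C(τ₂,2)+3τ₂+8C(τ₃,2)+8τ₃τ₄+3τ₃+7τ₁τ₂+(2+3μ)τ₂+7τ₁(τ₃+τ₄)+(3+3μ)τ₃+8τ₂(τ₃+τ₄)+(2+ι)τ₃, and let f equal f' adjusted as in the paper when μ=0 or ι=0. Then for all nonnegative integers and all x with 0 ≤ x ≤ τ₂: f(τ₁+x, τ₂−x, τ₃, τ₄, μ, ι) − f(τ₁,τ₂,τ₃,τ₄,μ,ι) = x²/2 + (μ − τ₂ − τ₃ − τ₄ + 1/2)x − [2x if μ > 0, else 0]. -/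
/-- The function `f'` of the paper (values in `ℚ`). -/
def fAux (τ₁ τ₂ τ₃ τ₄ μ ι : ℕ) : ℚ :=
  4 * μ * τ₁ + 2 * ι * τ₁ + 7 * (τ₁.choose 2 : ℚ) + 3 * τ₁ + 2 * ι * τ₂
    + 8 * (τ₂.choose 2 : ℚ) + 3 * τ₂ + 8 * (τ₃.choose 2 : ℚ) + 8 * τ₃ * τ₄ + 3 * τ₃
    + 7 * τ₁ * τ₂ + (2 + 3 * μ) * τ₂ + 7 * τ₁ * (τ₃ + τ₄)
    + (3 + 3 * μ) * τ₃ + 8 * τ₂ * (τ₃ + τ₄) + (2 + ι) * τ₃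

/-- The function `f` of the paper: `f'` with corrections in the cases `μ = 0` or `ι = 0`. -/
def fFun (τ₁ τ₂ τ₃ τ₄ μ ι : ℕ) : ℚ :=
  fAux τ₁ τ₂ τ₃ τ₄ μ ι -
    (if μ = 0 then (if ι = 0 then 2 * τ₂ + 5 * τ₃ else 2 * τ₂ + 3 * τ₃)
     else (if ι = 0 then 2 * τ₃ else 0))

/-- Equation (eq:ft1t2) of the paper. -/
theorem stmt13 (τ₁ τ₂ τ₃ τ₄ μ ι x : ℕ) (hx : x ≤ τ₂) :
    fFun (τ₁ + x) (τ₂ - x) τ₃ τ₄ μ ι - fFun τ₁ τ₂ τ₃ τ₄ μ ι =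
      (x : ℚ) ^ 2 / 2 + ((μ : ℚ) - τ₂ - τ₃ - τ₄ + 1 / 2) * x -
        (if 0 < μ then 2 * (x : ℚ) else 0) := by
  unfold fFun fAux
  rw [Nat.cast_sub hx]
  push_cast [Nat.cast_choose_two, hx]
  rcases eq_or_ne μ 0 with h | h <;> rcases eq_or_ne ι 0 with h' | h' <;>
    simp [h, h', Nat.pos_iff_ne_zero] <;> ring
end

section
/- With f as defined in the paper, for all nonnegative integers τ₁,τ₂,τ₃,τ₄,μ,ι: f(τ₁,τ₂,τ₃,τ₄,μ,ι) ≤ max( f(τ₁+τ₂, 0, τ₃, τ₄, μ, ι), f(0, τ₁+τ₂, τ₃, τ₄, μ, ι) ), with equality only if τ₁ = 0 or τ₂ = 0. -/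
set_option maxHeartbeats 1600000 in
lemma stmt14_strict (τ₁ τ₂ τ₃ τ₄ μ ι : ℕ) (h1 : 1 ≤ τ₁) (h2 : 1 ≤ τ₂) :
    fFun τ₁ τ₂ τ₃ τ₄ μ ι <
      max (fFun (τ₁ + τ₂) 0 τ₃ τ₄ μ ι) (fFun 0 (τ₁ + τ₂) τ₃ τ₄ μ ι) := by
  have hx : (1:ℚ) ≤ (τ₁:ℚ) := by exact_mod_cast h1
  have hy : (1:ℚ) ≤ (τ₂:ℚ) := by exact_mod_cast h2
  have hz : (0:ℚ) ≤ (τ₃:ℚ) := by positivity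
  have hw : (0:ℚ) ≤ (τ₄:ℚ) := by positivity
  have hm : (0:ℚ) ≤ (μ:ℚ) := by positivity
  have hi : (0:ℚ) ≤ (ι:ℚ) := by positivity
  have hx0 : (0:ℚ) < (τ₁:ℚ) := lt_of_lt_of_le one_pos hx
  have hy0 : (0:ℚ) < (τ₂:ℚ) := lt_of_lt_of_le one_pos hy
  rcases le_total (fFun (τ₁ + τ₂) 0 τ₃ τ₄ μ ι) (fFun 0 (τ₁ + τ₂) τ₃ τ₄ μ ι) with hAB | hAB <;>
    [rw [max_eq_right hAB]; rw [max_eq_left hAB]] <;>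
    simp only [fFun, fAux, Nat.cast_choose_two] at hAB ⊢ <;>
    split_ifs at hAB ⊢ <;>
    push_cast at hAB ⊢ <;>
    nlinarith [mul_pos hx0 hy0, mul_le_mul_of_nonneg_left hAB hx0.le,
      mul_le_mul_of_nonneg_left hAB hy0.le, mul_pos (mul_pos hx0 hy0) (add_pos hx0 hy0)]

/-- Lemma 22(i) -/
theorem stmt14 (τ₁ τ₂ τ₃ τ₄ μ ι : ℕ) :
    fFun τ₁ τ₂ τ₃ τ₄ μ ι ≤
      max (fFun (τ₁ + τ₂) 0 τ₃ τ₄ μ ι) (fFun 0 (τ₁ + τ₂) τ₃ τ₄ μ ι) ∧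
    (fFun τ₁ τ₂ τ₃ τ₄ μ ι =
        max (fFun (τ₁ + τ₂) 0 τ₃ τ₄ μ ι) (fFun 0 (τ₁ + τ₂) τ₃ τ₄ μ ι) →
      τ₁ = 0 ∨ τ₂ = 0) := by
  rcases Nat.eq_zero_or_pos τ₁ with h1 | h1
  · subst h1
    exact ⟨by simp, fun _ => Or.inl rfl⟩
  rcases Nat.eq_zero_or_pos τ₂ with h2 | h2
  · subst h2
    exact ⟨by simp, fun _ => Or.inr rfl⟩
  have := stmt14_strict τ₁ τ₂ τ₃ τ₄ μ ι h1 h2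
  exact ⟨this.le, fun h => absurd h this.ne⟩
end

section
/- With f as defined in the paper and ι ≥ 4, one has f(τ₁,τ₂,τ₃,τ₄,μ,ι) ≤ f(τ₁, τ₂+τ₃, 0, τ₄, μ, ι), with equality only if τ₃ = 0. More precisely, f(τ₁,τ₂+τ₃,0,τ₄,μ,ι) − f(τ₁,τ₂,τ₃,τ₄,μ,ι) ≥ (ι−3)τ₃. -/
/-- Lemma 22(ii): for `ι ≥ 4`, `f(τ₁,τ₂+τ₃,0,τ₄,μ,ι) − f(τ₁,τ₂,τ₃,τ₄,μ,ι) ≥ (ι−3)τ₃`;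
in particular `f(τ₁,τ₂,τ₃,τ₄,μ,ι) ≤ f(τ₁,τ₂+τ₃,0,τ₄,μ,ι)` with equality only if `τ₃ = 0`. -/
theorem stmt15 (τ₁ τ₂ τ₃ τ₄ μ ι : ℕ) (hι : 4 ≤ ι) :
    ((ι : ℚ) - 3) * τ₃ ≤ fFun τ₁ (τ₂ + τ₃) 0 τ₄ μ ι - fFun τ₁ τ₂ τ₃ τ₄ μ ι ∧
    fFun τ₁ τ₂ τ₃ τ₄ μ ι ≤ fFun τ₁ (τ₂ + τ₃) 0 τ₄ μ ι ∧
    (fFun τ₁ τ₂ τ₃ τ₄ μ ι = fFun τ₁ (τ₂ + τ₃) 0 τ₄ μ ι → τ₃ = 0) := by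
  have hι0 : ι ≠ 0 := by omega
  have hιQ : (4 : ℚ) ≤ (ι : ℚ) := by exact_mod_cast hι
  have hτ₃ : (0 : ℚ) ≤ (τ₃ : ℚ) := by positivity
  have h1 : ((ι : ℚ) - 3) * τ₃ ≤ fFun τ₁ (τ₂ + τ₃) 0 τ₄ μ ι - fFun τ₁ τ₂ τ₃ τ₄ μ ι := by
    simp only [fFun, fAux, hι0, if_false, Nat.cast_choose_two, Nat.cast_add, Nat.cast_zero]
    rcases Nat.eq_zero_or_pos μ with hμ | hμ
    · simp [hμ]; nlinarith [hτ₃]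
    · rw [if_neg (by omega)]; nlinarith [hτ₃]
  refine ⟨h1, by nlinarith [h1], fun h => ?_⟩
  have : (τ₃ : ℚ) = 0 := by nlinarith [h1]
  exact_mod_cast this
end

section
/- For nonnegative integers k, μ, ι with 2μ + ι = n − 3k and n ≥ 3k + 2: f(k,0,0,0,μ,ι) + ιμ + μ² = 7C(k,2) + 3k + 2(n−3k)k + μ(n−3k−μ) ≤ C(k,2) + k(n−k) + ⌊(n−k)/2⌋·⌈(n−k)/2⌉, i.e., it is at most e(E_1(n,k)). -/
/-- Equation (eq:MAXIMA11): `f(k,0,0,0,μ,ι) + ιμ + μ²` equals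
`7C(k,2) + 3k + 2(n−3k)k + μ(n−3k−μ)` and is at most `e(E₁(n,k))`. -/
theorem stmt16 (n k μ ι : ℕ) (hconstr : 2 * μ + ι + 3 * k = n) (hn : 3 * k + 2 ≤ n) :
    fFun k 0 0 0 μ ι + (ι : ℚ) * μ + (μ : ℚ) ^ 2 =
      7 * (k.choose 2 : ℚ) + 3 * k + 2 * ((n : ℚ) - 3 * k) * k +
        (μ : ℚ) * ((n : ℚ) - 3 * k - μ) ∧
    fFun k 0 0 0 μ ι + (ι : ℚ) * μ + (μ : ℚ) ^ 2 ≤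
      (k.choose 2 : ℚ) + k * ((n : ℚ) - k) +
        (((n - k) / 2 : ℕ) : ℚ) * (((n - k + 1) / 2 : ℕ) : ℚ) := by
  subst hconstr
  have hF : fFun k 0 0 0 μ ι = 4 * μ * k + 2 * ι * k + 7 * (k.choose 2 : ℚ) + 3 * k := by
    simp [fFun, fAux]
  have hch : (k.choose 2 : ℚ) = (k : ℚ) * (k - 1) / 2 := Nat.cast_choose_two (K := ℚ) k
  constructor
  · rw [hF]; push_cast; ring
  · rw [hF]
    rcases Nat.even_or_odd ι with ⟨j, hj⟩ | ⟨j, hj⟩ <;> subst hj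
    · rw [show (2 * μ + (j + j) + 3 * k - k) / 2 = μ + j + k from by omega,
        show (2 * μ + (j + j) + 3 * k - k + 1) / 2 = μ + j + k from by omega]
      push_cast [hch]
      nlinarith [sq_nonneg ((j : ℚ)), sq_nonneg ((k : ℚ))]
    · rw [show (2 * μ + (2 * j + 1) + 3 * k - k) / 2 = μ + j + k from by omega,
        show (2 * μ + (2 * j + 1) + 3 * k - k + 1) / 2 = μ + j + k + 1 from by omega]
      push_cast [hch]
      nlinarith [sq_nonneg ((j : ℚ)), sq_nonneg ((k : ℚ))]
end

section
/- For n > 5k + 8 and any (t₁,t₂,t₃,t₄,m,i) with nonnegative integer entries satisfying t₁+t₂+t₃+t₄ = k and 2m+i = n−3k: h(t₁+t₃+t₄, t₂, 0, 0, m, i) − h(t₁, t₂, 0, t₃+t₄, m, i) = (t₃+t₄)(m + i − t₂ − t₃ − t₄ − 4) ≥ (t₃+t₄)(n−5k−8)/2 ≥ 0, where h(τ₁,τ₂,τ₃,τ₄,μ,ι) = f(τ₁,τ₂,τ₃,τ₄,μ,ι) + ιμ + μ² + (3+3μ)τ₄ + (2+ι)τ₄ + C(3τ₄,2). -/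
/-- The function `h` of equation (eq:defh). -/
def hFun (τ₁ τ₂ τ₃ τ₄ μ ι : ℕ) : ℚ :=
  fFun τ₁ τ₂ τ₃ τ₄ μ ι + (ι : ℚ) * μ + (μ : ℚ) ^ 2 + (3 + 3 * (μ : ℚ)) * τ₄
    + (2 + (ι : ℚ)) * τ₄ + ((3 * τ₄).choose 2 : ℚ)

/-- Equation (eq:KostaCafe): for `n > 5k+8`, with `t₁+t₂+t₃+t₄ = k` and `2m+i = n−3k`,
`h(t₁+t₃+t₄,t₂,0,0,m,i) − h(t₁,t₂,0,t₃+t₄,m,i) = (t₃+t₄)(m+i−t₂−t₃−t₄−4)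
  ≥ (t₃+t₄)(n−5k−8)/2 ≥ 0`. -/
theorem stmt18 (n k t₁ t₂ t₃ t₄ m i : ℕ) (hsum : t₁ + t₂ + t₃ + t₄ = k)
    (hconstr : 2 * m + i + 3 * k = n) (hn : 5 * k + 8 < n) :
    hFun (t₁ + t₃ + t₄) t₂ 0 0 m i - hFun t₁ t₂ 0 (t₃ + t₄) m i =
      ((t₃ : ℚ) + t₄) * ((m : ℚ) + i - t₂ - t₃ - t₄ - 4) ∧
    ((t₃ : ℚ) + t₄) * (((n : ℚ) - 5 * k - 8) / 2) ≤
      ((t₃ : ℚ) + t₄) * ((m : ℚ) + i - t₂ - t₃ - t₄ - 4) ∧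
    (0 : ℚ) ≤ ((t₃ : ℚ) + t₄) * (((n : ℚ) - 5 * k - 8) / 2) := by
  have hk : ((t₁:ℚ) + t₂ + t₃ + t₄) = k := by exact_mod_cast congrArg (Nat.cast : ℕ → ℚ) hsum
  have hc : (2*(m:ℚ) + i + 3*k) = n := by exact_mod_cast congrArg (Nat.cast : ℕ → ℚ) hconstr
  have hn' : (5*(k:ℚ) + 8) < n := by exact_mod_cast hn
  refine ⟨?_, ?_, ?_⟩
  · simp only [hFun, fFun, fAux]
    split_ifs <;>
    · push_cast [Nat.cast_choose_two]
      ring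
  · have h1 : (0:ℚ) ≤ (t₃:ℚ) + t₄ := by positivity
    have h2 : ((n:ℚ) - 5*k - 8)/2 ≤ (m:ℚ) + i - t₂ - t₃ - t₄ - 4 := by
      have : (t₂:ℚ) + t₃ + t₄ ≤ k := by nlinarith [Nat.cast_nonneg (α := ℚ) t₁]
      nlinarith [Nat.cast_nonneg (α := ℚ) i]
    exact mul_le_mul_of_nonneg_left h2 h1
  · have h1 : (0:ℚ) ≤ (t₃:ℚ) + t₄ := by positivity
    have h2 : (0:ℚ) ≤ ((n:ℚ) - 5*k - 8)/2 := by linarith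
    positivity
end

section
/- Let G be a graph with no family of k+1 vertex-disjoint triangles, T a family of k vertex-disjoint triangles chosen so that the matching number of G − V(T) is maximized, M such a maximum matching, and I the uncovered vertices. Suppose T₁ is the set of triangles of T seen by at least two M-edges (an edge uv sees a triangle xyz if uvx, uvy, or uvz is a triangle of G). Then each edge of M sends at most 4 edges to any triangle of T₁; consequently e(V(M), V(T₁)) ≤ 4|M|·|T₁|. -/
open scoped Classical


lemma replace_lemma {V : Type*} [Fintype V] [DecidableEq V] (G : SimpleGraph V) (k : ℕ)
    (𝒯 : Finset (Finset V)) (M : Finset (Sym2 V))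
    (hfree : ¬ ∃ 𝒯' : Finset (Finset V), 𝒯'.card = k + 1 ∧ (∀ t ∈ 𝒯', G.IsNClique 3 t) ∧
        (𝒯' : Set (Finset V)).Pairwise (fun s t => Disjoint s t))
    (h𝒯tri : ∀ t ∈ 𝒯, G.IsNClique 3 t)
    (h𝒯disj : (𝒯 : Set (Finset V)).Pairwise (fun s t => Disjoint s t))
    (h𝒯card : 𝒯.card = k)
    (hM : M ⊆ G.edgeFinset)
    (hMdisj : (M : Set (Sym2 V)).Pairwise (fun e f => ∀ v : V, v ∈ e → v ∉ f))
    (hMT : ∀ e ∈ M, ∀ v : V, v ∈ e → ∀ t ∈ 𝒯, v ∉ t)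
    (e f : Sym2 V) (heM : e ∈ M) (hfM : f ∈ M) (hef : e ≠ f)
    (u v a b : V) (heuv : e = s(u, v)) (hfab : f = s(a, b))
    (t : Finset V) (ht : t ∈ 𝒯) (x z : V) (hxt : x ∈ t) (hzt : z ∈ t) (hxz : x ≠ z)
    (hux : G.Adj u x) (hvx : G.Adj v x) (haz : G.Adj a z) (hbz : G.Adj b z) : False := by
  have huv : G.Adj u v := by
    have := hM heM; rw [heuv, SimpleGraph.mem_edgeFinset, SimpleGraph.mem_edgeSet] at this
    exact this
  have hab : G.Adj a b := by
    have := hM hfM; rw [hfab, SimpleGraph.mem_edgeFinset, SimpleGraph.mem_edgeSet] at this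
    exact this
  have hue : u ∈ e := by rw [heuv]; simp
  have hve : v ∈ e := by rw [heuv]; simp
  have haf : a ∈ f := by rw [hfab]; simp
  have hbf : b ∈ f := by rw [hfab]; simp
  have hunt : ∀ s ∈ 𝒯, u ∉ s := fun s hs => hMT e heM u hue s hs
  have hvnt : ∀ s ∈ 𝒯, v ∉ s := fun s hs => hMT e heM v hve s hs
  have hant : ∀ s ∈ 𝒯, a ∉ s := fun s hs => hMT f hfM a haf s hs
  have hbnt : ∀ s ∈ 𝒯, b ∉ s := fun s hs => hMT f hfM b hbf s hs
  have hunf : u ∉ f := hMdisj heM hfM hef u hue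
  have hvnf : v ∉ f := hMdisj heM hfM hef v hve
  have hua : u ≠ a := fun h => hunf (h ▸ haf)
  have hub : u ≠ b := fun h => hunf (h ▸ hbf)
  have hva : v ≠ a := fun h => hvnf (h ▸ haf)
  have hvb : v ≠ b := fun h => hvnf (h ▸ hbf)
  set T1 : Finset V := {u, v, x} with hT1def
  set T2 : Finset V := {a, b, z} with hT2def
  have hT1 : G.IsNClique 3 T1 := SimpleGraph.is3Clique_triple_iff.mpr ⟨huv, hux, hvx⟩
  have hT2 : G.IsNClique 3 T2 := SimpleGraph.is3Clique_triple_iff.mpr ⟨hab, haz, hbz⟩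
  have hmemT1 : ∀ w ∈ T1, w = u ∨ w = v ∨ w = x := by
    intro w hw; simpa [hT1def] using hw
  have hmemT2 : ∀ w ∈ T2, w = a ∨ w = b ∨ w = z := by
    intro w hw; simpa [hT2def] using hw
  have hd12 : Disjoint T1 T2 := by
    rw [Finset.disjoint_left]
    intro w hw1 hw2
    rcases hmemT1 w hw1 with rfl | rfl | rfl <;>
      rcases hmemT2 w hw2 with h | h | h
    · exact hua h
    · exact hub h
    · exact hunt t ht (h ▸ hzt)
    · exact hva h
    · exact hvb h
    · exact hvnt t ht (h ▸ hzt)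
    · exact hant t ht (h ▸ hxt)
    · exact hbnt t ht (h ▸ hxt)
    · exact hxz h
  have hT1n : T1 ∉ 𝒯 := fun h => hunt T1 h (by simp [hT1def])
  have hT2n : T2 ∉ 𝒯 := fun h => hant T2 h (by simp [hT2def])
  have hT1T2 : T1 ≠ T2 := by
    intro h
    have : u ∈ T2 := h ▸ (by simp [hT1def] : u ∈ T1)
    rcases hmemT2 u this with h' | h' | h'
    · exact hua h'
    · exact hub h'
    · exact hunt t ht (h' ▸ hzt)
  have hd1old : ∀ s ∈ 𝒯.erase t, Disjoint T1 s := by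
    intro s hs
    have hs𝒯 : s ∈ 𝒯 := Finset.mem_of_mem_erase hs
    have hst : s ≠ t := Finset.ne_of_mem_erase hs
    have hts : Disjoint t s := h𝒯disj ht hs𝒯 (Ne.symm hst)
    rw [Finset.disjoint_left]
    intro w hw1 hw2
    rcases hmemT1 w hw1 with rfl | rfl | rfl
    · exact hunt s hs𝒯 hw2
    · exact hvnt s hs𝒯 hw2
    · exact (Finset.disjoint_left.mp hts hxt) hw2
  have hd2old : ∀ s ∈ 𝒯.erase t, Disjoint T2 s := by
    intro s hs
    have hs𝒯 : s ∈ 𝒯 := Finset.mem_of_mem_erase hs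
    have hst : s ≠ t := Finset.ne_of_mem_erase hs
    have hts : Disjoint t s := h𝒯disj ht hs𝒯 (Ne.symm hst)
    rw [Finset.disjoint_left]
    intro w hw1 hw2
    rcases hmemT2 w hw1 with rfl | rfl | rfl
    · exact hant s hs𝒯 hw2
    · exact hbnt s hs𝒯 hw2
    · exact (Finset.disjoint_left.mp hts hzt) hw2
  apply hfree
  refine ⟨insert T1 (insert T2 (𝒯.erase t)), ?_, ?_, ?_⟩
  · have h2ne : T2 ∉ 𝒯.erase t := fun h => hT2n (Finset.mem_of_mem_erase h)
    have h1ne : T1 ∉ insert T2 (𝒯.erase t) := by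
      simp only [Finset.mem_insert]
      rintro (h | h)
      · exact hT1T2 h
      · exact hT1n (Finset.mem_of_mem_erase h)
    rw [Finset.card_insert_of_notMem h1ne, Finset.card_insert_of_notMem h2ne,
      Finset.card_erase_of_mem ht, h𝒯card]
    have hk : 1 ≤ k := by
      rw [← h𝒯card]; exact Finset.card_pos.mpr ⟨t, ht⟩
    omega
  · intro s hs
    rcases Finset.mem_insert.mp hs with rfl | hs
    · exact hT1
    rcases Finset.mem_insert.mp hs with rfl | hs
    · exact hT2
    · exact h𝒯tri s (Finset.mem_of_mem_erase hs)
  · intro s1 hs1 s2 hs2 hne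
    simp only [Finset.coe_insert, Set.mem_insert_iff, Finset.mem_coe] at hs1 hs2
    rcases hs1 with rfl | rfl | hs1 <;> rcases hs2 with rfl | rfl | hs2
    · exact absurd rfl hne
    · exact hd12
    · exact hd1old _ hs2
    · exact hd12.symm
    · exact absurd rfl hne
    · exact hd2old _ hs2
    · exact (hd1old _ hs1).symm
    · exact (hd2old _ hs1).symm
    · exact h𝒯disj (Finset.mem_of_mem_erase hs1) (Finset.mem_of_mem_erase hs2) hne

/-- Lemma 5(d): in the paper's setup, if `𝒯₁ ⊆ 𝒯` is the set of triangles seen by at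
least two `M`-edges, then every `M`-edge sends at most `4` edges to each triangle of
`𝒯₁`; consequently `e(V(M), V(𝒯₁)) ≤ 4|M||𝒯₁|`. -/
theorem stmt19 {V : Type*} [Fintype V] [DecidableEq V] (G : SimpleGraph V) (k : ℕ)
    (𝒯 : Finset (Finset V)) (M : Finset (Sym2 V)) (𝒯₁ : Finset (Finset V))
    (hfree : ¬ ∃ 𝒯' : Finset (Finset V), 𝒯'.card = k + 1 ∧ (∀ t ∈ 𝒯', G.IsNClique 3 t) ∧
        (𝒯' : Set (Finset V)).Pairwise (fun s t => Disjoint s t))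
    (h𝒯tri : ∀ t ∈ 𝒯, G.IsNClique 3 t)
    (h𝒯disj : (𝒯 : Set (Finset V)).Pairwise (fun s t => Disjoint s t))
    (h𝒯card : 𝒯.card = k)
    (hM : M ⊆ G.edgeFinset)
    (hMdisj : (M : Set (Sym2 V)).Pairwise (fun e f => ∀ v : V, v ∈ e → v ∉ f))
    (hMT : ∀ e ∈ M, ∀ v : V, v ∈ e → ∀ t ∈ 𝒯, v ∉ t)
    (h𝒯₁sub : 𝒯₁ ⊆ 𝒯)
    (h𝒯₁ : ∀ t ∈ 𝒯₁, ∃ e₁ ∈ M, ∃ e₂ ∈ M, e₁ ≠ e₂ ∧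
      (∃ u v : V, e₁ = s(u, v) ∧ ∃ x ∈ t, G.Adj u x ∧ G.Adj v x) ∧
      (∃ u v : V, e₂ = s(u, v) ∧ ∃ x ∈ t, G.Adj u x ∧ G.Adj v x)) :
    (∀ e ∈ M, ∀ t ∈ 𝒯₁,
      (Finset.univ.filter (fun p : V × V => p.1 ∈ e ∧ p.2 ∈ t ∧ G.Adj p.1 p.2)).card ≤ 4) ∧
    (G.edgeFinset.filter (fun ed =>
        ∃ a, (∃ e ∈ M, a ∈ e) ∧ ∃ b, (∃ t ∈ 𝒯₁, b ∈ t) ∧ ed = s(a, b))).card ≤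
      4 * M.card * 𝒯₁.card := by
  have part1 : ∀ e ∈ M, ∀ t ∈ 𝒯₁,
      (Finset.univ.filter (fun p : V × V => p.1 ∈ e ∧ p.2 ∈ t ∧ G.Adj p.1 p.2)).card ≤ 4 := by
    intro e he t ht
    obtain ⟨u, v, heuv⟩ : ∃ u v, e = s(u, v) := Sym2.exists.mp ⟨e, rfl⟩
    have ht𝒯 : t ∈ 𝒯 := h𝒯₁sub ht
    have htcard : t.card = 3 := (h𝒯tri t ht𝒯).card_eq
    -- at most one vertex of t is adjacent to both endpoints of e
    have hA : (t.filter (fun w => G.Adj u w ∧ G.Adj v w)).card ≤ 1 := by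
      by_contra h
      push_neg at h
      obtain ⟨x, hx, y, hy, hxy⟩ := Finset.one_lt_card.mp h
      rw [Finset.mem_filter] at hx hy
      obtain ⟨e₁, he₁, e₂, he₂, he12, hw1, hw2⟩ := h𝒯₁ t ht
      -- pick an M-edge distinct from e that sees t
      obtain ⟨f, hfM, hfe, a, b, hfab, z, hzt, haz, hbz⟩ :
          ∃ f, f ∈ M ∧ f ≠ e ∧ ∃ a b : V, f = s(a, b) ∧
            ∃ z ∈ t, G.Adj a z ∧ G.Adj b z := by
        by_cases h1 : e₁ = e
        · exact ⟨e₂, he₂, fun h' => he12 (h1.trans h'.symm), hw2⟩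
        · exact ⟨e₁, he₁, h1, hw1⟩
      by_cases hxzeq : x = z
      · have hyz : y ≠ z := fun h => hxy (hxzeq.trans h.symm)
        exact replace_lemma G k 𝒯 M hfree h𝒯tri h𝒯disj h𝒯card hM hMdisj hMT
          e f he hfM (Ne.symm hfe) u v a b heuv hfab t ht𝒯 y z
          hy.1 hzt hyz hy.2.1 hy.2.2 haz hbz
      · exact replace_lemma G k 𝒯 M hfree h𝒯tri h𝒯disj h𝒯card hM hMdisj hMT
          e f he hfM (Ne.symm hfe) u v a b heuv hfab t ht𝒯 x z
          hx.1 hzt hxzeq hx.2.1 hx.2.2 haz hbz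
    -- now the counting
    set P := Finset.univ.filter (fun p : V × V => p.1 ∈ e ∧ p.2 ∈ t ∧ G.Adj p.1 p.2) with hPdef
    have hPsub : ∀ p ∈ P, p.2 ∈ t := by
      intro p hp; rw [hPdef, Finset.mem_filter] at hp; exact hp.2.2.1
    rw [Finset.card_eq_sum_card_fiberwise hPsub]
    have hfiber : ∀ w ∈ t, (P.filter (fun p => p.2 = w)).card ≤
        (if G.Adj u w ∧ G.Adj v w then 2 else 1) := by
      intro w _
      have hmem : ∀ p ∈ P.filter (fun p => p.2 = w),
          (p.1 = u ∨ p.1 = v) ∧ p.2 = w ∧ G.Adj p.1 w := by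
        intro p hp
        rw [Finset.mem_filter, hPdef, Finset.mem_filter] at hp
        obtain ⟨⟨_, h1, _, h3⟩, h4⟩ := hp
        rw [heuv, Sym2.mem_iff] at h1
        exact ⟨h1, h4, h4 ▸ h3⟩
      by_cases hadj : G.Adj u w ∧ G.Adj v w
      · rw [if_pos hadj]
        refine le_trans (Finset.card_le_card (?_ : _ ⊆ ({(u, w), (v, w)} : Finset (V × V))))
          (le_trans (Finset.card_insert_le (u, w) {(v, w)}) (by simp))
        intro p hp
        obtain ⟨h1, h2, _⟩ := hmem p hp
        rcases h1 with h1 | h1 <;> simp [Prod.ext_iff, h1, h2]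
      · rw [if_neg hadj]
        rw [not_and_or] at hadj
        rcases hadj with hadj | hadj
        · refine le_trans (Finset.card_le_card (?_ : _ ⊆ ({(v, w)} : Finset (V × V)))) (by simp)
          intro p hp
          obtain ⟨h1, h2, h3⟩ := hmem p hp
          rcases h1 with h1 | h1
          · exact absurd (h1 ▸ h3) hadj
          · simp [Prod.ext_iff, h1, h2]
        · refine le_trans (Finset.card_le_card (?_ : _ ⊆ ({(u, w)} : Finset (V × V)))) (by simp)
          intro p hp
          obtain ⟨h1, h2, h3⟩ := hmem p hp
          rcases h1 with h1 | h1
          · simp [Prod.ext_iff, h1, h2]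
          · exact absurd (h1 ▸ h3) hadj
    calc ∑ w ∈ t, (P.filter (fun p => p.2 = w)).card
        ≤ ∑ w ∈ t, (if G.Adj u w ∧ G.Adj v w then 2 else 1) := Finset.sum_le_sum hfiber
      _ = ∑ w ∈ t, ((if G.Adj u w ∧ G.Adj v w then 1 else 0) + 1) := by
          apply Finset.sum_congr rfl; intro w _; split <;> rfl
      _ = (t.filter (fun w => G.Adj u w ∧ G.Adj v w)).card + t.card := by
          rw [Finset.sum_add_distrib, Finset.sum_const, smul_eq_mul, mul_one,
            Finset.card_filter]
      _ ≤ 1 + 3 := by rw [htcard]; exact Nat.add_le_add_right hA 3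
      _ = 4 := rfl
  refine ⟨part1, ?_⟩
  have hsub : G.edgeFinset.filter (fun ed =>
        ∃ a, (∃ e ∈ M, a ∈ e) ∧ ∃ b, (∃ t ∈ 𝒯₁, b ∈ t) ∧ ed = s(a, b)) ⊆
      (M ×ˢ 𝒯₁).biUnion (fun q =>
        (Finset.univ.filter (fun p : V × V => p.1 ∈ q.1 ∧ p.2 ∈ q.2 ∧ G.Adj p.1 p.2)).image
          (fun p => s(p.1, p.2))) := by
    intro ed hed
    rw [Finset.mem_filter] at hed
    obtain ⟨hedE, a, ⟨e, heM, hae⟩, b, ⟨t, ht, hbt⟩, rfl⟩ := hed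
    have hadj : G.Adj a b := by
      rw [SimpleGraph.mem_edgeFinset, SimpleGraph.mem_edgeSet] at hedE; exact hedE
    rw [Finset.mem_biUnion]
    refine ⟨(e, t), Finset.mem_product.mpr ⟨heM, ht⟩, Finset.mem_image.mpr
      ⟨(a, b), Finset.mem_filter.mpr ⟨Finset.mem_univ _, hae, hbt, hadj⟩, rfl⟩⟩
  calc (G.edgeFinset.filter _).card
      ≤ ∑ q ∈ M ×ˢ 𝒯₁,
          ((Finset.univ.filter (fun p : V × V => p.1 ∈ q.1 ∧ p.2 ∈ q.2 ∧ G.Adj p.1 p.2)).image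
            (fun p => s(p.1, p.2))).card :=
        le_trans (Finset.card_le_card hsub) (Finset.card_biUnion_le)
    _ ≤ ∑ q ∈ M ×ˢ 𝒯₁, 4 := by
        apply Finset.sum_le_sum
        intro q hq
        rw [Finset.mem_product] at hq
        exact le_trans Finset.card_image_le (part1 q.1 hq.1 q.2 hq.2)
    _ = 4 * M.card * 𝒯₁.card := by
        rw [Finset.sum_const, Finset.card_product, smul_eq_mul]; ring
end
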